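/- arXiv:2507.08963 — 6 statements merged into one kernel-verified Lean document; each statement's English description precedes it below -/
import Mathlib

section
/- One-step contraction of conceptual BCOSW (Lemma 5.1): Suppose the aiming condition holds, and suppose α_t ≥ 0 and α_t·λ < 1 for all t ≥ 0. Then for every t ≥ 0, almost surely, E_t[‖x_{t+1} − x*‖²] ≤ (1 − α_t λ)² ‖x_t − x*‖² + α_t² B*, where B* = n + λ²‖x*‖² + 2λ‖x*‖₁. -/
open MeasureTheory Filter

lemma bcosw_abs_le (a : ℝ) : |a| ≤ (a ^ 2 + 1) / 2 := by
  nlinarith [sq_nonneg (|a| - 1), sq_abs a, abs_nonneg a]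

lemma bcosw_abs_mul_le (a b : ℝ) : |a * b| ≤ (a ^ 2 + b ^ 2) / 2 := by
  rw [abs_mul]
  nlinarith [sq_nonneg (|a| - |b|), sq_abs a, sq_abs b, abs_nonneg a, abs_nonneg b]

lemma bcosw_condExp_const_mul {Ω : Type*} {m mΩ : MeasurableSpace Ω} {μ : Measure Ω}
    (c : ℝ) (f : Ω → ℝ) :
    μ[fun ω => c * f ω|m] =ᵐ[μ] fun ω => c * (μ[f|m]) ω := by
  have h := condExp_smul (μ := μ) c f m
  refine EventuallyEq.trans (condExp_congr_ae ?_) (h.trans ?_)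
  · exact Eventually.of_forall fun ω => by simp
  · exact Eventually.of_forall fun ω => by simp

lemma bcosw_div_condexp {Ω : Type*} {m mΩ : MeasurableSpace Ω} {μ : Measure Ω}
    [IsProbabilityMeasure μ] (hm : m ≤ mΩ)
    {g : Ω → ℝ} (hgm : Measurable g) (hg : Integrable g μ) (hg0 : ∀ ω, 0 ≤ g ω)
    (hpos : ∀ᵐ ω ∂μ, 0 < (μ[g|m]) ω) :
    Integrable (fun ω => g ω / (μ[g|m]) ω) μ ∧
      ∀ᵐ ω ∂μ, (μ[fun ω' => g ω' / (μ[g|m]) ω'|m]) ω ≤ 1 := by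
  set h : Ω → ℝ := μ[g|m] with hh
  have hhm : Measurable[m] h := stronglyMeasurable_condExp.measurable
  have hhM : Measurable h := hhm.mono hm le_rfl
  set q : Ω → ℝ := fun ω => g ω / h ω with hq
  have hqM : Measurable q := hgm.div hhM
  set φ : ℕ → Ω → ℝ := fun N ω => min (max (h ω)⁻¹ 0) N with hφ
  have hφm : ∀ N, Measurable[m] (φ N) := fun N =>
    (hhm.inv.max measurable_const).min measurable_const
  have hφ0 : ∀ N ω, 0 ≤ φ N ω := fun N ω => le_min (le_max_right _ _) (Nat.cast_nonneg N)
  have hφle : ∀ N ω, φ N ω ≤ N := fun N ω => min_le_right _ _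
  have hφinv : ∀ N ω, 0 < h ω → φ N ω ≤ (h ω)⁻¹ := fun N ω hω =>
    le_trans (min_le_left _ _) (by rw [max_eq_left (inv_nonneg.mpr hω.le)])
  set ψ : ℕ → Ω → ℝ := fun N ω => g ω * φ N ω with hψ
  have hψint : ∀ N, Integrable (ψ N) μ := by
    intro N
    have := hg.bdd_mul ((hφm N).mono hm le_rfl).aestronglyMeasurable
      (c := N) (Eventually.of_forall fun ω => by rw [Real.norm_eq_abs, abs_of_nonneg (hφ0 N ω)]; exact hφle N ω)
    exact this.congr (Eventually.of_forall fun ω => mul_comm _ _)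
  have hψ0 : ∀ N ω, 0 ≤ ψ N ω := fun N ω => mul_nonneg (hg0 ω) (hφ0 N ω)
  have hψM : ∀ N, Measurable (ψ N) := fun N => hgm.mul ((hφm N).mono hm le_rfl)
  -- conditional expectation of truncations
  have hce : ∀ N, μ[ψ N|m] =ᵐ[μ] fun ω => φ N ω * h ω := by
    intro N
    have h2 := condExp_mul_of_stronglyMeasurable_left (μ := μ) (hφm N).stronglyMeasurable
      (g := g) ((hψint N).congr (Eventually.of_forall fun ω => mul_comm _ _)) hg
    refine EventuallyEq.trans ?_ h2
    exact condExp_congr_ae (Eventually.of_forall fun ω => mul_comm _ _)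
  have hφh_le : ∀ N, ∀ᵐ ω ∂μ, φ N ω * h ω ≤ 1 := by
    intro N
    filter_upwards [hpos] with ω hω
    calc φ N ω * h ω ≤ (h ω)⁻¹ * h ω := mul_le_mul_of_nonneg_right (hφinv N ω hω) hω.le
      _ = 1 := inv_mul_cancel₀ hω.ne'
  -- set integral bound for truncations
  have hψ_set : ∀ N, ∀ s : Set Ω, MeasurableSet[m] s → ∫ ω in s, ψ N ω ∂μ ≤ (μ s).toReal := by
    intro N s hs
    rw [← setIntegral_condExp hm (hψint N) hs]
    have h1 : ∫ ω in s, (μ[ψ N|m]) ω ∂μ ≤ ∫ ω in s, (1 : ℝ) ∂μ := by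
      apply integral_mono_ae integrable_condExp.integrableOn (integrable_const _).integrableOn
      apply ae_restrict_of_ae
      filter_upwards [hce N, hφh_le N] with ω h1 h2
      rw [h1]; exact h2
    simp at h1; exact h1
  -- pointwise convergence
  have htend : ∀ᵐ ω ∂μ, Tendsto (fun N => ψ N ω) atTop (nhds (q ω)) := by
    filter_upwards [hpos] with ω hω
    have hev : ∀ᶠ N : ℕ in atTop, ψ N ω = q ω := by
      filter_upwards [eventually_ge_atTop ⌈(h ω)⁻¹⌉₊] with N hN
      have h1 : max (h ω)⁻¹ 0 = (h ω)⁻¹ := max_eq_left (inv_nonneg.mpr hω.le)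
      have h2 : (h ω)⁻¹ ≤ (N : ℝ) := le_trans (Nat.le_ceil _) (Nat.cast_le.mpr hN)
      simp [hψ, hφ, h1, min_eq_left h2, hq, div_eq_mul_inv]
    exact Tendsto.congr' (hev.mono fun N hN => hN.symm) tendsto_const_nhds
  -- integrability of q
  have hqint : Integrable q μ := by
    refine ⟨hqM.aestronglyMeasurable, ?_⟩
    rw [hasFiniteIntegral_iff_norm]
    have hlim : ∫⁻ ω, ENNReal.ofReal ‖q ω‖ ∂μ
        ≤ liminf (fun N => ∫⁻ ω, ENNReal.ofReal ‖ψ N ω‖ ∂μ) atTop := by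
      have heq : ∀ᵐ ω ∂μ, ENNReal.ofReal ‖q ω‖
          = liminf (fun N => ENNReal.ofReal ‖ψ N ω‖) atTop := by
        filter_upwards [htend] with ω hω
        exact (((ENNReal.continuous_ofReal.tendsto _).comp
          ((continuous_norm.tendsto _).comp hω)).liminf_eq).symm
      rw [lintegral_congr_ae heq]
      exact lintegral_liminf_le fun N => ENNReal.measurable_ofReal.comp (hψM N).norm
    have hbd : ∀ N, ∫⁻ ω, ENNReal.ofReal ‖ψ N ω‖ ∂μ ≤ 1 := by
      intro N
      have heq2 : ∫⁻ ω, ENNReal.ofReal ‖ψ N ω‖ ∂μ = ENNReal.ofReal (∫ ω, ψ N ω ∂μ) := by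
        rw [ofReal_integral_eq_lintegral_ofReal (hψint N) (Eventually.of_forall (hψ0 N))]
        exact lintegral_congr fun ω => by rw [Real.norm_eq_abs, abs_of_nonneg (hψ0 N ω)]
      rw [heq2]
      have h3 := hψ_set N Set.univ MeasurableSet.univ
      simp only [Measure.restrict_univ] at h3
      calc ENNReal.ofReal (∫ ω, ψ N ω ∂μ) ≤ ENNReal.ofReal (μ Set.univ).toReal :=
            ENNReal.ofReal_le_ofReal h3
        _ ≤ 1 := by simp
    calc ∫⁻ ω, ENNReal.ofReal ‖q ω‖ ∂μ
        ≤ liminf (fun N => ∫⁻ ω, ENNReal.ofReal ‖ψ N ω‖ ∂μ) atTop := hlim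
      _ ≤ 1 := liminf_le_of_frequently_le' (Frequently.of_forall hbd)
      _ < ⊤ := by simp
  refine ⟨hqint, ?_⟩
  -- set integral bound for q
  have hq_set : ∀ s : Set Ω, MeasurableSet[m] s → ∫ ω in s, q ω ∂μ ≤ (μ s).toReal := by
    intro s hs
    have hψq : ∀ᵐ ω ∂μ, ∀ N, ‖ψ N ω‖ ≤ q ω := by
      filter_upwards [hpos] with ω hω N
      rw [Real.norm_eq_abs, abs_of_nonneg (hψ0 N ω)]
      calc ψ N ω ≤ g ω * (h ω)⁻¹ := mul_le_mul_of_nonneg_left (hφinv N ω hω) (hg0 ω)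
        _ = q ω := (div_eq_mul_inv _ _).symm
    have htendI : Tendsto (fun N => ∫ ω in s, ψ N ω ∂μ) atTop (nhds (∫ ω in s, q ω ∂μ)) := by
      apply tendsto_integral_of_dominated_convergence q
        (fun N => (hψM N).aestronglyMeasurable.restrict)
        hqint.integrableOn
        (fun N => (ae_restrict_of_ae hψq).mono fun ω hω => hω N)
        ((ae_restrict_of_ae htend).mono fun ω hω => hω)
    exact le_of_tendsto htendI (Eventually.of_forall fun N => hψ_set N s hs)
  -- conclude via trim
  haveI : IsFiniteMeasure (μ.trim hm) := isFiniteMeasure_trim hm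
  have hcet : (μ[q|m]) ≤ᵐ[μ.trim hm] fun _ => (1 : ℝ) := by
    apply ae_le_of_forall_setIntegral_le (μ := μ.trim hm)
      (integrable_condExp.trim hm stronglyMeasurable_condExp)
      (integrable_const _)
    intro s hs _
    rw [← setIntegral_trim hm stronglyMeasurable_condExp hs,
      setIntegral_condExp hm hqint hs]
    have h2 : ∫ _ in s, (1:ℝ) ∂(μ.trim hm) = ((μ.trim hm) s).toReal := by simp; rfl
    rw [h2, trim_measurableSet_eq hm hs]
    exact hq_set s hs
  exact ae_le_of_ae_le_trim hcet

lemma bcosw_hat {Ω : Type*} {m m' mΩ : MeasurableSpace Ω} {μ : Measure Ω}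
    [IsProbabilityMeasure μ] (hm : m ≤ mΩ) (hmm' : m ≤ m')
    {f : Ω → ℝ} (hfm : Measurable[m'] f) (hm' : m' ≤ mΩ)
    (hf2 : Integrable (fun ω => f ω ^ 2) μ)
    (hpos : ∀ᵐ ω ∂μ, 0 < (μ[fun ω' => f ω' ^ 2|m]) ω)
    (dh : Ω → ℝ)
    (hdh : ∀ ω, dh ω = f ω / Real.sqrt ((μ[fun ω' => f ω' ^ 2|m]) ω)) :
    Measurable[m'] dh ∧ Integrable (fun ω => dh ω ^ 2) μ ∧ Integrable dh μ ∧
      (∀ᵐ ω ∂μ, (μ[fun ω' => dh ω' ^ 2|m]) ω ≤ 1) ∧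
      (∀ᵐ ω ∂μ, |(μ[dh|m]) ω| ≤ 1) ∧
      (μ[dh|m] =ᵐ[μ]
        fun ω => (μ[f|m]) ω / Real.sqrt ((μ[fun ω' => f ω' ^ 2|m]) ω)) := by
  have hfM : Measurable f := hfm.mono hm' le_rfl
  set h : Ω → ℝ := μ[fun ω' => f ω' ^ 2|m] with hh
  have hhm : Measurable[m] h := stronglyMeasurable_condExp.measurable
  have hsm : Measurable[m] fun ω => Real.sqrt (h ω) := hhm.sqrt
  have hdhm : Measurable[m'] dh := by
    have h1 : Measurable[m'] fun ω => f ω / Real.sqrt (h ω) :=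
      hfm.div (hsm.mono hmm' le_rfl)
    have h2 : (fun ω => f ω / Real.sqrt (h ω)) = dh := funext fun ω => (hdh ω).symm
    rwa [h2] at h1
  have hdhM : Measurable dh := hdhm.mono hm' le_rfl
  have key := bcosw_div_condexp hm (hfM.pow_const 2) hf2 (fun ω => sq_nonneg _) hpos
  have hdh2 : (fun ω => dh ω ^ 2) =ᵐ[μ] fun ω => f ω ^ 2 / h ω := by
    filter_upwards [hpos] with ω hω
    rw [hdh, div_pow, Real.sq_sqrt hω.le]
  have hdh2int : Integrable (fun ω => dh ω ^ 2) μ := key.1.congr hdh2.symm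
  have hdh2ce : ∀ᵐ ω ∂μ, (μ[fun ω' => dh ω' ^ 2|m]) ω ≤ 1 := by
    have h1 := condExp_congr_ae (μ := μ) (m := m) hdh2
    filter_upwards [h1, key.2] with ω h1 h2
    rw [h1]; exact h2
  set bb : Ω → ℝ := fun ω => (dh ω ^ 2 + 1) / 2 with hbb
  have hbint : Integrable bb μ := (hdh2int.add (integrable_const 1)).div_const 2
  have hdhint : Integrable dh μ :=
    Integrable.mono' hbint hdhM.aestronglyMeasurable
      (Eventually.of_forall fun ω => by
        rw [Real.norm_eq_abs]; exact bcosw_abs_le (dh ω))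
  have hfint : Integrable f μ :=
    Integrable.mono' ((hf2.add (integrable_const 1)).div_const 2)
      hfM.aestronglyMeasurable
      (Eventually.of_forall fun ω => by
        rw [Real.norm_eq_abs]; exact bcosw_abs_le (f ω))
  -- pull-out property
  have hfe : (fun ω => (Real.sqrt (h ω))⁻¹ * f ω) = dh := by
    funext ω; rw [hdh, div_eq_mul_inv, mul_comm]
  have hfe' : ((fun ω => (Real.sqrt (h ω))⁻¹) * f) = dh := hfe
  have hveq : μ[dh|m] =ᵐ[μ] fun ω => (μ[f|m]) ω / Real.sqrt (h ω) := by
    have h1 := condExp_mul_of_stronglyMeasurable_left (μ := μ)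
      (f := fun ω => (Real.sqrt (h ω))⁻¹) (g := f)
      hsm.inv.stronglyMeasurable (by rw [hfe']; exact hdhint) hfint
    rw [hfe'] at h1
    exact h1.trans (Eventually.of_forall fun ω => by
      simp only [Pi.mul_apply]; rw [div_eq_mul_inv, mul_comm])
  -- bound on |E[dh|m]|
  have hble : ∀ᵐ ω ∂μ, (μ[bb|m]) ω ≤ 1 := by
    have e1 : bb = fun ω' => (2⁻¹ : ℝ) * dh ω' ^ 2 + 2⁻¹ := by funext ω'; rw [hbb]; ring
    have h1 : μ[bb|m] =ᵐ[μ] fun ω => ((μ[fun ω' => dh ω' ^ 2|m]) ω + 1) / 2 := by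
      rw [e1]
      refine EventuallyEq.trans (condExp_add (μ := μ) (m := m)
        (f := fun ω' => (2⁻¹ : ℝ) * dh ω' ^ 2) (g := fun _ => (2⁻¹ : ℝ))
        (hdh2int.const_mul _) (integrable_const _)) ?_
      have h2 := bcosw_condExp_const_mul (μ := μ) (m := m) (2⁻¹ : ℝ) fun ω' => dh ω' ^ 2
      have h3 : μ[fun _ : Ω => (2⁻¹ : ℝ)|m] = fun _ => (2⁻¹ : ℝ) := condExp_const hm _
      filter_upwards [h2] with ω hω
      simp only [Pi.add_apply, hω, h3]; ring
    filter_upwards [h1, hdh2ce] with ω h1 h2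
    rw [h1]; linarith
  have hup : ∀ᵐ ω ∂μ, (μ[dh|m]) ω ≤ 1 := by
    have h1 := condExp_mono (μ := μ) (m := m) hdhint hbint
      (Eventually.of_forall fun ω => le_trans (le_abs_self _) (bcosw_abs_le (dh ω)))
    filter_upwards [h1, hble] with ω h1 h2 using le_trans h1 h2
  have hlow : ∀ᵐ ω ∂μ, -1 ≤ (μ[dh|m]) ω := by
    have h1 := condExp_mono (μ := μ) (m := m) hbint.neg hdhint
      (Eventually.of_forall fun ω => by
        simp only [Pi.neg_apply, hbb]
        nlinarith [neg_abs_le (dh ω), bcosw_abs_le (dh ω)])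
    have h2 := condExp_neg (μ := μ) bb m
    filter_upwards [h1, h2, hble] with ω h1 h2 h3
    rw [h2] at h1
    simp only [Pi.neg_apply] at h1
    linarith
  have habs : ∀ᵐ ω ∂μ, |(μ[dh|m]) ω| ≤ 1 := by
    filter_upwards [hup, hlow] with ω h1 h2 using abs_le.mpr ⟨h2, h1⟩
  exact ⟨hdhm, hdh2int, hdhint, hdh2ce, habs, hveq⟩

/-- One-step contraction of conceptual BCOSW (Lemma 5.1). -/
theorem bcosw_one_step_contraction
    {Ω : Type*} {mΩ : MeasurableSpace Ω} {μ : Measure Ω} [IsProbabilityMeasure μ]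
    (F : ℕ → MeasurableSpace Ω) (hF_le : ∀ t, F t ≤ mΩ) (hF_mono : Monotone F)
    {n : ℕ} (hn : 1 ≤ n) (lam : ℝ) (hlam : 0 ≤ lam)
    (xstar : Fin n → ℝ) (α : ℕ → ℝ)
    (d : ℕ → Ω → Fin n → ℝ)
    (hd_meas : ∀ t k, Measurable[F (t + 1)] fun ω => d t ω k)
    (hd_sq_int : ∀ t k, Integrable (fun ω => (d t ω k) ^ 2) μ)
    (hd2_pos : ∀ t k, ∀ᵐ ω ∂μ, 0 < (μ[fun ω' => (d t ω' k) ^ 2|F t]) ω)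
    (x : ℕ → Ω → Fin n → ℝ)
    (hx0_meas : ∀ k, Measurable[F 0] fun ω => x 0 ω k)
    (hx0_sq_int : ∀ k, Integrable (fun ω => (x 0 ω k) ^ 2) μ)
    (hiter : ∀ t ω k, x (t + 1) ω k
      = (1 - α t * lam) * x t ω k
        - α t * (d t ω k / Real.sqrt ((μ[fun ω' => (d t ω' k) ^ 2|F t]) ω)))
    (haiming : ∀ t, ∀ᵐ ω ∂μ,
      (∑ k, (x t ω k - xstar k) *
          ((μ[fun ω' => d t ω' k|F t]) ω
              / Real.sqrt ((μ[fun ω' => (d t ω' k) ^ 2|F t]) ω)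
            + lam * x t ω k))
        ≥ lam * ∑ k, (x t ω k - xstar k) ^ 2)
    (hα : ∀ t, 0 ≤ α t) (hαlam : ∀ t, α t * lam < 1)
    (Bstar : ℝ)
    (hBstar : Bstar = (n : ℝ) + lam ^ 2 * (∑ k, (xstar k) ^ 2)
        + 2 * lam * ∑ k, |xstar k|) :
    ∀ t, ∀ᵐ ω ∂μ,
      (μ[fun ω' => ∑ k, (x (t + 1) ω' k - xstar k) ^ 2|F t]) ω
        ≤ (1 - α t * lam) ^ 2 * (∑ k, (x t ω k - xstar k) ^ 2) + (α t) ^ 2 * Bstar := by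
  -- facts about the normalized increments
  have hhat : ∀ τ (k : Fin n),
      Measurable[F (τ + 1)] (fun ω => d τ ω k
          / Real.sqrt ((μ[fun ω' => (d τ ω' k) ^ 2|F τ]) ω)) ∧
      Integrable (fun ω => (d τ ω k
          / Real.sqrt ((μ[fun ω' => (d τ ω' k) ^ 2|F τ]) ω)) ^ 2) μ ∧
      Integrable (fun ω => d τ ω k
          / Real.sqrt ((μ[fun ω' => (d τ ω' k) ^ 2|F τ]) ω)) μ ∧
      (∀ᵐ ω ∂μ, (μ[fun ω' => (d τ ω' k
          / Real.sqrt ((μ[fun ω'' => (d τ ω'' k) ^ 2|F τ]) ω')) ^ 2|F τ]) ω ≤ 1) ∧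
      (∀ᵐ ω ∂μ, |(μ[fun ω' => d τ ω' k
          / Real.sqrt ((μ[fun ω'' => (d τ ω'' k) ^ 2|F τ]) ω')|F τ]) ω| ≤ 1) ∧
      ((μ[fun ω' => d τ ω' k
          / Real.sqrt ((μ[fun ω'' => (d τ ω'' k) ^ 2|F τ]) ω')|F τ]) =ᵐ[μ]
        fun ω => (μ[fun ω' => d τ ω' k|F τ]) ω
          / Real.sqrt ((μ[fun ω' => (d τ ω' k) ^ 2|F τ]) ω)) := by
    intro τ k
    exact bcosw_hat (hF_le τ) (hF_mono (Nat.le_succ τ)) (hd_meas τ k) (hF_le (τ + 1))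
      (hd_sq_int τ k) (hd2_pos τ k) _ (fun ω => rfl)
  -- iterates are measurable and square integrable
  have hxfacts : ∀ τ, (∀ k, Measurable[F τ] fun ω => x τ ω k)
      ∧ (∀ k, Integrable (fun ω => (x τ ω k) ^ 2) μ) := by
    intro τ
    induction τ with
    | zero => exact ⟨hx0_meas, hx0_sq_int⟩
    | succ τ ih =>
      constructor
      · intro k
        have he : (fun ω => x (τ + 1) ω k) = fun ω => (1 - α τ * lam) * x τ ω k
            - α τ * (d τ ω k / Real.sqrt ((μ[fun ω' => (d τ ω' k) ^ 2|F τ]) ω)) :=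
          funext fun ω => hiter τ ω k
        rw [he]
        exact (measurable_const.mul ((ih.1 k).mono (hF_mono (Nat.le_succ τ)) le_rfl)).sub
          (measurable_const.mul (hhat τ k).1)
      · intro k
        have he : (fun ω => (x (τ + 1) ω k) ^ 2) = fun ω =>
            (1 - α τ * lam) ^ 2 * (x τ ω k) ^ 2
            - (2 * (1 - α τ * lam) * α τ) * (x τ ω k
                * (d τ ω k / Real.sqrt ((μ[fun ω' => (d τ ω' k) ^ 2|F τ]) ω)))
            + (α τ) ^ 2 * ((d τ ω k
                / Real.sqrt ((μ[fun ω' => (d τ ω' k) ^ 2|F τ]) ω)) ^ 2) := by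
          funext ω; rw [hiter τ ω k]; ring
        rw [he]
        have hxdh : Integrable (fun ω => x τ ω k
            * (d τ ω k / Real.sqrt ((μ[fun ω' => (d τ ω' k) ^ 2|F τ]) ω))) μ := by
          refine Integrable.mono' (((ih.2 k).add (hhat τ k).2.1).div_const 2)
            (((((ih.1 k).mono (hF_le τ) le_rfl)).mul
              ((hhat τ k).1.mono (hF_le (τ + 1)) le_rfl)).aestronglyMeasurable) ?_
          exact Eventually.of_forall fun ω => by
            rw [Real.norm_eq_abs]; exact bcosw_abs_mul_le _ _
        exact (((ih.2 k).const_mul _).sub (hxdh.const_mul _)).add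
          (((hhat τ k).2.1).const_mul _)
  intro t
  have hm : F t ≤ mΩ := hF_le t
  set A : ℝ := 1 - α t * lam with hA
  set dh : Fin n → Ω → ℝ := fun k ω => d t ω k
      / Real.sqrt ((μ[fun ω' => (d t ω' k) ^ 2|F t]) ω) with hdhdef
  set y : Fin n → Ω → ℝ := fun k ω => x t ω k - xstar k with hydef
  set u : Fin n → Ω → ℝ := fun k => μ[fun ω' => dh k ω' ^ 2|F t] with hudef
  set v : Fin n → Ω → ℝ := fun k => μ[dh k|F t] with hvdef
  -- basic integrability facts
  have hxm : ∀ k, Measurable[F t] fun ω => x t ω k := (hxfacts t).1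
  have hx2 : ∀ k, Integrable (fun ω => (x t ω k) ^ 2) μ := (hxfacts t).2
  have hym : ∀ k, Measurable[F t] (y k) := fun k => (hxm k).sub measurable_const
  have hyM : ∀ k, Measurable (y k) := fun k => (hym k).mono hm le_rfl
  have hxint : ∀ k, Integrable (fun ω => x t ω k) μ := fun k =>
    Integrable.mono' (((hx2 k).add (integrable_const 1)).div_const 2)
      (((hxm k).mono hm le_rfl).aestronglyMeasurable)
      (Eventually.of_forall fun ω => by rw [Real.norm_eq_abs]; exact bcosw_abs_le _)
  have hyint : ∀ k, Integrable (y k) μ := fun k => (hxint k).sub (integrable_const _)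
  have hy2int : ∀ k, Integrable (fun ω => (y k ω) ^ 2) μ := by
    intro k
    have hbd : Integrable (fun ω => 2 * (x t ω k) ^ 2 + 2 * (xstar k) ^ 2) μ :=
      ((hx2 k).const_mul 2).add (integrable_const _)
    refine Integrable.mono' hbd
      (((hyM k).pow_const 2).aestronglyMeasurable) (Eventually.of_forall fun ω => ?_)
    rw [Real.norm_eq_abs, abs_of_nonneg (sq_nonneg _)]
    simp only [hydef]
    nlinarith [sq_nonneg (x t ω k + xstar k)]
  have hdh2int : ∀ k, Integrable (fun ω => (dh k ω) ^ 2) μ := fun k => (hhat t k).2.1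
  have hdhint : ∀ k, Integrable (dh k) μ := fun k => (hhat t k).2.2.1
  have hdhM : ∀ k, Measurable (dh k) := fun k => (hhat t k).1.mono (hF_le (t + 1)) le_rfl
  have hydhint : ∀ k, Integrable (fun ω => y k ω * dh k ω) μ := by
    intro k
    refine Integrable.mono' (((hy2int k).add (hdh2int k)).div_const 2)
      (((hyM k).mul (hdhM k)).aestronglyMeasurable) (Eventually.of_forall fun ω => ?_)
    rw [Real.norm_eq_abs]; exact bcosw_abs_mul_le _ _
  -- the three pieces
  set F1 : Fin n → Ω → ℝ := fun k ω => A ^ 2 * (y k ω) ^ 2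
      + (α t) ^ 2 * lam ^ 2 * (xstar k) ^ 2
      - 2 * A * (α t) * lam * (xstar k * y k ω) with hF1def
  set F2 : Fin n → Ω → ℝ := fun k ω => (α t) ^ 2 * (dh k ω) ^ 2
      + (2 * (α t) ^ 2 * lam * xstar k) * dh k ω with hF2def
  set F3 : Fin n → Ω → ℝ := fun k ω => (-(2 * A * (α t))) * (y k ω * dh k ω) with hF3def
  have hF1int : ∀ k, Integrable (F1 k) μ := fun k =>
    (((hy2int k).const_mul _).add (integrable_const _)).sub
      (((hyint k).const_mul (xstar k)).const_mul _)
  have hF2int : ∀ k, Integrable (F2 k) μ := fun k =>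
    ((hdh2int k).const_mul _).add ((hdhint k).const_mul _)
  have hF3int : ∀ k, Integrable (F3 k) μ := fun k => (hydhint k).const_mul _
  have hF1sm : ∀ k, StronglyMeasurable[F t] (F1 k) := by
    intro k
    apply Measurable.stronglyMeasurable
    exact ((measurable_const.mul ((hym k).pow_const 2)).add measurable_const).sub
      (measurable_const.mul (measurable_const.mul (hym k)))
  -- conditional expectations of the pieces
  have hceF1 : ∀ k, μ[F1 k|F t] = F1 k := fun k =>
    condExp_of_stronglyMeasurable hm (hF1sm k) (hF1int k)
  have hceF2 : ∀ k, μ[F2 k|F t] =ᵐ[μ]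
      fun ω => (α t) ^ 2 * u k ω + (2 * (α t) ^ 2 * lam * xstar k) * v k ω := by
    intro k
    have h1 : μ[F2 k|F t] =ᵐ[μ] fun ω =>
        (μ[fun ω' => (α t) ^ 2 * (dh k ω') ^ 2|F t]) ω
        + (μ[fun ω' => (2 * (α t) ^ 2 * lam * xstar k) * dh k ω'|F t]) ω :=
      condExp_add ((hdh2int k).const_mul _) ((hdhint k).const_mul _) (F t)
    have h2 : μ[fun ω' => (α t) ^ 2 * (dh k ω') ^ 2|F t] =ᵐ[μ]
        fun ω => (α t) ^ 2 * u k ω :=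
      bcosw_condExp_const_mul _ _
    have h3 : μ[fun ω' => (2 * (α t) ^ 2 * lam * xstar k) * dh k ω'|F t] =ᵐ[μ]
        fun ω => (2 * (α t) ^ 2 * lam * xstar k) * v k ω :=
      bcosw_condExp_const_mul _ _
    filter_upwards [h1, h2, h3] with ω e1 e2 e3
    rw [e1, e2, e3]
  have hceF3 : ∀ k, μ[F3 k|F t] =ᵐ[μ]
      fun ω => (-(2 * A * (α t))) * (y k ω * v k ω) := by
    intro k
    have h1 : μ[F3 k|F t] =ᵐ[μ]
        fun ω => (-(2 * A * (α t))) * (μ[fun ω' => y k ω' * dh k ω'|F t]) ω :=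
      bcosw_condExp_const_mul _ _
    have h2 : μ[fun ω' => y k ω' * dh k ω'|F t] =ᵐ[μ] fun ω => y k ω * v k ω := by
      have h3 : μ[y k * dh k|F t] =ᵐ[μ] y k * μ[dh k|F t] :=
        condExp_mul_of_stronglyMeasurable_left (hym k).stronglyMeasurable (hydhint k) (hdhint k)
      exact h3.trans (Eventually.of_forall fun ω => rfl)
    filter_upwards [h1, h2] with ω e1 e2
    rw [e1, e2]
  -- combined quantity
  set G : Fin n → Ω → ℝ := fun k ω => A ^ 2 * (y k ω) ^ 2 + (α t) ^ 2 * u k ω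
      + 2 * (α t) ^ 2 * lam * (xstar k * v k ω) + (α t) ^ 2 * lam ^ 2 * (xstar k) ^ 2
      - 2 * A * (α t) * (y k ω * v k ω + lam * (xstar k * y k ω)) with hGdef
  have hce : ∀ k, μ[fun ω' => F1 k ω' + F2 k ω' + F3 k ω'|F t] =ᵐ[μ] G k := by
    intro k
    have hs1 : μ[fun ω' => F1 k ω' + F2 k ω' + F3 k ω'|F t] =ᵐ[μ]
        fun ω => (μ[fun ω' => F1 k ω' + F2 k ω'|F t]) ω + (μ[F3 k|F t]) ω :=
      condExp_add ((hF1int k).add (hF2int k)) (hF3int k) (F t)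
    have hs2 : μ[fun ω' => F1 k ω' + F2 k ω'|F t] =ᵐ[μ]
        fun ω => (μ[F1 k|F t]) ω + (μ[F2 k|F t]) ω :=
      condExp_add (hF1int k) (hF2int k) (F t)
    filter_upwards [hs1, hs2, hceF2 k, hceF3 k] with ω e1 e2 e3 e4
    rw [e1, e2, e3, e4, hceF1 k]
    simp only [hGdef, hF1def]
    ring
  -- sum over coordinates
  have hfun : (fun ω' => ∑ k, (x (t + 1) ω' k - xstar k) ^ 2)
      = ∑ k, (fun ω' => F1 k ω' + F2 k ω' + F3 k ω') := by
    funext ω'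
    rw [Finset.sum_apply]
    refine Finset.sum_congr rfl fun k _ => ?_
    rw [hiter t ω' k]
    simp only [hF1def, hF2def, hF3def, hydef, hdhdef]
    ring
  have htotal : μ[fun ω' => ∑ k, (x (t + 1) ω' k - xstar k) ^ 2|F t] =ᵐ[μ]
      ∑ k, μ[fun ω' => F1 k ω' + F2 k ω' + F3 k ω'|F t] := by
    rw [hfun]
    exact condExp_finsetSum (fun k _ => ((hF1int k).add (hF2int k)).add (hF3int k)) (F t)
  have htotal2 : ∀ᵐ ω ∂μ,
      (μ[fun ω' => ∑ k, (x (t + 1) ω' k - xstar k) ^ 2|F t]) ω = ∑ k, G k ω := by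
    have hall : ∀ᵐ ω ∂μ, ∀ k,
        (μ[fun ω' => F1 k ω' + F2 k ω' + F3 k ω'|F t]) ω = G k ω :=
      (ae_all_iff).mpr fun k => hce k
    filter_upwards [htotal, hall] with ω e1 e2
    rw [e1, Finset.sum_apply]
    exact Finset.sum_congr rfl fun k _ => e2 k
  -- a.e. bounds
  have hu1 : ∀ᵐ ω ∂μ, ∀ k, u k ω ≤ 1 := (ae_all_iff).mpr fun k => (hhat t k).2.2.2.1
  have hv1 : ∀ᵐ ω ∂μ, ∀ k, |v k ω| ≤ 1 := (ae_all_iff).mpr fun k => (hhat t k).2.2.2.2.1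
  have hveq : ∀ᵐ ω ∂μ, ∀ k, v k ω = (μ[fun ω' => d t ω' k|F t]) ω
      / Real.sqrt ((μ[fun ω' => (d t ω' k) ^ 2|F t]) ω) :=
    (ae_all_iff).mpr fun k => (hhat t k).2.2.2.2.2
  -- final computation
  filter_upwards [htotal2, haiming t, hu1, hv1, hveq] with ω e0 eaim eu ev evq
  rw [e0, hBstar]
  have hA0 : 0 ≤ A := by rw [hA]; linarith [hαlam t]
  have hexp : ∑ k, G k ω = A ^ 2 * (∑ k, (y k ω) ^ 2)
      + (α t) ^ 2 * (∑ k, u k ω)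
      + 2 * (α t) ^ 2 * lam * (∑ k, xstar k * v k ω)
      + (α t) ^ 2 * lam ^ 2 * (∑ k, (xstar k) ^ 2)
      - 2 * A * (α t) * (∑ k, (y k ω * v k ω + lam * (xstar k * y k ω))) := by
    rw [Finset.mul_sum, Finset.mul_sum, Finset.mul_sum, Finset.mul_sum, Finset.mul_sum,
      ← Finset.sum_add_distrib, ← Finset.sum_add_distrib, ← Finset.sum_add_distrib,
      ← Finset.sum_sub_distrib]
  have hS2 : ∑ k, u k ω ≤ (n : ℝ) := by
    calc ∑ k, u k ω ≤ ∑ _k : Fin n, (1 : ℝ) := Finset.sum_le_sum fun k _ => eu k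
      _ = n := by simp
  have hS3 : ∑ k, xstar k * v k ω ≤ ∑ k, |xstar k| := by
    refine Finset.sum_le_sum fun k _ => ?_
    calc xstar k * v k ω ≤ |xstar k * v k ω| := le_abs_self _
      _ = |xstar k| * |v k ω| := abs_mul _ _
      _ ≤ |xstar k| * 1 := mul_le_mul_of_nonneg_left (ev k) (abs_nonneg _)
      _ = |xstar k| := mul_one _
  have hS5 : 0 ≤ ∑ k, (y k ω * v k ω + lam * (xstar k * y k ω)) := by
    have key : ∑ k, (y k ω * v k ω + lam * (xstar k * y k ω))
        = (∑ k, (x t ω k - xstar k) *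
            ((μ[fun ω' => d t ω' k|F t]) ω
                / Real.sqrt ((μ[fun ω' => (d t ω' k) ^ 2|F t]) ω)
              + lam * x t ω k))
          - lam * ∑ k, (x t ω k - xstar k) ^ 2 := by
      rw [Finset.mul_sum, ← Finset.sum_sub_distrib]
      refine Finset.sum_congr rfl fun k _ => ?_
      rw [← evq k]
      simp only [hydef]
      ring
    rw [key]
    linarith [eaim]
  have hy_goal : ∑ k, (x t ω k - xstar k) ^ 2 = ∑ k, (y k ω) ^ 2 := by
    refine Finset.sum_congr rfl fun k _ => by rw [hydef]
  rw [hexp, hy_goal]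
  have b1 : (α t) ^ 2 * (∑ k, u k ω) ≤ (α t) ^ 2 * (n : ℝ) :=
    mul_le_mul_of_nonneg_left hS2 (sq_nonneg _)
  have b2 : 2 * (α t) ^ 2 * lam * (∑ k, xstar k * v k ω)
      ≤ 2 * (α t) ^ 2 * lam * (∑ k, |xstar k|) :=
    mul_le_mul_of_nonneg_left hS3 (by positivity)
  have b3 : 0 ≤ 2 * A * (α t) * (∑ k, (y k ω * v k ω + lam * (xstar k * y k ω))) :=
    mul_nonneg (mul_nonneg (by linarith) (hα t)) hS5
  nlinarith [b1, b2, b3]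
end

section
/- Robbins–Siegmund almost-supermartingale lemma (Lemma 5.3): Let (Ω, F, P) be a probability space and F_0 ⊆ F_1 ⊆ … a filtration of sub-σ-algebras of F. For each t ≥ 0, let X_t, a_t, b_t, c_t be nonnegative, integrable, F_t-measurable random variables satisfying E[X_{t+1} | F_t] ≤ X_t(1 + a_t) + b_t − c_t almost surely. If Σ_{t=0}^∞ a_t < ∞ and Σ_{t=0}^∞ b_t < ∞ almost surely, then almost surely lim_{t→∞} X_t exists and is finite, and Σ_{t=0}^∞ c_t < ∞. -/
open MeasureTheory Filter

/-- Deterministic "stopped process" structure lemma. -/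
private lemma rs_stopped (w s : ℕ → ℝ) (hs : Monotone s) (K : ℝ) (t : ℕ) :
    ∃ m, m ≤ t ∧ (w 0 + ∑ i ∈ Finset.range t, if s i ≤ K then w (i + 1) - w i else 0) = w m
      ∧ (∀ i, i < m → s i ≤ K) ∧ (m < t → ¬ s m ≤ K) := by
  induction t with
  | zero =>
      exact ⟨0, le_rfl, by simp, fun i h => absurd h (Nat.not_lt_zero i),
        fun h => absurd h (Nat.not_lt_zero 0)⟩
  | succ t ih =>
      obtain ⟨m, hmt, heq, hlt, hstop⟩ := ih
      by_cases hst : s t ≤ K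
      · have hmeq : m = t := by
          by_contra hne
          exact (hstop (lt_of_le_of_ne hmt hne)) (le_trans (hs hmt) hst)
        refine ⟨t + 1, le_rfl, ?_, ?_, ?_⟩
        · rw [Finset.sum_range_succ, if_pos hst, ← add_assoc, heq, hmeq]
          ring
        · intro i hi
          exact le_trans (hs (Nat.lt_succ_iff.1 hi)) hst
        · intro h; exact absurd h (lt_irrefl _)
      · refine ⟨m, le_trans hmt (Nat.le_succ t), ?_, hlt, ?_⟩
        · rw [Finset.sum_range_succ, if_neg hst, ← add_assoc, add_zero, heq]
        · intro _
          rcases lt_or_eq_of_le hmt with h | h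
          · exact hstop h
          · rw [h]; exact hst

/-- Deterministic final step of Robbins–Siegmund. -/
private lemma rs_pointwise (x α β γ : ℕ → ℝ)
    (hx : ∀ t, 0 ≤ x t) (hα : ∀ t, 0 ≤ α t) (hβ : ∀ t, 0 ≤ β t) (hγ : ∀ t, 0 ≤ γ t)
    (hαs : Summable α) (hβs : Summable β)
    (hW : ∃ L, Tendsto (fun t => x t * (∏ s ∈ Finset.range t, (1 + α s))⁻¹
        + ∑ s ∈ Finset.range t, (γ s - β s) * (∏ r ∈ Finset.range (s + 1), (1 + α r))⁻¹)
        atTop (nhds L)) :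
    (∃ L, Tendsto (fun t => x t) atTop (nhds L)) ∧ Summable γ := by
  set p : ℕ → ℝ := fun t => ∏ s ∈ Finset.range t, (1 + α s) with hp
  have hp1 : ∀ t, 1 ≤ p t := by
    intro t
    simp only [hp]
    calc (1:ℝ) = ∏ _s ∈ Finset.range t, 1 := Finset.prod_const_one.symm
      _ ≤ ∏ s ∈ Finset.range t, (1 + α s) :=
          Finset.prod_le_prod (fun i _ => zero_le_one) (fun i _ => by linarith [hα i])
  have hp0 : ∀ t, 0 < p t := fun t => lt_of_lt_of_le one_pos (hp1 t)
  have hpmono : Monotone p := by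
    apply monotone_nat_of_le_succ
    intro t
    have h : p (t + 1) = p t * (1 + α t) := Finset.prod_range_succ _ _
    rw [h]
    nlinarith [hp0 t, hα t]
  have hpbdd : ∀ t, p t ≤ Real.exp (∑' s, α s) := by
    intro t
    calc p t ≤ ∏ s ∈ Finset.range t, Real.exp (α s) :=
          Finset.prod_le_prod (fun i _ => by linarith [hα i]) (fun i _ => by
            have := Real.add_one_le_exp (α i); linarith)
      _ = Real.exp (∑ s ∈ Finset.range t, α s) := (Real.exp_sum _ _).symm
      _ ≤ Real.exp (∑' s, α s) :=
          Real.exp_le_exp.2 (Summable.sum_le_tsum _ (fun i _ => hα i) hαs)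
  have hbdd : BddAbove (Set.range p) :=
    ⟨Real.exp (∑' s, α s), by rintro _ ⟨t, rfl⟩; exact hpbdd t⟩
  have hplim : Tendsto p atTop (nhds (⨆ t, p t)) := tendsto_atTop_ciSup hpmono hbdd
  set Pl := ⨆ t, p t with hPl
  have hpPl : ∀ t, p t ≤ Pl := fun t => le_ciSup hbdd t
  have hPl1 : (1 : ℝ) ≤ Pl := le_trans (hp1 0) (hpPl 0)
  have hq0 : ∀ t, 0 < (p t)⁻¹ := fun t => inv_pos.2 (hp0 t)
  have hq1 : ∀ t, (p t)⁻¹ ≤ 1 := fun t => inv_le_one_of_one_le₀ (hp1 t)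
  have hβ's : Summable (fun s => β s * (p (s + 1))⁻¹) :=
    Summable.of_nonneg_of_le (fun s => mul_nonneg (hβ s) (hq0 _).le)
      (fun s => mul_le_of_le_one_right (hβ s) (hq1 _)) hβs
  obtain ⟨L, hL⟩ := hW
  set W : ℕ → ℝ := fun t => x t * (p t)⁻¹
      + ∑ s ∈ Finset.range t, (γ s - β s) * (p (s + 1))⁻¹ with hWdef
  have hWbdd : BddAbove (Set.range W) := hL.isBoundedUnder_le.bddAbove_range
  obtain ⟨M, hM⟩ := hWbdd
  have hsplit : ∀ t, ∑ s ∈ Finset.range t, (γ s - β s) * (p (s + 1))⁻¹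
      = ∑ s ∈ Finset.range t, γ s * (p (s + 1))⁻¹
        - ∑ s ∈ Finset.range t, β s * (p (s + 1))⁻¹ := by
    intro t
    rw [← Finset.sum_sub_distrib]
    exact Finset.sum_congr rfl fun i _ => by ring
  have hγ's : Summable (fun s => γ s * (p (s + 1))⁻¹) := by
    apply summable_of_sum_range_le (c := M + ∑' s, β s * (p (s + 1))⁻¹)
      (fun n => mul_nonneg (hγ n) (hq0 _).le)
    intro n
    have h1 : W n ≤ M := hM ⟨n, rfl⟩
    have h2 : ∑ s ∈ Finset.range n, β s * (p (s + 1))⁻¹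
        ≤ ∑' s, β s * (p (s + 1))⁻¹ :=
      Summable.sum_le_tsum _ (fun i _ => mul_nonneg (hβ i) (hq0 _).le) hβ's
    have h3 := hsplit n
    have h4 : 0 ≤ x n * (p n)⁻¹ := mul_nonneg (hx n) (hq0 _).le
    simp only [hWdef] at h1
    linarith
  have hγs : Summable γ := by
    refine Summable.of_nonneg_of_le hγ (fun s => ?_) (hγ's.mul_right Pl)
    have h : γ s = γ s * (p (s + 1))⁻¹ * p (s + 1) := by
      rw [mul_assoc, inv_mul_cancel₀ (hp0 _).ne', mul_one]
    calc γ s = γ s * (p (s + 1))⁻¹ * p (s + 1) := h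
      _ ≤ γ s * (p (s + 1))⁻¹ * Pl :=
          mul_le_mul_of_nonneg_left (hpPl _) (mul_nonneg (hγ s) (hq0 _).le)
  have hBt : Tendsto (fun t => ∑ s ∈ Finset.range t, β s * (p (s + 1))⁻¹) atTop
      (nhds (∑' s, β s * (p (s + 1))⁻¹)) := hβ's.hasSum.tendsto_sum_nat
  have hCt : Tendsto (fun t => ∑ s ∈ Finset.range t, γ s * (p (s + 1))⁻¹) atTop
      (nhds (∑' s, γ s * (p (s + 1))⁻¹)) := hγ's.hasSum.tendsto_sum_nat
  have hxq : Tendsto (fun t => x t * (p t)⁻¹) atTop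
      (nhds (L - (∑' s, γ s * (p (s + 1))⁻¹ - ∑' s, β s * (p (s + 1))⁻¹))) := by
    refine (hL.sub (hCt.sub hBt)).congr (fun t => ?_)
    simp only [hWdef]
    rw [hsplit t]
    ring
  refine ⟨⟨(L - (∑' s, γ s * (p (s + 1))⁻¹ - ∑' s, β s * (p (s + 1))⁻¹)) * Pl, ?_⟩, hγs⟩
  refine (hxq.mul hplim).congr (fun t => ?_)
  rw [mul_assoc, inv_mul_cancel₀ (hp0 t).ne', mul_one]

/-- Robbins–Siegmund almost-supermartingale lemma (Lemma 5.3). -/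
theorem robbins_siegmund
    {Ω : Type*} {mΩ : MeasurableSpace Ω} {μ : Measure Ω} [IsProbabilityMeasure μ]
    (F : ℕ → MeasurableSpace Ω) (hF_le : ∀ t, F t ≤ mΩ) (hF_mono : Monotone F)
    (X a b c : ℕ → Ω → ℝ)
    (hX_meas : ∀ t, Measurable[F t] (X t)) (ha_meas : ∀ t, Measurable[F t] (a t))
    (hb_meas : ∀ t, Measurable[F t] (b t)) (hc_meas : ∀ t, Measurable[F t] (c t))
    (hX_nonneg : ∀ t ω, 0 ≤ X t ω) (ha_nonneg : ∀ t ω, 0 ≤ a t ω)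
    (hb_nonneg : ∀ t ω, 0 ≤ b t ω) (hc_nonneg : ∀ t ω, 0 ≤ c t ω)
    (hX_int : ∀ t, Integrable (X t) μ) (ha_int : ∀ t, Integrable (a t) μ)
    (hb_int : ∀ t, Integrable (b t) μ) (hc_int : ∀ t, Integrable (c t) μ)
    (hrec : ∀ t, ∀ᵐ ω ∂μ,
      (μ[X (t + 1)|F t]) ω ≤ X t ω * (1 + a t ω) + b t ω - c t ω)
    (ha_sum : ∀ᵐ ω ∂μ, Summable fun t => a t ω)
    (hb_sum : ∀ᵐ ω ∂μ, Summable fun t => b t ω) :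
    ∀ᵐ ω ∂μ,
      (∃ L : ℝ, Tendsto (fun t => X t ω) atTop (nhds L)) ∧
        Summable fun t => c t ω := by
  classical
  haveI : ∀ t, SigmaFinite (μ.trim (hF_le t)) := fun t => by
    infer_instance
  -- the filtration
  set ℱ : Filtration ℕ mΩ := ⟨F, hF_mono, hF_le⟩ with hFil
  -- basic processes
  set P : ℕ → Ω → ℝ := fun t ω => ∏ s ∈ Finset.range t, (1 + a s ω) with hPdef
  set W : ℕ → Ω → ℝ := fun t ω => X t ω * (P t ω)⁻¹
      + ∑ s ∈ Finset.range t, (c s ω - b s ω) * (P (s + 1) ω)⁻¹ with hWdef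
  set S : ℕ → Ω → ℝ := fun t ω => ∑ s ∈ Finset.range (t + 1), (a s ω + b s ω) with hSdef
  set D : ℕ → ℕ → Ω → ℝ := fun K i ω =>
      if S i ω ≤ (K : ℝ) then W (i + 1) ω - W i ω else 0 with hDdef
  set G : ℕ → ℕ → Ω → ℝ := fun K t ω =>
      W 0 ω + ∑ i ∈ Finset.range t, D K i ω with hGdef
  -- elementary bounds on P
  have hP1 : ∀ t ω, 1 ≤ P t ω := by
    intro t ω
    simp only [hPdef]
    calc (1:ℝ) = ∏ _s ∈ Finset.range t, 1 := Finset.prod_const_one.symm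
      _ ≤ ∏ s ∈ Finset.range t, (1 + a s ω) :=
          Finset.prod_le_prod (fun i _ => zero_le_one) (fun i _ => by linarith [ha_nonneg i ω])
  have hP0 : ∀ t ω, 0 < P t ω := fun t ω => lt_of_lt_of_le one_pos (hP1 t ω)
  have hPsucc : ∀ t ω, P (t + 1) ω = P t ω * (1 + a t ω) := fun t ω =>
    Finset.prod_range_succ _ _
  have hQ0 : ∀ t ω, 0 < (P t ω)⁻¹ := fun t ω => inv_pos.2 (hP0 t ω)
  have hQ1 : ∀ t ω, (P t ω)⁻¹ ≤ 1 := fun t ω => inv_le_one_of_one_le₀ (hP1 t ω)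
  -- monotonicity of S
  have hSmono : ∀ ω, Monotone (fun t => S t ω) := by
    intro ω
    apply monotone_nat_of_le_succ
    intro t
    simp only [hSdef]
    rw [Finset.sum_range_succ (fun s => a s ω + b s ω) (t + 1)]
    have := ha_nonneg (t + 1) ω
    have := hb_nonneg (t + 1) ω
    linarith
  -- measurability
  have hPmeas : ∀ t u, t ≤ u + 1 → Measurable[F u] (P t) := by
    intro t u ht
    simp only [hPdef]
    apply Finset.measurable_prod
    intro i hi
    have hiu : i ≤ u := by
      have := Finset.mem_range.1 hi; omega
    exact measurable_const.add ((ha_meas i).mono (hF_mono hiu) le_rfl)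
  have hWmeas : ∀ t, Measurable[F t] (W t) := by
    intro t
    simp only [hWdef]
    apply Measurable.add
    · exact ((hX_meas t).mul ((hPmeas t t (Nat.le_succ t)).inv))
    · apply Finset.measurable_sum
      intro i hi
      have hit : i ≤ t := le_of_lt (Finset.mem_range.1 hi)
      have h1 : Measurable[F t] (c i) := (hc_meas i).mono (hF_mono hit) le_rfl
      have h2 : Measurable[F t] (b i) := (hb_meas i).mono (hF_mono hit) le_rfl
      have h3 : Measurable[F t] (P (i + 1)) := hPmeas (i + 1) t (by omega)
      exact (h1.sub h2).mul h3.inv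
  have hSmeas : ∀ t, Measurable[F t] (S t) := by
    intro t
    simp only [hSdef]
    apply Finset.measurable_sum
    intro i hi
    have hit : i ≤ t := Nat.lt_succ_iff.1 (Finset.mem_range.1 hi)
    exact ((ha_meas i).mono (hF_mono hit) le_rfl).add
      ((hb_meas i).mono (hF_mono hit) le_rfl)
  have hSsetmeas : ∀ (K : ℕ) i t, i ≤ t → MeasurableSet[F t] {ω | S i ω ≤ (K : ℝ)} := by
    intro K i t hit
    have h := measurableSet_le (hSmeas i) (measurable_const (a := (K : ℝ)))
    exact hF_mono hit _ h
  have hDmeas : ∀ (K : ℕ) i t, i + 1 ≤ t → Measurable[F t] (D K i) := by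
    intro K i t hit
    simp only [hDdef]
    exact Measurable.ite (hSsetmeas K i t (by omega))
      (((hWmeas (i + 1)).mono (hF_mono hit) le_rfl).sub
        ((hWmeas i).mono (hF_mono (by omega : i ≤ t)) le_rfl))
      measurable_const
  have hGmeas : ∀ (K : ℕ) t, Measurable[F t] (G K t) := by
    intro K t
    simp only [hGdef]
    apply Measurable.add
    · exact (hWmeas 0).mono (hF_mono (Nat.zero_le t)) le_rfl
    · apply Finset.measurable_sum
      intro i hi
      exact hDmeas K i t (Finset.mem_range.1 hi)
  -- integrability
  have hXQint : ∀ t, Integrable (fun ω => X t ω * (P t ω)⁻¹) μ := by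
    intro t
    refine (hX_int t).mono
      ((((hX_meas t).mono (hF_le t) le_rfl).mul
        (((hPmeas t t (Nat.le_succ t)).mono (hF_le t) le_rfl).inv)).aestronglyMeasurable)
      (ae_of_all _ fun ω => ?_)
    rw [Real.norm_eq_abs, Real.norm_eq_abs, abs_mul]
    have h1 : |(P t ω)⁻¹| ≤ 1 := by
      rw [abs_of_pos (hQ0 t ω)]; exact hQ1 t ω
    calc |X t ω| * |(P t ω)⁻¹| ≤ |X t ω| * 1 :=
          mul_le_mul_of_nonneg_left h1 (abs_nonneg _)
      _ = |X t ω| := mul_one _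
  have hcbQint : ∀ s, Integrable (fun ω => (c s ω - b s ω) * (P (s + 1) ω)⁻¹) μ := by
    intro s
    refine ((hc_int s).add (hb_int s)).mono ?_ (ae_of_all _ fun ω => ?_)
    · have h1 : Measurable[F s] (fun ω => (c s ω - b s ω) * (P (s + 1) ω)⁻¹) :=
        ((hc_meas s).sub (hb_meas s)).mul (hPmeas (s + 1) s le_rfl).inv
      exact (h1.mono (hF_le s) le_rfl).aestronglyMeasurable
    · rw [Real.norm_eq_abs, Real.norm_eq_abs, abs_mul]
      have h1 : |(P (s + 1) ω)⁻¹| ≤ 1 := by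
        rw [abs_of_pos (hQ0 _ ω)]; exact hQ1 _ ω
      have h2 : |c s ω - b s ω| ≤ |c s ω + b s ω| := by
        have := hc_nonneg s ω; have := hb_nonneg s ω
        rw [abs_of_nonneg (by linarith : (0:ℝ) ≤ c s ω + b s ω)]
        cases abs_cases (c s ω - b s ω) with
        | inl h => linarith [h.1]
        | inr h => linarith [h.1]
      calc |c s ω - b s ω| * |(P (s + 1) ω)⁻¹| ≤ |c s ω - b s ω| * 1 :=
            mul_le_mul_of_nonneg_left h1 (abs_nonneg _)
        _ = |c s ω - b s ω| := mul_one _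
        _ ≤ |c s ω + b s ω| := h2
  have hWint : ∀ t, Integrable (W t) μ := by
    intro t
    simp only [hWdef]
    exact (hXQint t).add (integrable_finset_sum _ fun i _ => hcbQint i)
  have hDint : ∀ (K : ℕ) i, Integrable (D K i) μ := by
    intro K i
    refine (((hWint (i + 1)).abs.add (hWint i).abs)).mono ?_ (ae_of_all _ fun ω => ?_)
    · exact ((hDmeas K i (i + 1) le_rfl).mono (hF_le (i + 1)) le_rfl).aestronglyMeasurable
    · simp only [hDdef]
      simp only [Real.norm_eq_abs, Pi.add_apply]
      have h0 : (0:ℝ) ≤ |W (i+1) ω| + |W i ω| := by positivity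
      rw [abs_of_nonneg h0]
      by_cases hsi : S i ω ≤ (K : ℝ)
      · rw [if_pos hsi]
        cases abs_cases (W (i+1) ω - W i ω) with
        | inl h => cases abs_cases (W (i+1) ω) with
          | inl h2 => cases abs_cases (W i ω) with
            | inl h3 => linarith [h.1, h2.1, h3.1]
            | inr h3 => linarith [h.1, h2.1, h3.1]
          | inr h2 => cases abs_cases (W i ω) with
            | inl h3 => linarith [h.1, h2.1, h3.1]
            | inr h3 => linarith [h.1, h2.1, h3.1]
        | inr h => cases abs_cases (W (i+1) ω) with
          | inl h2 => cases abs_cases (W i ω) with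
            | inl h3 => linarith [h.1, h2.1, h3.1]
            | inr h3 => linarith [h.1, h2.1, h3.1]
          | inr h2 => cases abs_cases (W i ω) with
            | inl h3 => linarith [h.1, h2.1, h3.1]
            | inr h3 => linarith [h.1, h2.1, h3.1]
      · rw [if_neg hsi, abs_zero]; exact h0
  have hGint : ∀ (K : ℕ) t, Integrable (G K t) μ := by
    intro K t
    simp only [hGdef]
    exact (hWint 0).add (integrable_finset_sum _ fun i _ => hDint K i)
  -- the supermartingale property
  have hsuper : ∀ K : ℕ, Supermartingale (G K) ℱ μ := by
    intro K
    refine supermartingale_nat (fun t => (hGmeas K t).stronglyMeasurable)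
      (hGint K) (fun i => ?_)
    -- key conditional expectation computation
    set g : Ω → ℝ := fun ω => if S i ω ≤ (K : ℝ) then (P (i + 1) ω)⁻¹ else 0 with hgdef
    set h : Ω → ℝ := fun ω => if S i ω ≤ (K : ℝ) then
        (c i ω - b i ω) * (P (i + 1) ω)⁻¹ - X i ω * (P i ω)⁻¹ else 0 with hhdef
    have hDeq : D K i = fun ω => g ω * X (i + 1) ω + h ω := by
      funext ω
      simp only [hDdef, hgdef, hhdef, hWdef]
      by_cases hsi : S i ω ≤ (K : ℝ)
      · rw [if_pos hsi, if_pos hsi, if_pos hsi, Finset.sum_range_succ]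
        ring
      · rw [if_neg hsi, if_neg hsi, if_neg hsi]
        ring
    have hgmeasF : Measurable[F i] g := by
      simp only [hgdef]
      exact Measurable.ite (hSsetmeas K i i le_rfl) (hPmeas (i + 1) i le_rfl).inv
        measurable_const
    have hg01 : ∀ ω, 0 ≤ g ω ∧ g ω ≤ 1 := by
      intro ω
      simp only [hgdef]
      by_cases hsi : S i ω ≤ (K : ℝ)
      · rw [if_pos hsi]; exact ⟨(hQ0 _ _).le, hQ1 _ _⟩
      · rw [if_neg hsi]; exact ⟨le_rfl, zero_le_one⟩
    have hgX : Integrable (fun ω => g ω * X (i + 1) ω) μ := by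
      refine (hX_int (i + 1)).mono ?_ (ae_of_all _ fun ω => ?_)
      · exact ((hgmeasF.mono (hF_le i) le_rfl).mul
          ((hX_meas (i + 1)).mono (hF_le (i + 1)) le_rfl)).aestronglyMeasurable
      · rw [Real.norm_eq_abs, Real.norm_eq_abs, abs_mul]
        have h1 : |g ω| ≤ 1 := by
          rw [abs_of_nonneg (hg01 ω).1]; exact (hg01 ω).2
        calc |g ω| * |X (i+1) ω| ≤ 1 * |X (i+1) ω| :=
              mul_le_mul_of_nonneg_right h1 (abs_nonneg _)
          _ = |X (i+1) ω| := one_mul _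
    have hhmeasF : Measurable[F i] h := by
      simp only [hhdef]
      refine Measurable.ite (hSsetmeas K i i le_rfl) ?_ measurable_const
      exact (((hc_meas i).sub (hb_meas i)).mul (hPmeas (i + 1) i le_rfl).inv).sub
        ((hX_meas i).mul (hPmeas i i (Nat.le_succ i)).inv)
    have hhint : Integrable h μ := by
      refine (((hc_int i).add (hb_int i)).add (hX_int i)).mono
        ((hhmeasF.mono (hF_le i) le_rfl).aestronglyMeasurable)
        (ae_of_all _ fun ω => ?_)
      simp only [hhdef, Real.norm_eq_abs, Pi.add_apply]
      have hc0 := hc_nonneg i ω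
      have hb0 := hb_nonneg i ω
      have hX0 := hX_nonneg i ω
      have hn : (0:ℝ) ≤ c i ω + b i ω + X i ω := by linarith
      rw [abs_of_nonneg hn]
      by_cases hsi : S i ω ≤ (K : ℝ)
      · rw [if_pos hsi]
        have hq0 := (hQ0 (i+1) ω).le
        have hq1 := hQ1 (i+1) ω
        have hq0' := (hQ0 i ω).le
        have hq1' := hQ1 i ω
        have hb1 : |(c i ω - b i ω) * (P (i + 1) ω)⁻¹| ≤ c i ω + b i ω := by
          rw [abs_mul, abs_of_nonneg hq0]
          have h2 : |c i ω - b i ω| ≤ c i ω + b i ω := by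
            cases abs_cases (c i ω - b i ω) with
            | inl hh => linarith [hh.1]
            | inr hh => linarith [hh.1]
          calc |c i ω - b i ω| * (P (i+1) ω)⁻¹ ≤ |c i ω - b i ω| * 1 :=
                mul_le_mul_of_nonneg_left hq1 (abs_nonneg _)
            _ = |c i ω - b i ω| := mul_one _
            _ ≤ c i ω + b i ω := h2
        have hb2 : X i ω * (P i ω)⁻¹ ≤ X i ω := mul_le_of_le_one_right hX0 hq1'
        have hb2' : 0 ≤ X i ω * (P i ω)⁻¹ := mul_nonneg hX0 hq0'
        cases abs_cases ((c i ω - b i ω) * (P (i + 1) ω)⁻¹ - X i ω * (P i ω)⁻¹) with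
        | inl hh =>
            cases abs_cases ((c i ω - b i ω) * (P (i + 1) ω)⁻¹) with
            | inl h2 => linarith [hh.1, h2.1]
            | inr h2 => linarith [hh.1, h2.1]
        | inr hh =>
            cases abs_cases ((c i ω - b i ω) * (P (i + 1) ω)⁻¹) with
            | inl h2 => linarith [hh.1, h2.1]
            | inr h2 => linarith [hh.1, h2.1]
      · rw [if_neg hsi, abs_zero]; exact hn
    have hmul : μ[fun ω => g ω * X (i + 1) ω|F i]
        =ᵐ[μ] fun ω => g ω * (μ[X (i + 1)|F i]) ω :=
      condExp_mul_of_stronglyMeasurable_left hgmeasF.stronglyMeasurable hgX (hX_int (i + 1))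
    have hcondD : (μ[D K i|F i]) ≤ᵐ[μ] fun _ => (0 : ℝ) := by
      have h1 : μ[D K i|F i] =ᵐ[μ] fun ω => g ω * (μ[X (i + 1)|F i]) ω + h ω := by
        rw [hDeq]
        have h2 : μ[fun ω => g ω * X (i + 1) ω + h ω|F i]
            =ᵐ[μ] μ[fun ω => g ω * X (i + 1) ω|F i] + μ[h|F i] :=
          condExp_add hgX hhint (F i)
        have h3 : μ[h|F i] = h :=
          condExp_of_stronglyMeasurable (hF_le i) hhmeasF.stronglyMeasurable hhint
        filter_upwards [h2, hmul] with ω h2ω hmulω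
        rw [h2ω]
        simp only [Pi.add_apply, h3, hmulω]
      filter_upwards [h1, hrec i] with ω h1ω hrecω
      rw [h1ω]
      by_cases hsi : S i ω ≤ (K : ℝ)
      · simp only [hgdef, hhdef, if_pos hsi]
        have hQrel : (1 + a i ω) * (P (i + 1) ω)⁻¹ = (P i ω)⁻¹ := by
          have ha1 : (0:ℝ) < 1 + a i ω := by linarith [ha_nonneg i ω]
          rw [hPsucc i ω, mul_inv, ← mul_assoc, mul_comm (1 + a i ω) (P i ω)⁻¹,
            mul_assoc, mul_inv_cancel₀ ha1.ne', mul_one]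
        have hle : (P (i + 1) ω)⁻¹ * (μ[X (i + 1)|F i]) ω
            ≤ (P (i + 1) ω)⁻¹ * (X i ω * (1 + a i ω) + b i ω - c i ω) :=
          mul_le_mul_of_nonneg_left hrecω (hQ0 _ _).le
        have hkey : (P (i + 1) ω)⁻¹ * (X i ω * (1 + a i ω) + b i ω - c i ω)
            + ((c i ω - b i ω) * (P (i + 1) ω)⁻¹ - X i ω * (P i ω)⁻¹) = 0 := by
          rw [← hQrel]; ring
        linarith [hle, hkey]
      · simp only [hgdef, hhdef, if_neg hsi]
        simp
    -- conclude the supermartingale inequality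
    have hGsucc : G K (i + 1) = fun ω => G K i ω + D K i ω := by
      funext ω
      simp only [hGdef]
      rw [Finset.sum_range_succ]
      ring
    have hadd : μ[G K (i + 1)|F i] =ᵐ[μ] fun ω => G K i ω + (μ[D K i|F i]) ω := by
      rw [hGsucc]
      have h2 : μ[fun ω => G K i ω + D K i ω|F i]
          =ᵐ[μ] μ[G K i|F i] + μ[D K i|F i] := condExp_add (hGint K i) (hDint K i) (F i)
      have h3 : μ[G K i|F i] = G K i :=
        condExp_of_stronglyMeasurable (hF_le i) (hGmeas K i).stronglyMeasurable (hGint K i)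
      filter_upwards [h2] with ω h2ω
      rw [h2ω]
      simp only [Pi.add_apply, h3]
    filter_upwards [hadd, hcondD] with ω h1 h2
    show (μ[G K (i + 1)|F i]) ω ≤ G K i ω
    rw [h1]
    have : (μ[D K i|F i]) ω ≤ 0 := h2
    linarith
  -- uniform lower bound on G K
  have hGlb : ∀ (K : ℕ) t ω, -(K : ℝ) ≤ G K t ω := by
    intro K t ω
    obtain ⟨m, hmt, heq, hlt, -⟩ :=
      rs_stopped (fun u => W u ω) (fun u => S u ω) (hSmono ω) (K : ℝ) t
    have hGeq : G K t ω = W m ω := by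
      simp only [hGdef, hDdef]
      simpa using heq
    rw [hGeq]
    have hbsum : ∑ s ∈ Finset.range m, b s ω ≤ (K : ℝ) := by
      cases m with
      | zero => simp
      | succ n =>
          have h1 : S n ω ≤ (K : ℝ) := hlt n (Nat.lt_succ_self n)
          have h2 : ∑ s ∈ Finset.range (n + 1), b s ω ≤ S n ω := by
            simp only [hSdef]
            apply Finset.sum_le_sum
            intro i _
            linarith [ha_nonneg i ω]
          linarith
    have h1 : 0 ≤ X m ω * (P m ω)⁻¹ := mul_nonneg (hX_nonneg m ω) (hQ0 m ω).le
    have h3 : ∑ s ∈ Finset.range m, (-(b s ω))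
        ≤ ∑ s ∈ Finset.range m, (c s ω - b s ω) * (P (s + 1) ω)⁻¹ := by
      apply Finset.sum_le_sum
      intro s _
      have hc' : 0 ≤ c s ω * (P (s + 1) ω)⁻¹ := mul_nonneg (hc_nonneg s ω) (hQ0 _ _).le
      have hb' : b s ω * (P (s + 1) ω)⁻¹ ≤ b s ω :=
        mul_le_of_le_one_right (hb_nonneg s ω) (hQ1 _ _)
      have hexp : (c s ω - b s ω) * (P (s + 1) ω)⁻¹
          = c s ω * (P (s + 1) ω)⁻¹ - b s ω * (P (s + 1) ω)⁻¹ := by ring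
      rw [hexp]
      linarith
    have h4 : -(K : ℝ) ≤ ∑ s ∈ Finset.range m, (-(b s ω)) := by
      rw [Finset.sum_neg_distrib]
      linarith
    simp only [hWdef]
    linarith
  -- expectation bound
  have hGub_int : ∀ (K : ℕ) t, ∫ ω, G K t ω ∂μ ≤ ∫ ω, X 0 ω ∂μ := by
    intro K t
    have hG0 : G K 0 = X 0 := by
      funext ω
      simp [hGdef, hWdef, hPdef]
    have h1 : μ[G K t|F 0] ≤ᵐ[μ] G K 0 := (hsuper K).2.1 0 t (Nat.zero_le t)
    have h2 : ∫ ω, G K t ω ∂μ = ∫ ω, (μ[G K t|F 0]) ω ∂μ :=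
      (integral_condExp (hF_le 0)).symm
    rw [h2, ← hG0]
    exact integral_mono_ae integrable_condExp (hGint K 0) h1
  -- L¹ bound
  have hbddG : ∀ K : ℕ, ∀ n, eLpNorm ((-(G K)) n) 1 μ
      ≤ ENNReal.ofReal (∫ ω, X 0 ω ∂μ + 2 * K) := by
    intro K n
    show eLpNorm (-(G K n)) 1 μ ≤ _
    rw [eLpNorm_neg]
    have habs : ∀ ω, ‖G K n ω‖ ≤ G K n ω + 2 * K := by
      intro ω
      rw [Real.norm_eq_abs]
      cases abs_cases (G K n ω) with
      | inl h => have : (0:ℝ) ≤ K := Nat.cast_nonneg K; linarith [h.1]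
      | inr h => linarith [h.1, hGlb K n ω]
    calc eLpNorm (fun ω => G K n ω) 1 μ
        = ENNReal.ofReal (∫ ω, ‖G K n ω‖ ∂μ) := by
          rw [eLpNorm_one_eq_lintegral_enorm,
            ← ofReal_integral_norm_eq_lintegral_enorm (hGint K n)]
      _ ≤ ENNReal.ofReal (∫ ω, X 0 ω ∂μ + 2 * K) := by
          apply ENNReal.ofReal_le_ofReal
          have hmono : ∫ ω, ‖G K n ω‖ ∂μ ≤ ∫ ω, (G K n ω + 2 * K) ∂μ :=
            integral_mono_ae (hGint K n).norm ((hGint K n).add (integrable_const _))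
              (ae_of_all _ habs)
          rw [integral_add (hGint K n) (integrable_const _)] at hmono
          simp only [integral_const, measure_univ, probReal_univ, ENNReal.toReal_one, smul_eq_mul,
            one_mul] at hmono
          linarith [hGub_int K n]
  -- a.e. convergence of each G K
  have hconv : ∀ K : ℕ, ∀ᵐ ω ∂μ, ∃ l, Tendsto (fun n => G K n ω) atTop (nhds l) := by
    intro K
    have hsub := (hsuper K).neg.exists_ae_tendsto_of_bdd (hbddG K)
    filter_upwards [hsub] with ω hω
    obtain ⟨l, hl⟩ := hω
    refine ⟨-l, ?_⟩
    have : Tendsto (fun n => -((-(G K)) n ω)) atTop (nhds (-l)) := hl.neg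
    simpa using this
  have hall : ∀ᵐ ω ∂μ, ∀ K : ℕ, ∃ l, Tendsto (fun n => G K n ω) atTop (nhds l) :=
    ae_all_iff.2 hconv
  -- conclude pointwise
  filter_upwards [hall, ha_sum, hb_sum] with ω hGω haω hbω
  have habsum : Summable (fun t => a t ω + b t ω) := haω.add hbω
  obtain ⟨K, hK⟩ := exists_nat_ge (∑' t, (a t ω + b t ω))
  have hSK : ∀ t, S t ω ≤ (K : ℝ) := by
    intro t
    refine le_trans ?_ hK
    exact Summable.sum_le_tsum _ (fun i _ => by
      have := ha_nonneg i ω; have := hb_nonneg i ω; linarith) habsum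
  have hGW : ∀ t, G K t ω = W t ω := by
    intro t
    simp only [hGdef, hDdef]
    rw [Finset.sum_congr rfl (fun i _ => if_pos (hSK i)),
      Finset.sum_range_sub (fun u => W u ω)]
    ring
  obtain ⟨l, hl⟩ := hGω K
  have hWconv : ∃ L, Tendsto (fun t => W t ω) atTop (nhds L) :=
    ⟨l, hl.congr (fun t => hGW t)⟩
  have hfinal := rs_pointwise (fun t => X t ω) (fun t => a t ω) (fun t => b t ω)
    (fun t => c t ω) (fun t => hX_nonneg t ω) (fun t => ha_nonneg t ω)
    (fun t => hb_nonneg t ω) (fun t => hc_nonneg t ω) haω hbω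
    (by simpa only [hWdef, hPdef] using hWconv)
  exact hfinal
end

section
/- Linear convergence to a neighborhood with constant stepsize (Corollary 5.4): Suppose λ > 0, the aiming condition holds, and the stepsizes are constant, α_t = α for all t, with 0 < α·λ < 1. Then for every t ≥ 0, E[‖x_t − x*‖²] ≤ (1 − αλ)^{2t} E[‖x_0 − x*‖²] + α² B* / (1 − (1 − αλ)²). -/
open MeasureTheory Filter

section Helpers

variable {Ω : Type*} {mΩ : MeasurableSpace Ω} {μ : Measure Ω}

lemma helper_mul_int [IsFiniteMeasure μ] {f g : Ω → ℝ}
    (hf : AEStronglyMeasurable f μ) (hg : AEStronglyMeasurable g μ)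
    (hf2 : Integrable (fun ω => f ω ^ 2) μ) (hg2 : Integrable (fun ω => g ω ^ 2) μ) :
    Integrable (fun ω => f ω * g ω) μ := by
  refine Integrable.mono' ((hf2.add hg2).const_mul (2⁻¹ : ℝ)) (hf.mul hg) ?_
  refine ae_of_all _ fun ω => ?_
  simp only [Real.norm_eq_abs, abs_mul, Pi.add_apply]
  nlinarith [sq_nonneg (|f ω| - |g ω|), sq_abs (f ω), sq_abs (g ω),
    abs_nonneg (f ω), abs_nonneg (g ω)]

lemma helper_int_of_sq [IsFiniteMeasure μ] {f : Ω → ℝ}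
    (hf : AEStronglyMeasurable f μ) (hf2 : Integrable (fun ω => f ω ^ 2) μ) :
    Integrable f μ := by
  refine Integrable.mono' (((integrable_const (1 : ℝ)).add hf2).const_mul (2⁻¹ : ℝ)) hf ?_
  refine ae_of_all _ fun ω => ?_
  simp only [Real.norm_eq_abs, Pi.add_apply]
  nlinarith [sq_nonneg (|f ω| - 1), sq_abs (f ω), abs_nonneg (f ω)]

/-- The normalized vector `f / sqrt (E[f^2|m])` has second moment at most 1. -/
lemma helper_hat {m : MeasurableSpace Ω} (hm : m ≤ mΩ) [IsProbabilityMeasure μ]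
    {f : Ω → ℝ} (hfm : Measurable[mΩ] f)
    (hf2 : Integrable (fun ω => f ω ^ 2) μ)
    (hgpos : ∀ᵐ ω ∂μ, 0 < (μ[fun ω' => f ω' ^ 2|m]) ω) :
    Integrable (fun ω => (f ω / Real.sqrt ((μ[fun ω' => f ω' ^ 2|m]) ω)) ^ 2) μ ∧
      ∫ ω, (f ω / Real.sqrt ((μ[fun ω' => f ω' ^ 2|m]) ω)) ^ 2 ∂μ ≤ 1 := by
  set g : Ω → ℝ := μ[fun ω' => f ω' ^ 2|m] with hgdef
  have hg_sm : StronglyMeasurable[m] g := stronglyMeasurable_condExp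
  have hgM : Measurable[mΩ] g := hg_sm.measurable.mono hm le_rfl
  have hqM : Measurable[mΩ] (fun ω => f ω ^ 2) := hfm.pow_const 2
  have hq_nonneg : ∀ ω, (0:ℝ) ≤ f ω ^ 2 := fun ω => sq_nonneg _
  set G : ℕ → Ω → ℝ := fun N ω => max (g ω) ((N : ℝ) + 1)⁻¹ with hGdef
  have hG_pos : ∀ N ω, 0 < G N ω := fun N ω =>
    lt_of_lt_of_le (by positivity) (le_max_right _ _)
  have hG_smm : ∀ N, Measurable[m] (fun ω => (G N ω)⁻¹) := fun N =>
    (hg_sm.measurable.max measurable_const).inv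
  have hG_M : ∀ N, Measurable[mΩ] (fun ω => (G N ω)⁻¹) := fun N =>
    (hgM.max measurable_const).inv
  have hH_int : ∀ N, Integrable (fun ω => (G N ω)⁻¹ * f ω ^ 2) μ := by
    intro N
    refine Integrable.mono' (hf2.const_mul ((N : ℝ) + 1))
      ((hG_M N).aestronglyMeasurable.mul hqM.aestronglyMeasurable) (ae_of_all _ fun ω => ?_)
    have h1 : (G N ω)⁻¹ ≤ (N : ℝ) + 1 := by
      have := inv_anti₀ (by positivity : (0:ℝ) < ((N : ℝ) + 1)⁻¹)
        (le_max_right (g ω) ((N : ℝ) + 1)⁻¹)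
      simpa using this
    have h0 : (0:ℝ) ≤ (G N ω)⁻¹ := inv_nonneg.2 (hG_pos N ω).le
    rw [Real.norm_eq_abs, abs_mul, abs_of_nonneg h0, abs_of_nonneg (hq_nonneg ω)]
    exact mul_le_mul_of_nonneg_right h1 (hq_nonneg ω)
  have hpull : ∀ N, μ[fun ω => (G N ω)⁻¹ * f ω ^ 2|m]
      =ᵐ[μ] fun ω => (G N ω)⁻¹ * g ω := by
    intro N
    have h := condExp_mul_of_stronglyMeasurable_left (μ := μ) (hG_smm N).stronglyMeasurable
      (show Integrable ((fun ω => (G N ω)⁻¹) * fun ω => f ω ^ 2) μ from hH_int N) hf2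
    exact h
  have hIN : ∀ N, ∫ ω, (G N ω)⁻¹ * f ω ^ 2 ∂μ ≤ 1 := by
    intro N
    have h1 : ∫ ω, (G N ω)⁻¹ * f ω ^ 2 ∂μ = ∫ ω, (G N ω)⁻¹ * g ω ∂μ := by
      rw [← integral_condExp hm (f := fun ω => (G N ω)⁻¹ * f ω ^ 2)]
      exact integral_congr_ae (hpull N)
    rw [h1]
    have hint : Integrable (fun ω => (G N ω)⁻¹ * g ω) μ := integrable_condExp.congr (hpull N)
    calc ∫ ω, (G N ω)⁻¹ * g ω ∂μ ≤ ∫ _ω, (1:ℝ) ∂μ := by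
          refine integral_mono hint (integrable_const 1) fun ω => ?_
          calc (G N ω)⁻¹ * g ω ≤ (G N ω)⁻¹ * G N ω :=
                mul_le_mul_of_nonneg_left (le_max_left _ _) (inv_nonneg.2 (hG_pos N ω).le)
            _ = 1 := inv_mul_cancel₀ (hG_pos N ω).ne'
      _ = 1 := by simp
  have hlintN : ∀ N, ∫⁻ ω, ENNReal.ofReal ((G N ω)⁻¹ * f ω ^ 2) ∂μ ≤ 1 := by
    intro N
    rw [← ofReal_integral_eq_lintegral_ofReal (hH_int N)
      (ae_of_all _ fun ω => mul_nonneg (inv_nonneg.2 (hG_pos N ω).le) (hq_nonneg ω))]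
    exact ENNReal.ofReal_le_one.2 (hIN N)
  have hae : ∀ᵐ ω ∂μ, Tendsto (fun N => ENNReal.ofReal ((G N ω)⁻¹ * f ω ^ 2)) atTop
      (nhds (ENNReal.ofReal ((f ω / Real.sqrt (g ω)) ^ 2))) := by
    filter_upwards [hgpos] with ω hω
    have hev : ∀ᶠ N in atTop, ENNReal.ofReal ((G N ω)⁻¹ * f ω ^ 2)
        = ENNReal.ofReal ((f ω / Real.sqrt (g ω)) ^ 2) := by
      obtain ⟨N₀, hN₀⟩ := exists_nat_gt (g ω)⁻¹
      filter_upwards [eventually_ge_atTop N₀] with N hN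
      have hle : (g ω)⁻¹ ≤ (N : ℝ) + 1 := by
        have : (N₀ : ℝ) ≤ (N : ℝ) := by exact_mod_cast hN
        linarith [hN₀.le]
      have h2 : ((N : ℝ) + 1)⁻¹ ≤ g ω := by
        have := inv_anti₀ (inv_pos.2 hω) hle
        simpa using this
      have hGg : G N ω = g ω := max_eq_left h2
      have hsq : Real.sqrt (g ω) ^ 2 = g ω := Real.sq_sqrt hω.le
      rw [hGg, div_pow, hsq, div_eq_inv_mul]
    exact tendsto_const_nhds.congr' (hev.mono fun N h => h.symm)
  have hfatou : ∫⁻ ω, ENNReal.ofReal ((f ω / Real.sqrt (g ω)) ^ 2) ∂μ ≤ 1 := by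
    have hmeas : ∀ N, Measurable[mΩ] fun ω => ENNReal.ofReal ((G N ω)⁻¹ * f ω ^ 2) :=
      fun N => ENNReal.measurable_ofReal.comp ((hG_M N).mul hqM)
    have h1 : ∫⁻ ω, ENNReal.ofReal ((f ω / Real.sqrt (g ω)) ^ 2) ∂μ
        = ∫⁻ ω, liminf (fun N => ENNReal.ofReal ((G N ω)⁻¹ * f ω ^ 2)) atTop ∂μ := by
      refine lintegral_congr_ae ?_
      filter_upwards [hae] with ω hω
      exact hω.liminf_eq.symm
    rw [h1]
    refine le_trans (lintegral_liminf_le hmeas) ?_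
    refine le_trans (Filter.liminf_le_liminf (Filter.Eventually.of_forall hlintN)) ?_
    simp [Filter.liminf_const]
  have hK_meas : AEStronglyMeasurable[mΩ] (fun ω => (f ω / Real.sqrt (g ω)) ^ 2) μ :=
    ((hfm.div hgM.sqrt).pow_const 2).aestronglyMeasurable
  have hK_int : Integrable (fun ω => (f ω / Real.sqrt (g ω)) ^ 2) μ := by
    refine ⟨hK_meas, ?_⟩
    rw [hasFiniteIntegral_iff_norm]
    have heq : ∫⁻ ω, ENNReal.ofReal ‖(f ω / Real.sqrt (g ω)) ^ 2‖ ∂μ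
        = ∫⁻ ω, ENNReal.ofReal ((f ω / Real.sqrt (g ω)) ^ 2) ∂μ := by
      refine lintegral_congr fun ω => ?_
      rw [Real.norm_eq_abs, abs_of_nonneg (sq_nonneg _)]
    rw [heq]
    exact lt_of_le_of_lt hfatou ENNReal.one_lt_top
  refine ⟨hK_int, ?_⟩
  rw [integral_eq_lintegral_of_nonneg_ae (ae_of_all _ fun ω => sq_nonneg _) hK_meas]
  have := ENNReal.toReal_mono (by simp) hfatou
  simpa using this

/-- Single-coordinate one-step analysis. -/
lemma coord_step {m : MeasurableSpace Ω} (hm : m ≤ mΩ) [IsProbabilityMeasure μ]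
    (lam α xs : ℝ) (hα : 0 < α) (hlam : 0 < lam)
    (Dk Xk Xk' : Ω → ℝ)
    (hDmeas : Measurable[mΩ] Dk) (hD2 : Integrable (fun ω => Dk ω ^ 2) μ)
    (hgpos : ∀ᵐ ω ∂μ, 0 < (μ[fun ω' => Dk ω' ^ 2|m]) ω)
    (hXmeas : Measurable[m] Xk) (hXmem : MemLp Xk 2 μ) (hX'mem : MemLp Xk' 2 μ)
    (hiter : ∀ ω, Xk' ω = (1 - α * lam) * Xk ω
      - α * (Dk ω / Real.sqrt ((μ[fun ω' => Dk ω' ^ 2|m]) ω))) :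
    ∃ B R : ℝ, R ≤ 1 + 2 * lam * |xs| + lam ^ 2 * xs ^ 2
      ∧ (∫ ω, (Xk' ω - xs) ^ 2 ∂μ)
          = (1 - α * lam) ^ 2 * (∫ ω, (Xk ω - xs) ^ 2 ∂μ)
            - 2 * α * (1 - α * lam) * B + α ^ 2 * R
      ∧ Integrable (fun ω => (Xk ω - xs) *
          ((μ[Dk|m]) ω / Real.sqrt ((μ[fun ω' => Dk ω' ^ 2|m]) ω) + lam * Xk ω)) μ
      ∧ (∫ ω, (Xk ω - xs) *
          ((μ[Dk|m]) ω / Real.sqrt ((μ[fun ω' => Dk ω' ^ 2|m]) ω) + lam * Xk ω) ∂μ)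
          = B + lam * ∫ ω, (Xk ω - xs) ^ 2 ∂μ := by
  set g : Ω → ℝ := μ[fun ω' => Dk ω' ^ 2|m] with hgdef
  have hat := helper_hat hm hDmeas hD2 hgpos
  rw [← hgdef] at hat
  have hg_sm : StronglyMeasurable[m] g := stronglyMeasurable_condExp
  have hgM : Measurable[mΩ] g := hg_sm.measurable.mono hm le_rfl
  have hXM : Measurable[mΩ] Xk := hXmeas.mono hm le_rfl
  have hdh_meas : AEStronglyMeasurable[mΩ] (fun ω => Dk ω / Real.sqrt (g ω)) μ :=
    (hDmeas.div hgM.sqrt).aestronglyMeasurable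
  have hdh_mem : MemLp (fun ω => Dk ω / Real.sqrt (g ω)) 2 μ :=
    (memLp_two_iff_integrable_sq hdh_meas).2 hat.1
  have he_mem : MemLp (fun ω => Xk ω - xs) 2 μ := hXmem.sub (memLp_const xs)
  have he_sm : StronglyMeasurable[m] (fun ω => Xk ω - xs) :=
    (hXmeas.sub measurable_const).stronglyMeasurable
  have he_meas : AEStronglyMeasurable[mΩ] (fun ω => Xk ω - xs) μ := he_mem.aestronglyMeasurable
  have he2 : Integrable (fun ω => (Xk ω - xs) ^ 2) μ :=
    (memLp_two_iff_integrable_sq he_meas).1 he_mem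
  have hx2 : Integrable (fun ω => Xk ω ^ 2) μ :=
    (memLp_two_iff_integrable_sq hXmem.aestronglyMeasurable).1 hXmem
  have he_int : Integrable (fun ω => Xk ω - xs) μ := he_mem.integrable one_le_two
  have hdh_int : Integrable (fun ω => Dk ω / Real.sqrt (g ω)) μ :=
    hdh_mem.integrable one_le_two
  have hD_int : Integrable Dk μ := helper_int_of_sq hDmeas.aestronglyMeasurable hD2
  have hedh : Integrable (fun ω => (Xk ω - xs) * (Dk ω / Real.sqrt (g ω))) μ :=
    helper_mul_int he_meas hdh_meas he2 hat.1
  have hex : Integrable (fun ω => (Xk ω - xs) * Xk ω) μ :=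
    helper_mul_int he_meas hXmem.aestronglyMeasurable he2 hx2
  have hdhx : Integrable (fun ω => (Dk ω / Real.sqrt (g ω)) * Xk ω) μ :=
    helper_mul_int hdh_meas hXmem.aestronglyMeasurable hat.1 hx2
  -- sub-identities
  have hEX : ∫ ω, (Xk ω - xs) * Xk ω ∂μ
      = (∫ ω, (Xk ω - xs) ^ 2 ∂μ) + xs * ∫ ω, (Xk ω - xs) ∂μ := by
    have h1 : (fun ω => (Xk ω - xs) * Xk ω)
        = fun ω => (Xk ω - xs) ^ 2 + xs * (Xk ω - xs) := funext fun ω => by ring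
    have ia : Integrable (fun ω => xs * (Xk ω - xs)) μ := he_int.const_mul xs
    rw [h1, integral_add he2 ia, integral_const_mul]
  have hDX : ∫ ω, (Dk ω / Real.sqrt (g ω)) * Xk ω ∂μ
      = (∫ ω, (Xk ω - xs) * (Dk ω / Real.sqrt (g ω)) ∂μ)
        + xs * ∫ ω, Dk ω / Real.sqrt (g ω) ∂μ := by
    have h1 : (fun ω => (Dk ω / Real.sqrt (g ω)) * Xk ω)
        = fun ω => (Xk ω - xs) * (Dk ω / Real.sqrt (g ω))
            + xs * (Dk ω / Real.sqrt (g ω)) := funext fun ω => by ring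
    have ia : Integrable (fun ω => xs * (Dk ω / Real.sqrt (g ω))) μ := hdh_int.const_mul xs
    rw [h1, integral_add hedh ia, integral_const_mul]
  have hX2 : ∫ ω, Xk ω ^ 2 ∂μ
      = (∫ ω, (Xk ω - xs) ^ 2 ∂μ) + 2 * xs * (∫ ω, (Xk ω - xs) ∂μ) + xs ^ 2 := by
    have h1 : (fun ω => Xk ω ^ 2)
        = fun ω => ((Xk ω - xs) ^ 2 + 2 * xs * (Xk ω - xs)) + xs ^ 2 :=
      funext fun ω => by ring
    have ia : Integrable (fun ω => 2 * xs * (Xk ω - xs)) μ := he_int.const_mul (2 * xs)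
    have ib : Integrable (fun ω => (Xk ω - xs) ^ 2 + 2 * xs * (Xk ω - xs)) μ := he2.add ia
    rw [h1, integral_add ib (integrable_const _),
      integral_add he2 ia, integral_const_mul, integral_const]
    simp
  -- bound on |∫ dh|
  have hId : |∫ ω, Dk ω / Real.sqrt (g ω) ∂μ| ≤ 1 := by
    have h1 : |∫ ω, Dk ω / Real.sqrt (g ω) ∂μ| ≤ ∫ ω, |Dk ω / Real.sqrt (g ω)| ∂μ := by
      have h0 := norm_integral_le_integral_norm (μ := μ) (fun ω => Dk ω / Real.sqrt (g ω))
      simpa only [Real.norm_eq_abs] using h0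
    have h2 : ∫ ω, |Dk ω / Real.sqrt (g ω)| ∂μ
        ≤ ∫ ω, 2⁻¹ * ((Dk ω / Real.sqrt (g ω)) ^ 2 + 1) ∂μ := by
      refine integral_mono hdh_int.abs ((hat.1.add (integrable_const 1)).const_mul 2⁻¹)
        fun ω => ?_
      nlinarith [sq_nonneg (|Dk ω / Real.sqrt (g ω)| - 1), sq_abs (Dk ω / Real.sqrt (g ω)),
        abs_nonneg (Dk ω / Real.sqrt (g ω))]
    have h3 : ∫ ω, 2⁻¹ * ((Dk ω / Real.sqrt (g ω)) ^ 2 + 1) ∂μ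
        = 2⁻¹ * ((∫ ω, (Dk ω / Real.sqrt (g ω)) ^ 2 ∂μ) + 1) := by
      rw [integral_const_mul, integral_add hat.1 (integrable_const 1)]
      simp
    have := hat.2
    calc |∫ ω, Dk ω / Real.sqrt (g ω) ∂μ| ≤ _ := h1
      _ ≤ _ := h2
      _ = _ := h3
      _ ≤ 1 := by linarith
  -- pull-out identities
  have hpull2 : μ[(fun ω => Dk ω / Real.sqrt (g ω))|m]
      =ᵐ[μ] fun ω => (μ[Dk|m]) ω / Real.sqrt (g ω) := by
    have hsm : StronglyMeasurable[m] (fun ω => (Real.sqrt (g ω))⁻¹) :=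
      (hg_sm.measurable.sqrt.inv).stronglyMeasurable
    have heq : (fun ω => Dk ω / Real.sqrt (g ω))
        = (fun ω => (Real.sqrt (g ω))⁻¹) * Dk := funext fun ω => div_eq_inv_mul _ _
    have h := condExp_mul_of_stronglyMeasurable_left (μ := μ) hsm (heq ▸ hdh_int) hD_int
    rw [← heq] at h
    refine h.trans (ae_of_all _ fun ω => ?_)
    simp [div_eq_inv_mul]
  have hpull1 : μ[(fun ω => (Xk ω - xs) * (Dk ω / Real.sqrt (g ω)))|m]
      =ᵐ[μ] fun ω => (Xk ω - xs)
        * ((μ[(fun ω => Dk ω / Real.sqrt (g ω))|m]) ω) := by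
    have h := condExp_mul_of_stronglyMeasurable_left (μ := μ) he_sm
      (show Integrable ((fun ω => Xk ω - xs) * fun ω => Dk ω / Real.sqrt (g ω)) μ from hedh)
      hdh_int
    exact h
  have haeq : (fun ω => (Xk ω - xs) * ((μ[Dk|m]) ω / Real.sqrt (g ω)))
      =ᵐ[μ] μ[(fun ω => (Xk ω - xs) * (Dk ω / Real.sqrt (g ω)))|m] := by
    refine Filter.EventuallyEq.symm (hpull1.trans ?_)
    filter_upwards [hpull2] with ω hω
    rw [hω]
  have hED_int : Integrable (fun ω => (Xk ω - xs) * ((μ[Dk|m]) ω / Real.sqrt (g ω))) μ :=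
    integrable_condExp.congr haeq.symm
  have hED_eq : ∫ ω, (Xk ω - xs) * ((μ[Dk|m]) ω / Real.sqrt (g ω)) ∂μ
      = ∫ ω, (Xk ω - xs) * (Dk ω / Real.sqrt (g ω)) ∂μ := by
    rw [integral_congr_ae haeq, integral_condExp hm]
  refine ⟨(∫ ω, (Xk ω - xs) * (Dk ω / Real.sqrt (g ω)) ∂μ)
      + lam * xs * ∫ ω, (Xk ω - xs) ∂μ,
    (∫ ω, (Dk ω / Real.sqrt (g ω)) ^ 2 ∂μ)
      + 2 * lam * (xs * ∫ ω, Dk ω / Real.sqrt (g ω) ∂μ) + lam ^ 2 * xs ^ 2,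
    ?_, ?_, ?_, ?_⟩
  · -- bound on R
    have h1 : xs * ∫ ω, Dk ω / Real.sqrt (g ω) ∂μ ≤ |xs| := by
      calc xs * ∫ ω, Dk ω / Real.sqrt (g ω) ∂μ
          ≤ |xs * ∫ ω, Dk ω / Real.sqrt (g ω) ∂μ| := le_abs_self _
        _ = |xs| * |∫ ω, Dk ω / Real.sqrt (g ω) ∂μ| := abs_mul _ _
        _ ≤ |xs| * 1 := mul_le_mul_of_nonneg_left hId (abs_nonneg _)
        _ = |xs| := mul_one _
    nlinarith [hat.2, hlam.le, mul_le_mul_of_nonneg_left h1 hlam.le]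
  · -- the main identity
    have hfun : (fun ω => (Xk' ω - xs) ^ 2)
        = fun ω => (Xk ω - xs) ^ 2 - (2 * α) * ((Xk ω - xs) * (Dk ω / Real.sqrt (g ω)))
            - (2 * α * lam) * ((Xk ω - xs) * Xk ω)
            + α ^ 2 * ((Dk ω / Real.sqrt (g ω)) ^ 2)
            + (2 * α ^ 2 * lam) * ((Dk ω / Real.sqrt (g ω)) * Xk ω)
            + (α ^ 2 * lam ^ 2) * (Xk ω ^ 2) := by
      funext ω
      rw [hiter ω]
      ring
    have i1 : Integrable (fun ω => (Xk ω - xs) ^ 2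
        - (2 * α) * ((Xk ω - xs) * (Dk ω / Real.sqrt (g ω)))) μ :=
      he2.sub (hedh.const_mul _)
    have i2 : Integrable (fun ω => (Xk ω - xs) ^ 2
        - (2 * α) * ((Xk ω - xs) * (Dk ω / Real.sqrt (g ω)))
        - (2 * α * lam) * ((Xk ω - xs) * Xk ω)) μ := i1.sub (hex.const_mul _)
    have i3 : Integrable (fun ω => (Xk ω - xs) ^ 2
        - (2 * α) * ((Xk ω - xs) * (Dk ω / Real.sqrt (g ω)))
        - (2 * α * lam) * ((Xk ω - xs) * Xk ω)
        + α ^ 2 * ((Dk ω / Real.sqrt (g ω)) ^ 2)) μ := i2.add (hat.1.const_mul _)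
    have i4 : Integrable (fun ω => (Xk ω - xs) ^ 2
        - (2 * α) * ((Xk ω - xs) * (Dk ω / Real.sqrt (g ω)))
        - (2 * α * lam) * ((Xk ω - xs) * Xk ω)
        + α ^ 2 * ((Dk ω / Real.sqrt (g ω)) ^ 2)
        + (2 * α ^ 2 * lam) * ((Dk ω / Real.sqrt (g ω)) * Xk ω)) μ :=
      i3.add (hdhx.const_mul _)
    rw [hfun, integral_add i4 (hx2.const_mul _), integral_add i3 (hdhx.const_mul _),
      integral_add i2 (hat.1.const_mul _), integral_sub i1 (hex.const_mul _),
      integral_sub he2 (hedh.const_mul _), integral_const_mul, integral_const_mul,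
      integral_const_mul, integral_const_mul, integral_const_mul, hEX, hDX, hX2]
    ring
  · -- integrability of the aiming integrand
    have h := hED_int.add (hex.const_mul lam)
    refine h.congr (ae_of_all _ fun ω => ?_)
    simp only [Pi.add_apply]
    ring
  · -- value of the aiming integral
    have hfun2 : (fun ω => (Xk ω - xs)
        * ((μ[Dk|m]) ω / Real.sqrt (g ω) + lam * Xk ω))
        = fun ω => (Xk ω - xs) * ((μ[Dk|m]) ω / Real.sqrt (g ω))
            + lam * ((Xk ω - xs) * Xk ω) := funext fun ω => by ring
    rw [hfun2, integral_add hED_int (hex.const_mul lam), integral_const_mul,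
      hED_eq, hEX]
    ring

/-- One-step contraction in expectation. -/
lemma one_step {m : MeasurableSpace Ω} (hm : m ≤ mΩ) [IsProbabilityMeasure μ]
    {n : ℕ} (lam α : ℝ) (hα : 0 < α) (hlam : 0 < lam) (hαlam : α * lam < 1)
    (xstar : Fin n → ℝ) (D X X' : Ω → Fin n → ℝ)
    (hD_meas : ∀ k, Measurable[mΩ] fun ω => D ω k)
    (hD2 : ∀ k, Integrable (fun ω => (D ω k) ^ 2) μ)
    (hgpos : ∀ k, ∀ᵐ ω ∂μ, 0 < (μ[fun ω' => (D ω' k) ^ 2|m]) ω)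
    (hX_meas : ∀ k, Measurable[m] fun ω => X ω k)
    (hX_mem : ∀ k, MemLp (fun ω => X ω k) 2 μ)
    (hX'_mem : ∀ k, MemLp (fun ω => X' ω k) 2 μ)
    (hiter : ∀ ω k, X' ω k = (1 - α * lam) * X ω k
      - α * (D ω k / Real.sqrt ((μ[fun ω' => (D ω' k) ^ 2|m]) ω)))
    (haim : ∀ᵐ ω ∂μ, (∑ k, (X ω k - xstar k) *
        ((μ[fun ω' => D ω' k|m]) ω / Real.sqrt ((μ[fun ω' => (D ω' k) ^ 2|m]) ω)
          + lam * X ω k)) ≥ lam * ∑ k, (X ω k - xstar k) ^ 2) :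
    ∫ ω, ∑ k, (X' ω k - xstar k) ^ 2 ∂μ
      ≤ (1 - α * lam) ^ 2 * ∫ ω, ∑ k, (X ω k - xstar k) ^ 2 ∂μ
        + α ^ 2 * ((n : ℝ) + lam ^ 2 * (∑ k, (xstar k) ^ 2) + 2 * lam * ∑ k, |xstar k|) := by
  choose B R hR hIdent hInt hIEq using fun k =>
    coord_step hm lam α (xstar k) hα hlam (fun ω => D ω k) (fun ω => X ω k)
      (fun ω => X' ω k) (hD_meas k) (hD2 k) (hgpos k) (hX_meas k) (hX_mem k) (hX'_mem k)
      (fun ω => hiter ω k)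
  have he2 : ∀ k, Integrable (fun ω => (X ω k - xstar k) ^ 2) μ := fun k =>
    (memLp_two_iff_integrable_sq ((hX_mem k).sub (memLp_const _)).aestronglyMeasurable).1
      ((hX_mem k).sub (memLp_const _))
  have he2' : ∀ k, Integrable (fun ω => (X' ω k - xstar k) ^ 2) μ := fun k =>
    (memLp_two_iff_integrable_sq ((hX'_mem k).sub (memLp_const _)).aestronglyMeasurable).1
      ((hX'_mem k).sub (memLp_const _))
  have hsum' : ∫ ω, ∑ k, (X' ω k - xstar k) ^ 2 ∂μ
      = ∑ k, ∫ ω, (X' ω k - xstar k) ^ 2 ∂μ :=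
    integral_finset_sum _ fun k _ => he2' k
  have hsum : ∫ ω, ∑ k, (X ω k - xstar k) ^ 2 ∂μ
      = ∑ k, ∫ ω, (X ω k - xstar k) ^ 2 ∂μ :=
    integral_finset_sum _ fun k _ => he2 k
  -- integrate the aiming condition
  have hBnn : 0 ≤ ∑ k, B k := by
    have hLint : Integrable (fun ω => ∑ k, (X ω k - xstar k) *
        ((μ[fun ω' => D ω' k|m]) ω / Real.sqrt ((μ[fun ω' => (D ω' k) ^ 2|m]) ω)
          + lam * X ω k)) μ := integrable_finset_sum _ fun k _ => hInt k
    have hRint : Integrable (fun ω => lam * ∑ k, (X ω k - xstar k) ^ 2) μ :=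
      (integrable_finset_sum _ fun k _ => he2 k).const_mul lam
    have hmono := integral_mono_ae hRint hLint (haim.mono fun ω h => h)
    have hL : ∫ ω, ∑ k, (X ω k - xstar k) *
        ((μ[fun ω' => D ω' k|m]) ω / Real.sqrt ((μ[fun ω' => (D ω' k) ^ 2|m]) ω)
          + lam * X ω k) ∂μ
        = ∑ k, (B k + lam * ∫ ω, (X ω k - xstar k) ^ 2 ∂μ) := by
      rw [integral_finset_sum _ fun k _ => hInt k]
      exact Finset.sum_congr rfl fun k _ => hIEq k
    have hRe : ∫ ω, lam * ∑ k, (X ω k - xstar k) ^ 2 ∂μ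
        = lam * ∑ k, ∫ ω, (X ω k - xstar k) ^ 2 ∂μ := by
      rw [integral_const_mul, integral_finset_sum _ fun k _ => he2 k]
    rw [hL, hRe, Finset.sum_add_distrib, ← Finset.mul_sum] at hmono
    linarith
  have hRsum : ∑ k, R k ≤ (n : ℝ) + lam ^ 2 * (∑ k, (xstar k) ^ 2)
      + 2 * lam * ∑ k, |xstar k| := by
    calc ∑ k, R k ≤ ∑ k, (1 + 2 * lam * |xstar k| + lam ^ 2 * (xstar k) ^ 2) :=
          Finset.sum_le_sum fun k _ => hR k
      _ = (n : ℝ) + lam ^ 2 * (∑ k, (xstar k) ^ 2) + 2 * lam * ∑ k, |xstar k| := by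
          rw [Finset.sum_add_distrib, Finset.sum_add_distrib, ← Finset.mul_sum,
            ← Finset.mul_sum]
          simp [Finset.card_univ]
          ring
  rw [hsum', hsum]
  have hident : ∑ k, ∫ ω, (X' ω k - xstar k) ^ 2 ∂μ
      = (1 - α * lam) ^ 2 * ∑ k, ∫ ω, (X ω k - xstar k) ^ 2 ∂μ
        - 2 * α * (1 - α * lam) * ∑ k, B k + α ^ 2 * ∑ k, R k := by
    rw [Finset.mul_sum, Finset.mul_sum, Finset.mul_sum, ← Finset.sum_sub_distrib,
      ← Finset.sum_add_distrib]
    exact Finset.sum_congr rfl fun k _ => hIdent k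
  rw [hident]
  have h1 : 0 < 1 - α * lam := by linarith
  nlinarith [mul_nonneg (mul_nonneg hα.le h1.le) hBnn, sq_nonneg α,
    mul_le_mul_of_nonneg_left hRsum (sq_nonneg α)]

end Helpers

/-- Linear convergence to a neighborhood with constant stepsize (Corollary 5.4). -/
theorem bcosw_constant_stepsize_linear_convergence
    {Ω : Type*} {mΩ : MeasurableSpace Ω} {μ : Measure Ω} [IsProbabilityMeasure μ]
    (F : ℕ → MeasurableSpace Ω) (hF_le : ∀ t, F t ≤ mΩ) (hF_mono : Monotone F)
    {n : ℕ} (hn : 1 ≤ n) (lam : ℝ) (hlam : 0 < lam)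
    (xstar : Fin n → ℝ) (α : ℝ) (hα_pos : 0 < α * lam) (hα_lt : α * lam < 1)
    (d : ℕ → Ω → Fin n → ℝ)
    (hd_meas : ∀ t k, Measurable[F (t + 1)] fun ω => d t ω k)
    (hd_sq_int : ∀ t k, Integrable (fun ω => (d t ω k) ^ 2) μ)
    (hd2_pos : ∀ t k, ∀ᵐ ω ∂μ, 0 < (μ[fun ω' => (d t ω' k) ^ 2|F t]) ω)
    (x : ℕ → Ω → Fin n → ℝ)
    (hx0_meas : ∀ k, Measurable[F 0] fun ω => x 0 ω k)
    (hx0_sq_int : ∀ k, Integrable (fun ω => (x 0 ω k) ^ 2) μ)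
    (hiter : ∀ t ω k, x (t + 1) ω k
      = (1 - α * lam) * x t ω k
        - α * (d t ω k / Real.sqrt ((μ[fun ω' => (d t ω' k) ^ 2|F t]) ω)))
    (haiming : ∀ t, ∀ᵐ ω ∂μ,
      (∑ k, (x t ω k - xstar k) *
          ((μ[fun ω' => d t ω' k|F t]) ω
              / Real.sqrt ((μ[fun ω' => (d t ω' k) ^ 2|F t]) ω)
            + lam * x t ω k))
        ≥ lam * ∑ k, (x t ω k - xstar k) ^ 2)
    (Bstar : ℝ)
    (hBstar : Bstar = (n : ℝ) + lam ^ 2 * (∑ k, (xstar k) ^ 2)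
        + 2 * lam * ∑ k, |xstar k|) :
    ∀ t : ℕ,
      (∫ ω, ∑ k, (x t ω k - xstar k) ^ 2 ∂μ)
        ≤ (1 - α * lam) ^ (2 * t) * (∫ ω, ∑ k, (x 0 ω k - xstar k) ^ 2 ∂μ)
          + α ^ 2 * Bstar / (1 - (1 - α * lam) ^ 2) := by
  have hα : 0 < α := by nlinarith
  have h1 : 0 < 1 - α * lam := by linarith
  -- invariant: measurability and L² bound
  have inv : ∀ t, (∀ k, Measurable[F t] fun ω => x t ω k)
      ∧ (∀ k, MemLp (fun ω => x t ω k) 2 μ) := by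
    intro t
    induction t with
    | zero =>
      exact ⟨hx0_meas, fun k =>
        (memLp_two_iff_integrable_sq
          ((hx0_meas k).mono (hF_le 0) le_rfl).aestronglyMeasurable).2 (hx0_sq_int k)⟩
    | succ t ih =>
      constructor
      · intro k
        have hrew : (fun ω => x (t + 1) ω k)
            = fun ω => (1 - α * lam) * x t ω k
              - α * (d t ω k / Real.sqrt ((μ[fun ω' => (d t ω' k) ^ 2|F t]) ω)) :=
          funext fun ω => hiter t ω k
        rw [hrew]
        have hxm : Measurable[F (t + 1)] fun ω => x t ω k :=
          (ih.1 k).mono (hF_mono (Nat.le_succ t)) le_rfl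
        have hgm : Measurable[F (t + 1)] (μ[fun ω' => (d t ω' k) ^ 2|F t]) :=
          (stronglyMeasurable_condExp.measurable).mono (hF_mono (Nat.le_succ t)) le_rfl
        exact (measurable_const.mul hxm).sub
          (measurable_const.mul ((hd_meas t k).div hgm.sqrt))
      · intro k
        have hat := helper_hat (hF_le t) ((hd_meas t k).mono (hF_le (t + 1)) le_rfl)
          (hd_sq_int t k) (hd2_pos t k)
        have hgM : Measurable[mΩ] (μ[fun ω' => (d t ω' k) ^ 2|F t]) :=
          (stronglyMeasurable_condExp.measurable).mono (hF_le t) le_rfl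
        have hdh_mem : MemLp (fun ω => d t ω k
            / Real.sqrt ((μ[fun ω' => (d t ω' k) ^ 2|F t]) ω)) 2 μ :=
          (memLp_two_iff_integrable_sq
            (((hd_meas t k).mono (hF_le (t + 1)) le_rfl).div
              hgM.sqrt).aestronglyMeasurable).2 hat.1
        have hrew : (fun ω => x (t + 1) ω k)
            = fun ω => (1 - α * lam) * x t ω k
              - α * (d t ω k / Real.sqrt ((μ[fun ω' => (d t ω' k) ^ 2|F t]) ω)) :=
          funext fun ω => hiter t ω k
        rw [hrew]
        exact ((ih.2 k).const_mul (1 - α * lam)).sub (hdh_mem.const_mul α)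
  -- one-step recursion
  have step : ∀ t, ∫ ω, ∑ k, (x (t + 1) ω k - xstar k) ^ 2 ∂μ
      ≤ (1 - α * lam) ^ 2 * ∫ ω, ∑ k, (x t ω k - xstar k) ^ 2 ∂μ + α ^ 2 * Bstar := by
    intro t
    rw [hBstar]
    exact one_step (hF_le t) lam α hα hlam hα_lt xstar (d t) (x t) (x (t + 1))
      (fun k => (hd_meas t k).mono (hF_le (t + 1)) le_rfl) (hd_sq_int t) (hd2_pos t)
      ((inv t).1) ((inv t).2) ((inv (t + 1)).2) (fun ω k => hiter t ω k) (haiming t)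
  -- geometric recursion
  have hr1 : (1 - α * lam) ^ 2 < 1 := by nlinarith
  have hr0 : (0:ℝ) ≤ (1 - α * lam) ^ 2 := sq_nonneg _
  have hrpos : 0 < 1 - (1 - α * lam) ^ 2 := by linarith
  have hBnn : 0 ≤ Bstar := by
    rw [hBstar]
    have h2 : (0:ℝ) ≤ ∑ k, (xstar k) ^ 2 := Finset.sum_nonneg fun k _ => sq_nonneg _
    have h3 : (0:ℝ) ≤ ∑ k, |xstar k| := Finset.sum_nonneg fun k _ => abs_nonneg _
    positivity
  have hKnn : 0 ≤ α ^ 2 * Bstar := mul_nonneg (sq_nonneg _) hBnn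
  intro t
  induction t with
  | zero =>
    simp only [Nat.mul_zero, pow_zero, one_mul]
    have : 0 ≤ α ^ 2 * Bstar / (1 - (1 - α * lam) ^ 2) := div_nonneg hKnn hrpos.le
    linarith
  | succ t ih =>
    have h2 := step t
    have h3 := mul_le_mul_of_nonneg_left ih hr0
    have hpow : (1 - α * lam) ^ (2 * (t + 1))
        = (1 - α * lam) ^ 2 * (1 - α * lam) ^ (2 * t) := by
      rw [← pow_add]
      ring_nf
    have hfield : (1 - α * lam) ^ 2 * (α ^ 2 * Bstar / (1 - (1 - α * lam) ^ 2))
        + α ^ 2 * Bstar = α ^ 2 * Bstar / (1 - (1 - α * lam) ^ 2) := by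
      field_simp
      ring
    calc ∫ ω, ∑ k, (x (t + 1) ω k - xstar k) ^ 2 ∂μ
        ≤ (1 - α * lam) ^ 2 * ∫ ω, ∑ k, (x t ω k - xstar k) ^ 2 ∂μ + α ^ 2 * Bstar := h2
      _ ≤ (1 - α * lam) ^ 2 * ((1 - α * lam) ^ (2 * t)
            * (∫ ω, ∑ k, (x 0 ω k - xstar k) ^ 2 ∂μ)
            + α ^ 2 * Bstar / (1 - (1 - α * lam) ^ 2)) + α ^ 2 * Bstar := by linarith
      _ = (1 - α * lam) ^ (2 * (t + 1)) * (∫ ω, ∑ k, (x 0 ω k - xstar k) ^ 2 ∂μ)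
            + α ^ 2 * Bstar / (1 - (1 - α * lam) ^ 2) := by
          rw [hpow]
          linear_combination hfield
end

section
/- Chung's lemma (Lemma 5.6): Let (X_t)_{t≥1} be a sequence of real numbers such that X_{t+1} ≤ (1 − a/t) X_t + b/t^{p+1} for all t ≥ 1, where a > p > 0 and b > 0. Then there exists a constant C ≥ 0 such that for all t ≥ 1, X_t ≤ (b/(a − p)) · 1/t^p + C · (1/t^{p+1} + 1/t^a). -/
open Filter

private lemma chung_bern (x r : ℝ) (hx : 0 ≤ x) (hr : 0 ≤ r) :
    1 - r * x ≤ (1 + x) ^ (-r) := by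
  have h1 : (0:ℝ) < 1 + x := by linarith
  rw [Real.rpow_def_of_pos h1, mul_comm (Real.log (1 + x)) (-r)]
  have hlog : Real.log (1 + x) ≤ x := by
    have := Real.log_le_sub_one_of_pos h1; linarith
  have h2 : r * Real.log (1 + x) ≤ r * x := mul_le_mul_of_nonneg_left hlog hr
  have h3 := Real.add_one_le_exp (-r * Real.log (1 + x))
  linarith

private lemma chung_step (t r s : ℝ) (ht : 1 ≤ t) (hr : 0 < r) (hrs : r ≤ s) :
    (1 - s / t) * (1 / t ^ r) ≤ 1 / (t + 1) ^ r := by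
  have ht0 : (0:ℝ) < t := lt_of_lt_of_le one_pos ht
  have h1 : 1 - s / t ≤ (1 + 1 / t) ^ (-r) := by
    have hb := chung_bern (1 / t) r (by positivity) hr.le
    have hst : r / t ≤ s / t := by gcongr
    rw [mul_one_div] at hb
    linarith
  have h2 : (1 - s / t) * (1 / t ^ r) ≤ (1 + 1 / t) ^ (-r) * (1 / t ^ r) :=
    mul_le_mul_of_nonneg_right h1 (by positivity)
  refine h2.trans (le_of_eq ?_)
  rw [show (1 / t ^ r : ℝ) = t ^ (-r) by rw [Real.rpow_neg ht0.le, one_div],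
    ← Real.mul_rpow (by positivity) ht0.le,
    show (1 + 1 / t) * t = t + 1 by field_simp,
    Real.rpow_neg (by positivity), one_div]

/-- Chung's lemma (Lemma 5.6). -/
theorem chung_lemma
    (X : ℕ → ℝ) (a b p : ℝ) (hap : a > p) (hp : p > 0) (hb : b > 0)
    (hrec : ∀ t : ℕ, 1 ≤ t →
      X (t + 1) ≤ (1 - a / (t : ℝ)) * X t + b / (t : ℝ) ^ (p + 1)) :
    ∃ C : ℝ, 0 ≤ C ∧ ∀ t : ℕ, 1 ≤ t →
      X t ≤ b / (a - p) * (1 / (t : ℝ) ^ p)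
        + C * (1 / (t : ℝ) ^ (p + 1) + 1 / (t : ℝ) ^ a) := by
  set K : ℝ := b / (a - p) with hKdef
  have hKpos : 0 < K := div_pos hb (sub_pos.mpr hap)
  set q : ℝ := min a (p + 1) with hqdef
  have ha0 : 0 < a := lt_trans hp hap
  have hq0 : 0 < q := lt_min ha0 (by linarith)
  have hqa : q ≤ a := min_le_left _ _
  have hqp1 : q ≤ p + 1 := min_le_right _ _
  set T0 : ℕ := ⌈a⌉₊ + 1 with hT0def
  have hT01 : 1 ≤ T0 := Nat.le_add_left 1 _
  have hT0a : a ≤ (T0 : ℝ) := by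
    refine (Nat.le_ceil a).trans ?_
    push_cast [hT0def]; linarith
  have hne : (Finset.Icc 1 T0).Nonempty := ⟨1, by simp [hT01]⟩
  set C : ℝ := max 0 ((Finset.Icc 1 T0).sup' hne
    fun t => (X t - K / (t : ℝ) ^ p) * (t : ℝ) ^ q) with hCdef
  have hC0 : 0 ≤ C := le_max_left _ _
  -- base case: holds for 1 ≤ t ≤ T0
  have hbase : ∀ t : ℕ, 1 ≤ t → t ≤ T0 →
      X t ≤ K / (t : ℝ) ^ p + C / (t : ℝ) ^ q := by
    intro t h1 h2
    have ht0 : (0:ℝ) < (t : ℝ) := by exact_mod_cast h1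
    have htq : (0:ℝ) < (t : ℝ) ^ q := Real.rpow_pos_of_pos ht0 q
    have hmem : t ∈ Finset.Icc 1 T0 := Finset.mem_Icc.mpr ⟨h1, h2⟩
    have hle : (X t - K / (t : ℝ) ^ p) * (t : ℝ) ^ q ≤ C :=
      le_trans (Finset.le_sup'
        (fun s : ℕ => (X s - K / (s : ℝ) ^ p) * (s : ℝ) ^ q) hmem) (le_max_right _ _)
    have := (le_div_iff₀ htq).mpr hle
    linarith [this]
  -- inductive case: holds for t ≥ T0
  have hmain : ∀ t : ℕ, T0 ≤ t → X t ≤ K / (t : ℝ) ^ p + C / (t : ℝ) ^ q := by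
    intro t ht
    induction t, ht using Nat.le_induction with
    | base => exact hbase T0 hT01 le_rfl
    | succ t ht ih =>
      have h1t : 1 ≤ t := le_trans hT01 ht
      have htR : (1:ℝ) ≤ (t : ℝ) := by exact_mod_cast h1t
      have ht0 : (0:ℝ) < (t : ℝ) := by linarith
      have hat : a ≤ (t : ℝ) := hT0a.trans (by exact_mod_cast ht)
      have hnn : 0 ≤ 1 - a / (t : ℝ) := by
        have : a / (t : ℝ) ≤ 1 := (div_le_one ht0).mpr hat
        linarith
      have hbK : K * (a - p) = b := div_mul_cancel₀ b (ne_of_gt (sub_pos.mpr hap))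
      have hpow : (t : ℝ) ^ (p + 1) = (t : ℝ) ^ p * (t : ℝ) := by
        rw [Real.rpow_add ht0, Real.rpow_one]
      have hrec' := hrec t h1t
      have hih : (1 - a / (t : ℝ)) * X t ≤
          (1 - a / (t : ℝ)) * (K / (t : ℝ) ^ p + C / (t : ℝ) ^ q) :=
        mul_le_mul_of_nonneg_left ih hnn
      have key1 : (1 - a / (t : ℝ)) * (K / (t : ℝ) ^ p) + b / (t : ℝ) ^ (p + 1)
          ≤ K * (1 / ((t : ℝ) + 1) ^ p) := by
        have hpne : ((t : ℝ) ^ p) ≠ 0 := ne_of_gt (Real.rpow_pos_of_pos ht0 p)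
        have e : (1 - a / (t : ℝ)) * (K / (t : ℝ) ^ p) + b / (t : ℝ) ^ (p + 1)
            = K * ((1 - p / (t : ℝ)) * (1 / (t : ℝ) ^ p)) := by
          rw [hpow, ← hbK]
          field_simp
          ring
        rw [e]
        exact mul_le_mul_of_nonneg_left (chung_step (t : ℝ) p p htR hp le_rfl) hKpos.le
      have key2 : (1 - a / (t : ℝ)) * (C / (t : ℝ) ^ q) ≤ C * (1 / ((t : ℝ) + 1) ^ q) := by
        have e : (1 - a / (t : ℝ)) * (C / (t : ℝ) ^ q)
            = C * ((1 - a / (t : ℝ)) * (1 / (t : ℝ) ^ q)) := by ring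
        rw [e]
        exact mul_le_mul_of_nonneg_left (chung_step (t : ℝ) q a htR hq0 hqa) hC0
      have : X (t + 1) ≤ K * (1 / ((t : ℝ) + 1) ^ p) + C * (1 / ((t : ℝ) + 1) ^ q) := by
        calc X (t + 1) ≤ (1 - a / (t : ℝ)) * X t + b / (t : ℝ) ^ (p + 1) := hrec'
          _ ≤ (1 - a / (t : ℝ)) * (K / (t : ℝ) ^ p + C / (t : ℝ) ^ q)
              + b / (t : ℝ) ^ (p + 1) := by linarith
          _ = ((1 - a / (t : ℝ)) * (K / (t : ℝ) ^ p) + b / (t : ℝ) ^ (p + 1))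
              + (1 - a / (t : ℝ)) * (C / (t : ℝ) ^ q) := by ring
          _ ≤ K * (1 / ((t : ℝ) + 1) ^ p) + C * (1 / ((t : ℝ) + 1) ^ q) := by linarith
      push_cast
      rw [mul_one_div, mul_one_div] at this
      exact this
  refine ⟨C, hC0, fun t h1 => ?_⟩
  have hbound : X t ≤ K / (t : ℝ) ^ p + C / (t : ℝ) ^ q := by
    rcases le_or_gt t T0 with h | h
    · exact hbase t h1 h
    · exact hmain t h.le
  have ht0 : (0:ℝ) < (t : ℝ) := by exact_mod_cast h1
  have hfin : C / (t : ℝ) ^ q ≤ C * (1 / (t : ℝ) ^ (p + 1) + 1 / (t : ℝ) ^ a) := by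
    rw [div_eq_mul_one_div]
    refine mul_le_mul_of_nonneg_left ?_ hC0
    rcases le_total a (p + 1) with h | h
    · have hq : q = a := min_eq_left h
      rw [hq]
      have : (0:ℝ) ≤ 1 / (t : ℝ) ^ (p + 1) := by positivity
      linarith
    · have hq : q = p + 1 := min_eq_right h
      rw [hq]
      have : (0:ℝ) ≤ 1 / (t : ℝ) ^ a := by positivity
      linarith
  have heq : K / (t : ℝ) ^ p = b / (a - p) * (1 / (t : ℝ) ^ p) := by
    rw [hKdef, mul_one_div]
  linarith [hbound, hfin, heq.le, heq.ge]
end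

section
/- O(1/t^p) rate for conceptual BCOSW (Theorem 5.7): Suppose λ > 0, the aiming condition holds, and the stepsizes are α_t = α/(t+1)^p with p ∈ (1/2, 1) and a constant α satisfying 0 < α·λ < 1. Then limsup_{t→∞} (t+1)^p · E[‖x_t − x*‖²] ≤ α(λ² E[‖x_0 − x*‖²] + (1 + K_p) B*) / (2λ), where K_p := Σ_{t=1}^∞ 1/(t+1)^{2p} (which is finite for p ∈ (1/2,1)). -/
open MeasureTheory Filter

set_option maxHeartbeats 1000000 in
lemma bcosw_rate_aux (lam al p B : ℝ) (hlam : 0 < lam) (hal : 0 < al)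
    (h1 : al * lam < 1) (hp0 : 0 < p) (hp1 : p < 1) (hB : 0 ≤ B)
    (a : ℕ → ℝ) (ha : ∀ t, 0 ≤ a t)
    (hrec : ∀ t, a (t + 1)
      ≤ (1 - al / ((t : ℝ) + 1) ^ p * lam) ^ 2 * a t + (al / ((t : ℝ) + 1) ^ p) ^ 2 * B) :
    Filter.limsup (fun t : ℕ => ((t : ℝ) + 1) ^ p * a t) atTop ≤ al * B / (2 * lam) := by
  set L : ℝ := al * B / (2 * lam) with hLdef
  have hL0 : 0 ≤ L := by positivity
  set u : ℕ → ℝ := fun t => ((t : ℝ) + 1) ^ p * a t with hudef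
  set y : ℕ → ℝ := fun t => lam * al / ((t : ℝ) + 1) ^ p with hydef
  have htp : ∀ t : ℕ, (0:ℝ) < ((t : ℝ) + 1) ^ p := fun t => by positivity
  have htp1 : ∀ t : ℕ, (1:ℝ) ≤ ((t : ℝ) + 1) ^ p := by
    intro t
    have h := Real.rpow_le_rpow (by norm_num : (0:ℝ) ≤ 1)
      (by push_cast; linarith [Nat.cast_nonneg (α := ℝ) t] : (1:ℝ) ≤ (t : ℝ) + 1) hp0.le
    rwa [Real.one_rpow] at h
  have hy0 : ∀ t, 0 < y t := fun t => by simp only [hydef]; positivity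
  have hy1 : ∀ t, y t ≤ al * lam := by
    intro t
    simp only [hydef]
    rw [div_le_iff₀ (htp t)]
    nlinarith [htp1 t, mul_pos hlam hal]
  have hu0 : ∀ t, 0 ≤ u t := fun t => mul_nonneg (htp t).le (ha t)
  -- one-step bound
  have key : ∀ t : ℕ, u (t + 1)
      ≤ (1 - 2 * y t + (y t) ^ 2 + 1 / ((t : ℝ) + 1)) * u t
        + (1 + 1 / ((t : ℝ) + 1)) * (2 * L) * y t := by
    intro t
    have ht1 : (0:ℝ) < (t : ℝ) + 1 := by positivity
    have hrw : (((t + 1 : ℕ) : ℝ) + 1) = (t : ℝ) + 2 := by push_cast; ring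
    have hρ : ((t : ℝ) + 2) ^ p ≤ (1 + 1 / ((t : ℝ) + 1)) * ((t : ℝ) + 1) ^ p := by
      have hfac : (t : ℝ) + 2 = ((t : ℝ) + 1) * (1 + 1 / ((t : ℝ) + 1)) := by
        field_simp
        ring
      rw [hfac, Real.mul_rpow ht1.le (by positivity)]
      have h2 : (1 + 1 / ((t : ℝ) + 1)) ^ p ≤ (1 + 1 / ((t : ℝ) + 1)) := by
        nth_rewrite 2 [← Real.rpow_one (1 + 1 / ((t : ℝ) + 1))]
        exact Real.rpow_le_rpow_of_exponent_le (le_add_of_nonneg_right (by positivity)) hp1.le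
      calc ((t : ℝ) + 1) ^ p * (1 + 1 / ((t : ℝ) + 1)) ^ p
          ≤ ((t : ℝ) + 1) ^ p * (1 + 1 / ((t : ℝ) + 1)) :=
            mul_le_mul_of_nonneg_left h2 (htp t).le
        _ = (1 + 1 / ((t : ℝ) + 1)) * ((t : ℝ) + 1) ^ p := by ring
    have hrhs_nn : 0 ≤ (1 - al / ((t : ℝ) + 1) ^ p * lam) ^ 2 * a t
        + (al / ((t : ℝ) + 1) ^ p) ^ 2 * B :=
      add_nonneg (mul_nonneg (sq_nonneg _) (ha t)) (mul_nonneg (sq_nonneg _) hB)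
    have step1 : u (t + 1) ≤ ((t : ℝ) + 2) ^ p *
        ((1 - al / ((t : ℝ) + 1) ^ p * lam) ^ 2 * a t + (al / ((t : ℝ) + 1) ^ p) ^ 2 * B) := by
      simp only [hudef, hrw]
      exact mul_le_mul_of_nonneg_left (hrec t) (by positivity)
    have step2 : ((t : ℝ) + 2) ^ p *
        ((1 - al / ((t : ℝ) + 1) ^ p * lam) ^ 2 * a t + (al / ((t : ℝ) + 1) ^ p) ^ 2 * B)
        ≤ (1 + 1 / ((t : ℝ) + 1)) * (((t : ℝ) + 1) ^ p *
          ((1 - al / ((t : ℝ) + 1) ^ p * lam) ^ 2 * a t + (al / ((t : ℝ) + 1) ^ p) ^ 2 * B)) := by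
      rw [← mul_assoc]
      exact mul_le_mul_of_nonneg_right hρ hrhs_nn
    have hterm1 : ((t : ℝ) + 1) ^ p * ((1 - al / ((t : ℝ) + 1) ^ p * lam) ^ 2 * a t)
        = (1 - y t) ^ 2 * u t := by
      have hq : al / ((t : ℝ) + 1) ^ p * lam = y t := by simp only [hydef]; ring
      rw [hq]; simp only [hudef]; ring
    have hterm2 : ((t : ℝ) + 1) ^ p * ((al / ((t : ℝ) + 1) ^ p) ^ 2 * B) = 2 * L * y t := by
      simp only [hydef, hLdef]
      field_simp
    have step3 : (1 + 1 / ((t : ℝ) + 1)) * (((t : ℝ) + 1) ^ p *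
          ((1 - al / ((t : ℝ) + 1) ^ p * lam) ^ 2 * a t + (al / ((t : ℝ) + 1) ^ p) ^ 2 * B))
        = (1 + 1 / ((t : ℝ) + 1)) * ((1 - y t) ^ 2) * u t
          + (1 + 1 / ((t : ℝ) + 1)) * (2 * L) * y t := by
      rw [mul_add, mul_add, hterm1, hterm2]; ring
    have hcoeff : (1 + 1 / ((t : ℝ) + 1)) * (1 - y t) ^ 2
        ≤ 1 - 2 * y t + (y t) ^ 2 + 1 / ((t : ℝ) + 1) := by
      have hs : (0:ℝ) < 1 / ((t : ℝ) + 1) := by positivity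
      have hyy : 0 < y t := hy0 t
      have hylt : y t < 1 := lt_of_le_of_lt (hy1 t) h1
      nlinarith [mul_nonneg (mul_nonneg hs.le hyy.le) (by linarith : (0:ℝ) ≤ 2 - y t)]
    have step4 : (1 + 1 / ((t : ℝ) + 1)) * ((1 - y t) ^ 2) * u t
        ≤ (1 - 2 * y t + (y t) ^ 2 + 1 / ((t : ℝ) + 1)) * u t :=
      mul_le_mul_of_nonneg_right hcoeff (hu0 t)
    calc u (t + 1) ≤ _ := step1
      _ ≤ _ := step2
      _ = _ := step3
      _ ≤ _ := by linarith
  -- epsilon argument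
  have main : ∀ ε : ℝ, 0 < ε → ∀ᶠ t in atTop, u t ≤ L + ε := by
    intro ε hε
    set θ : ℝ := ε / (2 * L + 2 * ε + 2) with hθdef
    have hden : 0 < 2 * L + 2 * ε + 2 := by linarith
    have hθ0 : 0 < θ := by positivity
    have hθhalf : θ ≤ 1 / 2 := by
      rw [hθdef, div_le_div_iff₀ hden (by norm_num)]
      linarith
    have hθkey : θ * (2 * L + ε) < ε := by
      rw [hθdef, div_mul_eq_mul_div, div_lt_iff₀ hden]
      nlinarith
    -- eventual smallness
    have hev1 : ∀ᶠ t : ℕ in atTop, y t ≤ θ := by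
      have htend : Tendsto y atTop (nhds 0) := by
        have h2 : Tendsto (fun t : ℕ => ((t : ℝ) + 1) ^ (-p)) atTop (nhds 0) :=
          (tendsto_rpow_neg_atTop hp0).comp
            (tendsto_atTop_add_const_right atTop 1 tendsto_natCast_atTop_atTop)
        have heq : y = fun t : ℕ => lam * al * ((t : ℝ) + 1) ^ (-p) := by
          funext t
          simp only [hydef, Real.rpow_neg (by positivity : (0:ℝ) ≤ (t:ℝ)+1)]
          ring
        rw [heq]
        simpa using (h2.const_mul (lam * al))
      exact htend.eventually_le_const hθ0
    have hev2 : ∀ᶠ t : ℕ in atTop, 1 / ((t : ℝ) + 1) ≤ θ * y t := by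
      have htend : Tendsto (fun t : ℕ => ((t : ℝ) + 1) ^ (p - 1)) atTop (nhds 0) := by
        have h3 := (tendsto_rpow_neg_atTop (by linarith : (0:ℝ) < 1 - p)).comp
            (tendsto_atTop_add_const_right atTop 1 tendsto_natCast_atTop_atTop)
        simpa [neg_sub, Function.comp_def] using h3
      have hev := htend.eventually_le_const (by positivity : (0:ℝ) < θ * (lam * al))
      filter_upwards [hev] with t ht
      have ht1 : (0:ℝ) < (t : ℝ) + 1 := by positivity
      have heq : ((t : ℝ) + 1) ^ (p - 1) = ((t : ℝ) + 1) ^ p / ((t : ℝ) + 1) := by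
        rw [Real.rpow_sub ht1, Real.rpow_one]
      rw [heq, div_le_iff₀ ht1] at ht
      have hty : θ * y t = θ * (lam * al) / ((t : ℝ) + 1) ^ p := by
        simp only [hydef]; ring
      rw [hty, le_div_iff₀ (htp t), one_div, inv_mul_eq_div, div_le_iff₀ ht1]
      nlinarith [htp t]
    obtain ⟨T, hT⟩ := (hev1.and hev2).exists_forall_of_atTop
    have hθ1 : θ ≤ 1 := by linarith
    -- common step bound
    have hstep : ∀ t, T ≤ t →
        u (t + 1) ≤ (1 - (2 - 2 * θ) * y t) * u t + (1 + θ) * (2 * L) * y t := by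
      intro t hTt
      obtain ⟨hy_small, hs_small⟩ := hT t hTt
      have hyy : 0 < y t := hy0 t
      have hy2 : (y t) ^ 2 ≤ θ * y t := by
        nlinarith [mul_le_mul_of_nonneg_right hy_small hyy.le]
      have hcoeff_le : 1 - 2 * y t + (y t) ^ 2 + 1 / ((t : ℝ) + 1)
          ≤ 1 - (2 - 2 * θ) * y t := by linarith [hs_small, hy2]
      have b1 : (1 - 2 * y t + (y t) ^ 2 + 1 / ((t : ℝ) + 1)) * u t
          ≤ (1 - (2 - 2 * θ) * y t) * u t := mul_le_mul_of_nonneg_right hcoeff_le (hu0 t)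
      have hylt : y t ≤ 1 := le_of_lt (lt_of_le_of_lt (hy1 t) h1)
      have hs_le : 1 / ((t : ℝ) + 1) ≤ θ := by
        calc 1 / ((t : ℝ) + 1) ≤ θ * y t := hs_small
          _ ≤ θ * 1 := mul_le_mul_of_nonneg_left hylt hθ0.le
          _ = θ := mul_one θ
      have b2 : (1 + 1 / ((t : ℝ) + 1)) * (2 * L) * y t ≤ (1 + θ) * (2 * L) * y t := by
        have hc : (1 + 1 / ((t : ℝ) + 1)) * (2 * L) ≤ (1 + θ) * (2 * L) :=
          mul_le_mul_of_nonneg_right (by linarith) (by linarith [hL0])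
        exact mul_le_mul_of_nonneg_right hc hyy.le
      linarith [key t]
    -- C1 : stays below
    have C1 : ∀ t, T ≤ t → u t ≤ L + ε → u (t + 1) ≤ L + ε := by
      intro t hTt hut
      have hyy : 0 < y t := hy0 t
      have hylt : y t ≤ 1 := le_of_lt (lt_of_le_of_lt (hy1 t) h1)
      obtain ⟨hy_small, -⟩ := hT t hTt
      have hAnn : 0 ≤ 1 - (2 - 2 * θ) * y t := by
        nlinarith [mul_pos hθ0 hyy, hy_small, hθhalf]
      have b1 : (1 - (2 - 2 * θ) * y t) * u t ≤ (1 - (2 - 2 * θ) * y t) * (L + ε) :=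
        mul_le_mul_of_nonneg_left hut hAnn
      have hneg : (1 + θ) * (2 * L) - (2 - 2 * θ) * (L + ε) ≤ 0 := by nlinarith [hθkey]
      have e2 : y t * ((1 + θ) * (2 * L) - (2 - 2 * θ) * (L + ε)) ≤ 0 :=
        mul_nonpos_of_nonneg_of_nonpos hyy.le hneg
      have e1 : (1 - (2 - 2 * θ) * y t) * (L + ε) + (1 + θ) * (2 * L) * y t
          = (L + ε) + y t * ((1 + θ) * (2 * L) - (2 - 2 * θ) * (L + ε)) := by ring
      linarith [hstep t hTt]
    -- C2 : strict decrease above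
    set κ : ℝ := 2 * (ε - θ * (2 * L + ε)) with hκdef
    have hκ0 : 0 < κ := by rw [hκdef]; linarith [hθkey]
    have C2 : ∀ t, T ≤ t → L + ε < u t → u (t + 1) ≤ u t - κ * y t := by
      intro t hTt hut
      have hyy : 0 < y t := hy0 t
      have hcnn : (0:ℝ) ≤ (2 - 2 * θ) * y t :=
        mul_nonneg (by linarith) hyy.le
      have hmul : (2 - 2 * θ) * y t * (L + ε) ≤ (2 - 2 * θ) * y t * u t :=
        mul_le_mul_of_nonneg_left hut.le hcnn
      have e3 : y t * ((2 - 2 * θ) * (L + ε) - (1 + θ) * (2 * L)) = κ * y t := by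
        rw [hκdef]; ring
      nlinarith [hstep t hTt, hmul, e3]
    -- find a point below L + ε
    have hexists : ∃ t₀, T ≤ t₀ ∧ u t₀ ≤ L + ε := by
      by_contra hcon
      push_neg at hcon
      have habove : ∀ t, T ≤ t → L + ε < u t := fun t ht => hcon t ht
      have hdec : ∀ m : ℕ, u (T + m) ≤ u T - κ * ∑ i ∈ Finset.range m, y (T + i) := by
        intro m
        induction m with
        | zero => simp
        | succ m ih =>
          have h1' : T ≤ T + m := Nat.le_add_right _ _
          have h2' := C2 (T + m) h1' (habove _ h1')
          have hTm : T + (m + 1) = (T + m) + 1 := by omega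
          rw [hTm, Finset.sum_range_succ]
          calc u ((T + m) + 1) ≤ u (T + m) - κ * y (T + m) := h2'
            _ ≤ u T - κ * ∑ i ∈ Finset.range m, y (T + i) - κ * y (T + m) := by linarith
            _ = u T - κ * (∑ i ∈ Finset.range m, y (T + i) + y (T + m)) := by ring
      -- lower bound on y along the tail
      have hylow : ∀ i : ℕ, lam * al * (1 / ((T : ℝ) + (i : ℝ) + 1)) ≤ y (T + i) := by
        intro i
        have hb : (1:ℝ) ≤ (T : ℝ) + (i : ℝ) + 1 := by
          have h0 : (0:ℝ) ≤ (T : ℝ) + (i : ℝ) := by positivity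
          linarith
        have hexp : (((T + i : ℕ) : ℝ) + 1) ^ p ≤ (T : ℝ) + (i : ℝ) + 1 := by
          push_cast
          nth_rewrite 2 [← Real.rpow_one ((T : ℝ) + (i : ℝ) + 1)]
          exact Real.rpow_le_rpow_of_exponent_le hb hp1.le
        have hpos : (0:ℝ) < (((T + i : ℕ) : ℝ) + 1) ^ p := htp _
        have hq : lam * al * (1 / ((T : ℝ) + (i : ℝ) + 1))
            = lam * al / ((T : ℝ) + (i : ℝ) + 1) := by ring
        rw [hq]
        simp only [hydef]
        exact div_le_div_of_nonneg_left (by positivity) hpos hexp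
      -- divergence of harmonic-type sums
      have hdiv : Tendsto (fun m : ℕ => ∑ i ∈ Finset.range m, 1 / ((T : ℝ) + (i : ℝ) + 1))
          atTop atTop := by
        have hH := Real.tendsto_sum_range_one_div_nat_succ_atTop
        have hcomp : Tendsto (fun m : ℕ => ∑ i ∈ Finset.range (T + m), (1 / ((i : ℝ) + 1)))
            atTop atTop := by
          simpa [Nat.add_comm, Function.comp_def] using hH.comp (tendsto_add_atTop_nat T)
        have heq : ∀ m : ℕ, ∑ i ∈ Finset.range m, 1 / ((T : ℝ) + (i : ℝ) + 1)
            = (∑ i ∈ Finset.range (T + m), (1 / ((i : ℝ) + 1)))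
              - ∑ i ∈ Finset.range T, (1 / ((i : ℝ) + 1)) := by
          intro m
          rw [Finset.sum_range_add]
          have : ∀ i ∈ Finset.range m, (1 : ℝ) / ((T : ℝ) + (i : ℝ) + 1)
              = 1 / (((T + i : ℕ) : ℝ) + 1) := by
            intro i _
            push_cast
            ring_nf
          rw [Finset.sum_congr rfl this]
          ring
        simp only [heq]
        exact hcomp.atTop_add tendsto_const_nhds
      obtain ⟨m, hm⟩ := (hdiv.eventually_gt_atTop
        (u T / (κ * (lam * al)))).exists
      have hpos' : 0 < κ * (lam * al) := by positivity
      have hgt : u T < κ * (lam * al) *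
          ∑ i ∈ Finset.range m, 1 / ((T : ℝ) + (i : ℝ) + 1) := by
        rw [div_lt_iff₀ hpos'] at hm
        linarith [hm]
      have hsum_le : lam * al * ∑ i ∈ Finset.range m, 1 / ((T : ℝ) + (i : ℝ) + 1)
          ≤ ∑ i ∈ Finset.range m, y (T + i) := by
        rw [Finset.mul_sum]
        exact Finset.sum_le_sum fun i _ => hylow i
      have hd := hdec m
      have hunn := hu0 (T + m)
      nlinarith [mul_le_mul_of_nonneg_left hsum_le hκ0.le]
    obtain ⟨t₀, ht₀T, ht₀⟩ := hexists
    rw [eventually_atTop]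
    refine ⟨t₀, fun t ht => ?_⟩
    induction t, ht using Nat.le_induction with
    | base => exact ht₀
    | succ t ht ih => exact C1 t (le_trans ht₀T ht) ih
  -- conclude limsup
  have hcb : IsCoboundedUnder (fun a b : ℝ => a ≤ b) atTop u :=
    isCoboundedUnder_le_of_le atTop (x := 0) hu0
  by_contra hcon
  push_neg at hcon
  set ε := (limsup u atTop - L) / 2 with hεdef
  have hε : 0 < ε := by simp only [hεdef]; linarith
  have hfin := limsup_le_of_le hcb (main ε hε)
  simp only [hεdef] at hfin
  linarith

section helpers

variable {Ω : Type*} {mΩ : MeasurableSpace Ω} {μ : Measure Ω} [IsProbabilityMeasure μ]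
  {m : MeasurableSpace Ω}

/-- Pull-out + tower: `∫ w·f = ∫ w·E[f|m]` for `m`-measurable `w`. -/
lemma bcosw_integral_mul_condexp (hm : m ≤ mΩ) (w f : Ω → ℝ)
    (hw : StronglyMeasurable[m] w)
    (hwf : Integrable (fun ω => w ω * f ω) μ) (hf : Integrable f μ) :
    ∫ ω, w ω * f ω ∂μ = ∫ ω, w ω * (μ[f|m]) ω ∂μ := by
  have h1 : ∫ ω, (μ[fun ω' => w ω' * f ω'|m]) ω ∂μ = ∫ ω, w ω * f ω ∂μ :=
    integral_condExp hm
  have h2 : μ[fun ω' => w ω' * f ω'|m] =ᵐ[μ] fun ω => w ω * (μ[f|m]) ω := by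
    have := condExp_mul_of_stronglyMeasurable_left (μ := μ) hw (f := w) (g := f) hwf hf
    exact this
  rw [← h1]
  exact integral_congr_ae h2

/-- The conditionally-normalized square has integral at most one. -/
lemma bcosw_normalized_sq (hm : m ≤ mΩ) (f : Ω → ℝ) (hf_meas : Measurable[mΩ] f)
    (hf_int : Integrable (fun ω => (f ω) ^ 2) μ)
    (hpos : ∀ᵐ ω ∂μ, 0 < (μ[fun ω' => (f ω') ^ 2|m]) ω) :
    Integrable (fun ω => (f ω / Real.sqrt ((μ[fun ω' => (f ω') ^ 2|m]) ω)) ^ 2) μ ∧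
      ∫ ω, (f ω / Real.sqrt ((μ[fun ω' => (f ω') ^ 2|m]) ω)) ^ 2 ∂μ ≤ 1 := by
  set h : Ω → ℝ := μ[fun ω' => (f ω') ^ 2|m] with hhdef
  have hh_measm : Measurable[m] h := stronglyMeasurable_condExp.measurable
  have hh_meas : Measurable[mΩ] h := hh_measm.mono hm le_rfl
  have hh_int : Integrable h μ := integrable_condExp
  -- the truncated family
  set φ : ℕ → Ω → ℝ := fun j ω => if ((j : ℝ) + 1)⁻¹ ≤ h ω then (h ω)⁻¹ else 0 with hφdef
  have hφ_measm : ∀ j, Measurable[m] (φ j) := by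
    intro j
    exact Measurable.ite (measurableSet_le measurable_const hh_measm) hh_measm.inv
      measurable_const
  have hφ_bdd : ∀ j, ∀ ω, ‖φ j ω‖ ≤ (j : ℝ) + 1 := by
    intro j ω
    simp only [hφdef]
    split_ifs with hc
    · have h0 : (0:ℝ) < ((j : ℝ) + 1)⁻¹ := by positivity
      have hω : 0 < h ω := lt_of_lt_of_le h0 hc
      rw [Real.norm_eq_abs, abs_of_nonneg (inv_nonneg.mpr hω.le)]
      have h2 := inv_anti₀ h0 hc
      rwa [inv_inv] at h2
    · simp only [norm_zero]
      positivity
  have hφ_nonneg : ∀ j ω, 0 ≤ φ j ω := by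
    intro j ω
    simp only [hφdef]
    split_ifs with hc
    · have h0 : (0:ℝ) < ((j : ℝ) + 1)⁻¹ := by positivity
      exact inv_nonneg.mpr (le_trans h0.le hc)
    · exact le_refl 0
  have hφf_int : ∀ j, Integrable (fun ω => φ j ω * (f ω) ^ 2) μ := by
    intro j
    exact hf_int.bdd_mul ((hφ_measm j).mono hm le_rfl).aestronglyMeasurable
      (Eventually.of_forall fun ω => hφ_bdd j ω)
  -- integral of each truncation is ≤ 1
  have hφf_le : ∀ j, ∫ ω, φ j ω * (f ω) ^ 2 ∂μ ≤ 1 := by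
    intro j
    have h1 : ∫ ω, φ j ω * (f ω) ^ 2 ∂μ = ∫ ω, φ j ω * h ω ∂μ :=
      bcosw_integral_mul_condexp hm (φ j) (fun ω => (f ω) ^ 2)
        (hφ_measm j).stronglyMeasurable (hφf_int j) hf_int
    rw [h1]
    have hφh_int : Integrable (fun ω => φ j ω * h ω) μ :=
      hh_int.bdd_mul ((hφ_measm j).mono hm le_rfl).aestronglyMeasurable
        (Eventually.of_forall fun ω => hφ_bdd j ω)
    have hle : ∀ ω, φ j ω * h ω ≤ 1 := by
      intro ω
      simp only [hφdef]
      split_ifs with hc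
      · have hω : 0 < h ω := lt_of_lt_of_le (by positivity) hc
        rw [inv_mul_cancel₀ hω.ne']
      · simp
    calc ∫ ω, φ j ω * h ω ∂μ ≤ ∫ _ω, (1:ℝ) ∂μ :=
          integral_mono hφh_int (integrable_const 1) hle
      _ = 1 := by simp
  -- monotonicity of truncations
  have hmono' : ∀ (j : ℕ) (ω : Ω), ((j : ℝ) + 1)⁻¹ ≤ h ω → (((j + 1 : ℕ) : ℝ) + 1)⁻¹ ≤ h ω := by
    intro j ω hj
    refine le_trans ?_ hj
    exact inv_anti₀ (by positivity) (by push_cast; linarith)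
  have hφ_mono : ∀ j ω, φ j ω * (f ω) ^ 2 ≤ φ (j + 1) ω * (f ω) ^ 2 := by
    intro j ω
    simp only [hφdef]
    split_ifs with h1 h2 h2
    · exact le_refl _
    · exact absurd (hmono' j ω h1) h2
    · rw [zero_mul]
      have h0 : (0:ℝ) < (((j + 1 : ℕ) : ℝ) + 1)⁻¹ := by push_cast; positivity
      exact mul_nonneg (inv_nonneg.mpr (le_trans h0.le h2)) (sq_nonneg _)
    · exact le_refl _
  -- monotone convergence in ℝ≥0∞
  set G : ℕ → Ω → ENNReal := fun j ω => ENNReal.ofReal (φ j ω * (f ω) ^ 2) with hGdef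
  have hG_meas : ∀ j, Measurable[mΩ] (G j) := by
    intro j
    exact (((hφ_measm j).mono hm le_rfl).mul (hf_meas.pow_const 2)).ennreal_ofReal
  have hG_mono : Monotone G := by
    refine monotone_nat_of_le_succ fun j ω => ?_
    exact ENNReal.ofReal_le_ofReal (hφ_mono j ω)
  -- a.e. identification of the supremum
  have hsup : ∀ᵐ ω ∂μ, (⨆ j, G j ω)
      = ENNReal.ofReal ((f ω / Real.sqrt (h ω)) ^ 2) := by
    filter_upwards [hpos] with ω hω
    have hsq : (f ω / Real.sqrt (h ω)) ^ 2 = (h ω)⁻¹ * (f ω) ^ 2 := by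
      rw [div_pow, Real.sq_sqrt hω.le]
      ring
    rw [hsq]
    apply le_antisymm
    · refine iSup_le fun j => ?_
      apply ENNReal.ofReal_le_ofReal
      simp only [hGdef, hφdef]
      split_ifs with hc
      · exact le_refl _
      · rw [zero_mul]
        positivity
    · obtain ⟨j, hj⟩ := exists_nat_one_div_lt hω
      have hjle : ((j : ℝ) + 1)⁻¹ ≤ h ω := by
        rw [← one_div]; exact hj.le
      have hGj : G j ω = ENNReal.ofReal ((h ω)⁻¹ * (f ω) ^ 2) := by
        simp only [hGdef, hφdef, if_pos hjle]
      rw [← hGj]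
      exact le_iSup (fun j => G j ω) j
  have hlin : ∫⁻ ω, ENNReal.ofReal ((f ω / Real.sqrt (h ω)) ^ 2) ∂μ ≤ 1 := by
    rw [← lintegral_congr_ae hsup, lintegral_iSup hG_meas hG_mono]
    refine iSup_le fun j => ?_
    have hofr := ofReal_integral_eq_lintegral_ofReal (hφf_int j)
      (Eventually.of_forall fun ω => mul_nonneg (hφ_nonneg j ω) (sq_nonneg _))
    simp only [hGdef]
    rw [← hofr]
    calc ENNReal.ofReal (∫ ω, φ j ω * (f ω) ^ 2 ∂μ) ≤ ENNReal.ofReal 1 :=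
          ENNReal.ofReal_le_ofReal (hφf_le j)
      _ = 1 := ENNReal.ofReal_one
  have hmeas_dh2 : Measurable[mΩ] fun ω => (f ω / Real.sqrt (h ω)) ^ 2 :=
    ((hf_meas.div hh_meas.sqrt).pow_const 2)
  have hint : Integrable (fun ω => (f ω / Real.sqrt (h ω)) ^ 2) μ := by
    refine ⟨hmeas_dh2.aestronglyMeasurable, ?_⟩
    rw [HasFiniteIntegral]
    have heq : ∀ ω, (‖(f ω / Real.sqrt (h ω)) ^ 2‖₊ : ENNReal)
        = ENNReal.ofReal ((f ω / Real.sqrt (h ω)) ^ 2) := fun ω =>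
      Real.enorm_eq_ofReal (sq_nonneg _)
    calc ∫⁻ ω, (‖(f ω / Real.sqrt (h ω)) ^ 2‖₊ : ENNReal) ∂μ
        = ∫⁻ ω, ENNReal.ofReal ((f ω / Real.sqrt (h ω)) ^ 2) ∂μ :=
          lintegral_congr fun ω => heq ω
      _ ≤ 1 := hlin
      _ < ⊤ := ENNReal.one_lt_top
  refine ⟨hint, ?_⟩
  rw [integral_eq_lintegral_of_nonneg_ae (Eventually.of_forall fun ω => sq_nonneg _)
    hmeas_dh2.aestronglyMeasurable]
  calc (∫⁻ ω, ENNReal.ofReal ((f ω / Real.sqrt (h ω)) ^ 2) ∂μ).toReal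
      ≤ (1 : ENNReal).toReal := ENNReal.toReal_mono ENNReal.one_ne_top hlin
    _ = 1 := ENNReal.toReal_one

end helpers
section step

variable {Ω : Type*} {mΩ : MeasurableSpace Ω} {μ : Measure Ω} [IsProbabilityMeasure μ]
  {m : MeasurableSpace Ω}

set_option maxHeartbeats 1000000 in
/-- One step of the conceptual BCOSW recursion in expectation. -/
lemma bcosw_step (hm : m ≤ mΩ) {n : ℕ}
    (lam β : ℝ) (hlam : 0 < lam) (hβ0 : 0 < β) (hβ1 : β * lam < 1)
    (xstar : Fin n → ℝ) (X D X' : Ω → Fin n → ℝ)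
    (hX_meas : ∀ k, Measurable[m] fun ω => X ω k)
    (hX_int : ∀ k, Integrable (fun ω => (X ω k) ^ 2) μ)
    (hD_meas : ∀ k, Measurable[mΩ] fun ω => D ω k)
    (hD_sq_int : ∀ k, Integrable (fun ω => (D ω k) ^ 2) μ)
    (hD2_pos : ∀ k, ∀ᵐ ω ∂μ, 0 < (μ[fun ω' => (D ω' k) ^ 2|m]) ω)
    (hiter : ∀ ω k, X' ω k = (1 - β * lam) * X ω k
        - β * (D ω k / Real.sqrt ((μ[fun ω' => (D ω' k) ^ 2|m]) ω)))
    (haim : ∀ᵐ ω ∂μ, (∑ k, (X ω k - xstar k) *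
        ((μ[fun ω' => D ω' k|m]) ω / Real.sqrt ((μ[fun ω' => (D ω' k) ^ 2|m]) ω)
          + lam * X ω k)) ≥ lam * ∑ k, (X ω k - xstar k) ^ 2) :
    (∀ k, Integrable (fun ω => (X' ω k) ^ 2) μ) ∧
      ∫ ω, ∑ k, (X' ω k - xstar k) ^ 2 ∂μ
        ≤ (1 - β * lam) ^ 2 * ∫ ω, ∑ k, (X ω k - xstar k) ^ 2 ∂μ
          + β ^ 2 * ((n : ℝ) + lam ^ 2 * (∑ k, (xstar k) ^ 2)
            + 2 * lam * ∑ k, |xstar k|) := by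
  classical
  set dh : Fin n → Ω → ℝ :=
    fun k ω => D ω k / Real.sqrt ((μ[fun ω' => (D ω' k) ^ 2|m]) ω) with hdhdef
  have hh_measm : ∀ k, Measurable[m] (μ[fun ω' => (D ω' k) ^ 2|m]) :=
    fun k => stronglyMeasurable_condExp.measurable
  have hh_meas : ∀ k, Measurable[mΩ] (μ[fun ω' => (D ω' k) ^ 2|m]) :=
    fun k => (hh_measm k).mono hm le_rfl
  have hdh_meas : ∀ k, Measurable[mΩ] (dh k) :=
    fun k => (hD_meas k).div (hh_meas k).sqrt
  have hdh2 : ∀ k, Integrable (fun ω => (dh k ω) ^ 2) μ ∧ ∫ ω, (dh k ω) ^ 2 ∂μ ≤ 1 :=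
    fun k => bcosw_normalized_sq hm (fun ω => D ω k) (hD_meas k) (hD_sq_int k) (hD2_pos k)
  -- integrability of sub-expressions
  have habs_sq_bound : ∀ (g : Ω → ℝ), Measurable[mΩ] g →
      Integrable (fun ω => (g ω) ^ 2) μ → Integrable g μ := by
    intro g hgm hg2
    refine Integrable.mono ((hg2.add (integrable_const 1)).div_const 2)
      hgm.aestronglyMeasurable (Eventually.of_forall fun ω => ?_)
    simp only [Pi.add_apply, Real.norm_eq_abs]
    have h1 : |g ω| ≤ ((g ω) ^ 2 + 1) / 2 := by nlinarith [sq_abs (g ω), sq_nonneg (|g ω| - 1)]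
    have h2 : 0 ≤ ((g ω) ^ 2 + 1) / 2 := by positivity
    rwa [abs_of_nonneg h2]
  have hdh_int : ∀ k, Integrable (dh k) μ :=
    fun k => habs_sq_bound (dh k) (hdh_meas k) (hdh2 k).1
  have hD_int : ∀ k, Integrable (fun ω => D ω k) μ :=
    fun k => habs_sq_bound _ (hD_meas k) (hD_sq_int k)
  have hX_measΩ : ∀ k, Measurable[mΩ] fun ω => X ω k :=
    fun k => (hX_meas k).mono hm le_rfl
  have hX_int1 : ∀ k, Integrable (fun ω => X ω k) μ :=
    fun k => habs_sq_bound _ (hX_measΩ k) (hX_int k)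
  have hprod_int : ∀ (g₁ g₂ : Ω → ℝ), Measurable[mΩ] g₁ → Measurable[mΩ] g₂ →
      Integrable (fun ω => (g₁ ω) ^ 2) μ → Integrable (fun ω => (g₂ ω) ^ 2) μ →
      Integrable (fun ω => g₁ ω * g₂ ω) μ := by
    intro g₁ g₂ h1 h2 hi1 hi2
    refine Integrable.mono ((hi1.add hi2).div_const 2)
      (h1.mul h2).aestronglyMeasurable (Eventually.of_forall fun ω => ?_)
    simp only [Pi.add_apply, Real.norm_eq_abs]
    rw [abs_of_nonneg (by positivity :
      (0:ℝ) ≤ ((g₁ ω) ^ 2 + (g₂ ω) ^ 2) / 2), abs_mul]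
    nlinarith [sq_abs (g₁ ω), sq_abs (g₂ ω), sq_nonneg (|g₁ ω| - |g₂ ω|)]
  have hXdh_int : ∀ k, Integrable (fun ω => X ω k * dh k ω) μ :=
    fun k => hprod_int _ _ (hX_measΩ k) (hdh_meas k) (hX_int k) (hdh2 k).1
  have hδ_int : ∀ k, Integrable (fun ω => X ω k - xstar k) μ :=
    fun k => (hX_int1 k).sub (integrable_const _)
  have hδ2_int : ∀ k, Integrable (fun ω => (X ω k - xstar k) ^ 2) μ := by
    intro k
    have : (fun ω => (X ω k - xstar k) ^ 2)
        = fun ω => (X ω k) ^ 2 - (2 * xstar k) * X ω k + (xstar k) ^ 2 := by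
      funext ω; ring
    rw [this]
    exact ((hX_int k).sub ((hX_int1 k).const_mul _)).add (integrable_const _)
  have hδdh_int : ∀ k, Integrable (fun ω => (X ω k - xstar k) * dh k ω) μ := by
    intro k
    have : (fun ω => (X ω k - xstar k) * dh k ω)
        = fun ω => X ω k * dh k ω - (xstar k) * dh k ω := by
      funext ω; ring
    rw [this]
    exact (hXdh_int k).sub ((hdh_int k).const_mul _)
  have hδg_int : ∀ k, Integrable (fun ω => (X ω k - xstar k) * (dh k ω + lam * xstar k)) μ := by
    intro k
    have : (fun ω => (X ω k - xstar k) * (dh k ω + lam * xstar k))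
        = fun ω => (X ω k - xstar k) * dh k ω + (lam * xstar k) * (X ω k - xstar k) := by
      funext ω; ring
    rw [this]
    exact (hδdh_int k).add ((hδ_int k).const_mul _)
  have hg2_int : ∀ k, Integrable (fun ω => (dh k ω + lam * xstar k) ^ 2) μ := by
    intro k
    have : (fun ω => (dh k ω + lam * xstar k) ^ 2)
        = fun ω => (dh k ω) ^ 2 + (2 * (lam * xstar k)) * dh k ω + (lam * xstar k) ^ 2 := by
      funext ω; ring
    rw [this]
    exact (((hdh2 k).1).add ((hdh_int k).const_mul _)).add (integrable_const _)
  -- |∫ dh| ≤ 1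
  have hdh_mean : ∀ k, |∫ ω, dh k ω ∂μ| ≤ 1 := by
    intro k
    have h1 : |∫ ω, dh k ω ∂μ| ≤ ∫ ω, |dh k ω| ∂μ := by
      simpa [Real.norm_eq_abs] using norm_integral_le_integral_norm (dh k) (μ := μ)
    have h2 : ∫ ω, |dh k ω| ∂μ ≤ ∫ ω, ((dh k ω) ^ 2 + 1) / 2 ∂μ := by
      refine integral_mono (hdh_int k).abs (((hdh2 k).1.add (integrable_const 1)).div_const 2)
        fun ω => ?_
      nlinarith [sq_abs (dh k ω), sq_nonneg (|dh k ω| - 1)]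
    have h3 : ∫ ω, ((dh k ω) ^ 2 + 1) / 2 ∂μ = ((∫ ω, (dh k ω) ^ 2 ∂μ) + 1) / 2 := by
      rw [integral_div, integral_add (hdh2 k).1 (integrable_const 1)]
      simp
    have h4 := (hdh2 k).2
    calc |∫ ω, dh k ω ∂μ| ≤ ∫ ω, |dh k ω| ∂μ := h1
      _ ≤ ((∫ ω, (dh k ω) ^ 2 ∂μ) + 1) / 2 := by rw [← h3]; exact h2
      _ ≤ 1 := by linarith
  -- cross term is nonnegative
  have hcross : 0 ≤ ∫ ω, ∑ k, (X ω k - xstar k) * (dh k ω + lam * xstar k) ∂μ := by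
    -- rewrite each ∫ δ·dh via conditional expectation
    have hkey : ∀ k, ∫ ω, (X ω k - xstar k) * dh k ω ∂μ
        = ∫ ω, ((X ω k - xstar k) / Real.sqrt ((μ[fun ω' => (D ω' k) ^ 2|m]) ω))
            * (μ[fun ω' => D ω' k|m]) ω ∂μ := by
      intro k
      set w : Ω → ℝ :=
        fun ω => (X ω k - xstar k) / Real.sqrt ((μ[fun ω' => (D ω' k) ^ 2|m]) ω) with hwdef
      have hw_meas : Measurable[m] w :=
        ((hX_meas k).sub measurable_const).div (hh_measm k).sqrt
      have heq : (fun ω => (X ω k - xstar k) * dh k ω) = fun ω => w ω * D ω k := by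
        funext ω
        simp only [hwdef, hdhdef]
        ring
      have hwD_int : Integrable (fun ω => w ω * D ω k) μ := by
        rw [← heq]; exact hδdh_int k
      rw [heq]
      exact bcosw_integral_mul_condexp hm w (fun ω => D ω k)
        hw_meas.stronglyMeasurable hwD_int (hD_int k)
    -- integrability of w·E[D|m]
    have hwE_int : ∀ k, Integrable (fun ω =>
        ((X ω k - xstar k) / Real.sqrt ((μ[fun ω' => (D ω' k) ^ 2|m]) ω))
          * (μ[fun ω' => D ω' k|m]) ω) μ := by
      intro k
      have hw_meas : Measurable[m] (fun ω =>
          (X ω k - xstar k) / Real.sqrt ((μ[fun ω' => (D ω' k) ^ 2|m]) ω)) :=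
        ((hX_meas k).sub measurable_const).div (hh_measm k).sqrt
      have heq : (fun ω => (X ω k - xstar k) * dh k ω) = fun ω =>
          ((X ω k - xstar k) / Real.sqrt ((μ[fun ω' => (D ω' k) ^ 2|m]) ω)) * D ω k := by
        funext ω
        simp only [hdhdef]
        ring
      have hwD_int : Integrable (fun ω =>
          ((X ω k - xstar k) / Real.sqrt ((μ[fun ω' => (D ω' k) ^ 2|m]) ω)) * D ω k) μ := by
        rw [← heq]; exact hδdh_int k
      have hpull := condExp_mul_of_stronglyMeasurable_left (μ := μ) hw_meas.stronglyMeasurable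
        hwD_int (hD_int k)
      exact integrable_condExp.congr (by exact hpull)
    -- rewrite the whole integral
    have hsplit : ∫ ω, ∑ k, (X ω k - xstar k) * (dh k ω + lam * xstar k) ∂μ
        = ∫ ω, ∑ k, (((X ω k - xstar k) / Real.sqrt ((μ[fun ω' => (D ω' k) ^ 2|m]) ω))
            * (μ[fun ω' => D ω' k|m]) ω + (lam * xstar k) * (X ω k - xstar k)) ∂μ := by
      have hsum2_int : ∀ k : Fin n, Integrable (fun ω =>
          ((X ω k - xstar k) / Real.sqrt ((μ[fun ω' => (D ω' k) ^ 2|m]) ω))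
            * (μ[fun ω' => D ω' k|m]) ω + (lam * xstar k) * (X ω k - xstar k)) μ :=
        fun k => (hwE_int k).add ((hδ_int k).const_mul _)
      rw [integral_finset_sum _ (fun k _ => hδg_int k),
        integral_finset_sum _ (fun k _ => hsum2_int k)]
      refine Finset.sum_congr rfl fun k _ => ?_
      have hadd2 : ∫ ω, (((X ω k - xstar k) / Real.sqrt ((μ[fun ω' => (D ω' k) ^ 2|m]) ω))
            * (μ[fun ω' => D ω' k|m]) ω + (lam * xstar k) * (X ω k - xstar k)) ∂μ
          = (∫ ω, ((X ω k - xstar k) / Real.sqrt ((μ[fun ω' => (D ω' k) ^ 2|m]) ω))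
              * (μ[fun ω' => D ω' k|m]) ω ∂μ)
            + ∫ ω, (lam * xstar k) * (X ω k - xstar k) ∂μ :=
        integral_add (hwE_int k) ((hδ_int k).const_mul _)
      rw [hadd2]
      have hlhs : ∫ ω, (X ω k - xstar k) * (dh k ω + lam * xstar k) ∂μ
          = (∫ ω, (X ω k - xstar k) * dh k ω ∂μ)
            + ∫ ω, (lam * xstar k) * (X ω k - xstar k) ∂μ := by
        rw [← integral_add (hδdh_int k) ((hδ_int k).const_mul _)]
        refine integral_congr_ae (Eventually.of_forall fun ω => ?_)
        ring
      rw [hlhs, hkey k]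
    rw [hsplit]
    refine integral_nonneg_of_ae ?_
    filter_upwards [haim] with ω hω
    have hterm : ∀ k : Fin n,
        ((X ω k - xstar k) / Real.sqrt ((μ[fun ω' => (D ω' k) ^ 2|m]) ω))
            * (μ[fun ω' => D ω' k|m]) ω + (lam * xstar k) * (X ω k - xstar k)
        = (X ω k - xstar k) *
            ((μ[fun ω' => D ω' k|m]) ω / Real.sqrt ((μ[fun ω' => (D ω' k) ^ 2|m]) ω)
              + lam * X ω k) - lam * (X ω k - xstar k) ^ 2 := by
      intro k
      ring
    rw [Finset.sum_congr rfl fun k _ => hterm k, Finset.sum_sub_distrib, ← Finset.mul_sum]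
    simp only [Pi.zero_apply]
    linarith [hω]
  -- quadratic term bound
  have hquad : ∫ ω, ∑ k, (dh k ω + lam * xstar k) ^ 2 ∂μ
      ≤ (n : ℝ) + lam ^ 2 * (∑ k, (xstar k) ^ 2) + 2 * lam * ∑ k, |xstar k| := by
    rw [integral_finset_sum _ (fun k _ => hg2_int k)]
    have hper : ∀ k : Fin n, ∫ ω, (dh k ω + lam * xstar k) ^ 2 ∂μ
        ≤ 1 + 2 * lam * |xstar k| + lam ^ 2 * (xstar k) ^ 2 := by
      intro k
      have hexp : ∫ ω, (dh k ω + lam * xstar k) ^ 2 ∂μ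
          = (∫ ω, (dh k ω) ^ 2 ∂μ) + (2 * (lam * xstar k)) * (∫ ω, dh k ω ∂μ)
            + (lam * xstar k) ^ 2 := by
        have h1 : (fun ω => (dh k ω + lam * xstar k) ^ 2)
            = fun ω => ((dh k ω) ^ 2 + (2 * (lam * xstar k)) * dh k ω)
                + (lam * xstar k) ^ 2 := by
          funext ω; ring
        have ha : Integrable (fun ω => (dh k ω) ^ 2 + (2 * (lam * xstar k)) * dh k ω) μ :=
          ((hdh2 k).1).add ((hdh_int k).const_mul _)
        rw [h1, integral_add ha (integrable_const _),
          integral_add ((hdh2 k).1) ((hdh_int k).const_mul _), integral_const_mul]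
        simp [measure_univ]
      rw [hexp]
      have h2 : (2 * (lam * xstar k)) * (∫ ω, dh k ω ∂μ) ≤ 2 * lam * |xstar k| := by
        have habs : |xstar k * ∫ ω, dh k ω ∂μ| ≤ |xstar k| := by
          rw [abs_mul]
          calc |xstar k| * |∫ ω, dh k ω ∂μ| ≤ |xstar k| * 1 :=
            mul_le_mul_of_nonneg_left (hdh_mean k) (abs_nonneg _)
            _ = |xstar k| := mul_one _
        have h3 : xstar k * ∫ ω, dh k ω ∂μ ≤ |xstar k| :=
          le_trans (le_abs_self _) habs
        calc (2 * (lam * xstar k)) * (∫ ω, dh k ω ∂μ)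
            = 2 * lam * (xstar k * ∫ ω, dh k ω ∂μ) := by ring
          _ ≤ 2 * lam * |xstar k| :=
              mul_le_mul_of_nonneg_left h3 (by linarith)
      have h4 := (hdh2 k).2
      have h5 : (lam * xstar k) ^ 2 = lam ^ 2 * (xstar k) ^ 2 := by ring
      linarith [h5.le, h5.ge]
    calc ∑ k, ∫ ω, (dh k ω + lam * xstar k) ^ 2 ∂μ
        ≤ ∑ k : Fin n, (1 + 2 * lam * |xstar k| + lam ^ 2 * (xstar k) ^ 2) :=
          Finset.sum_le_sum fun k _ => hper k
      _ = (n : ℝ) + lam ^ 2 * (∑ k, (xstar k) ^ 2) + 2 * lam * ∑ k, |xstar k| := by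
          rw [Finset.sum_add_distrib, Finset.sum_add_distrib, Finset.sum_const,
            Finset.card_univ, Fintype.card_fin, ← Finset.mul_sum, ← Finset.mul_sum]
          push_cast
          ring
  -- expansion of the squared iterate
  have hexp : (fun ω => ∑ k, (X' ω k - xstar k) ^ 2)
      = fun ω => (1 - β * lam) ^ 2 * (∑ k, (X ω k - xstar k) ^ 2)
          - (2 * β * (1 - β * lam)) * (∑ k, (X ω k - xstar k) * (dh k ω + lam * xstar k))
          + β ^ 2 * (∑ k, (dh k ω + lam * xstar k) ^ 2) := by
    funext ω
    rw [Finset.mul_sum, Finset.mul_sum, Finset.mul_sum, ← Finset.sum_sub_distrib,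
      ← Finset.sum_add_distrib]
    refine Finset.sum_congr rfl fun k _ => ?_
    rw [hiter ω k]
    simp only [hdhdef]
    ring
  -- component integrability of X'
  have hX'_int : ∀ k, Integrable (fun ω => (X' ω k) ^ 2) μ := by
    intro k
    have h1 : (fun ω => (X' ω k) ^ 2)
        = fun ω => (1 - β * lam) ^ 2 * (X ω k) ^ 2
            - (2 * β * (1 - β * lam)) * (X ω k * dh k ω) + β ^ 2 * (dh k ω) ^ 2 := by
      funext ω
      rw [hiter ω k]
      simp only [hdhdef]
      ring
    rw [h1]
    exact (((hX_int k).const_mul _).sub ((hXdh_int k).const_mul _)).add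
      (((hdh2 k).1).const_mul _)
  refine ⟨hX'_int, ?_⟩
  have hIsum : ∫ ω, ∑ k, (X' ω k - xstar k) ^ 2 ∂μ
      = (1 - β * lam) ^ 2 * (∫ ω, ∑ k, (X ω k - xstar k) ^ 2 ∂μ)
        - (2 * β * (1 - β * lam))
            * (∫ ω, ∑ k, (X ω k - xstar k) * (dh k ω + lam * xstar k) ∂μ)
        + β ^ 2 * (∫ ω, ∑ k, (dh k ω + lam * xstar k) ^ 2 ∂μ) := by
    have hi1 : Integrable (fun ω => (1 - β * lam) ^ 2 * (∑ k, (X ω k - xstar k) ^ 2)) μ :=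
      (integrable_finset_sum _ fun k _ => hδ2_int k).const_mul _
    have hi2 : Integrable (fun ω =>
        (2 * β * (1 - β * lam)) * (∑ k, (X ω k - xstar k) * (dh k ω + lam * xstar k))) μ :=
      (integrable_finset_sum _ fun k _ => hδg_int k).const_mul _
    have hi3 : Integrable (fun ω => β ^ 2 * (∑ k, (dh k ω + lam * xstar k) ^ 2)) μ :=
      (integrable_finset_sum _ fun k _ => hg2_int k).const_mul _
    calc ∫ ω, ∑ k, (X' ω k - xstar k) ^ 2 ∂μ
        = ∫ ω, ((1 - β * lam) ^ 2 * (∑ k, (X ω k - xstar k) ^ 2)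
            - (2 * β * (1 - β * lam)) * (∑ k, (X ω k - xstar k) * (dh k ω + lam * xstar k))
            + β ^ 2 * (∑ k, (dh k ω + lam * xstar k) ^ 2)) ∂μ := by rw [← hexp]
      _ = _ := by
          have hi12 : Integrable (fun ω =>
              (1 - β * lam) ^ 2 * (∑ k, (X ω k - xstar k) ^ 2)
              - (2 * β * (1 - β * lam))
                  * (∑ k, (X ω k - xstar k) * (dh k ω + lam * xstar k))) μ := hi1.sub hi2
          rw [integral_add hi12 hi3, integral_sub hi1 hi2,
            integral_const_mul, integral_const_mul, integral_const_mul]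
  rw [hIsum]
  have hc1 : 0 ≤ 2 * β * (1 - β * lam) := by nlinarith
  have hc2 : 0 ≤ (2 * β * (1 - β * lam))
      * (∫ ω, ∑ k, (X ω k - xstar k) * (dh k ω + lam * xstar k) ∂μ) :=
    mul_nonneg hc1 hcross
  have hc3 : β ^ 2 * (∫ ω, ∑ k, (dh k ω + lam * xstar k) ^ 2 ∂μ)
      ≤ β ^ 2 * ((n : ℝ) + lam ^ 2 * (∑ k, (xstar k) ^ 2) + 2 * lam * ∑ k, |xstar k|) :=
    mul_le_mul_of_nonneg_left hquad (sq_nonneg β)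
  linarith

end step


/-- O(1/t^p) rate for conceptual BCOSW (Theorem 5.7). -/
theorem bcosw_one_over_t_pow_p_rate
    {Ω : Type*} {mΩ : MeasurableSpace Ω} {μ : Measure Ω} [IsProbabilityMeasure μ]
    (F : ℕ → MeasurableSpace Ω) (hF_le : ∀ t, F t ≤ mΩ) (hF_mono : Monotone F)
    {n : ℕ} (hn : 1 ≤ n) (lam : ℝ) (hlam : 0 < lam)
    (xstar : Fin n → ℝ) (α p : ℝ) (hp : p ∈ Set.Ioo (1 / 2 : ℝ) 1)
    (hα_pos : 0 < α * lam) (hα_lt : α * lam < 1)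
    (αseq : ℕ → ℝ) (hαseq : ∀ t, αseq t = α / ((t : ℝ) + 1) ^ p)
    (d : ℕ → Ω → Fin n → ℝ)
    (hd_meas : ∀ t k, Measurable[F (t + 1)] fun ω => d t ω k)
    (hd_sq_int : ∀ t k, Integrable (fun ω => (d t ω k) ^ 2) μ)
    (hd2_pos : ∀ t k, ∀ᵐ ω ∂μ, 0 < (μ[fun ω' => (d t ω' k) ^ 2|F t]) ω)
    (x : ℕ → Ω → Fin n → ℝ)
    (hx0_meas : ∀ k, Measurable[F 0] fun ω => x 0 ω k)
    (hx0_sq_int : ∀ k, Integrable (fun ω => (x 0 ω k) ^ 2) μ)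
    (hiter : ∀ t ω k, x (t + 1) ω k
      = (1 - αseq t * lam) * x t ω k
        - αseq t * (d t ω k / Real.sqrt ((μ[fun ω' => (d t ω' k) ^ 2|F t]) ω)))
    (haiming : ∀ t, ∀ᵐ ω ∂μ,
      (∑ k, (x t ω k - xstar k) *
          ((μ[fun ω' => d t ω' k|F t]) ω
              / Real.sqrt ((μ[fun ω' => (d t ω' k) ^ 2|F t]) ω)
            + lam * x t ω k))
        ≥ lam * ∑ k, (x t ω k - xstar k) ^ 2)
    (Bstar : ℝ)
    (hBstar : Bstar = (n : ℝ) + lam ^ 2 * (∑ k, (xstar k) ^ 2)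
        + 2 * lam * ∑ k, |xstar k|)
    (Kp : ℝ) (hKp : Kp = ∑' t : ℕ, 1 / ((t : ℝ) + 2) ^ (2 * p)) :
    Filter.limsup
        (fun t : ℕ => ((t : ℝ) + 1) ^ p * ∫ ω, ∑ k, (x t ω k - xstar k) ^ 2 ∂μ)
        atTop
      ≤ α * (lam ^ 2 * (∫ ω, ∑ k, (x 0 ω k - xstar k) ^ 2 ∂μ) + (1 + Kp) * Bstar)
          / (2 * lam) := by
  
  obtain ⟨hp2, hp1⟩ := hp
  have hp0 : 0 < p := lt_trans (by norm_num) hp2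
  have hα0 : 0 < α := by
    rcases mul_pos_iff.mp hα_pos with ⟨h1, _⟩ | ⟨_, h2⟩
    · exact h1
    · linarith
  -- stepsize facts
  have htp1 : ∀ t : ℕ, (1:ℝ) ≤ ((t : ℝ) + 1) ^ p := by
    intro t
    have h := Real.rpow_le_rpow (by norm_num : (0:ℝ) ≤ 1)
      (by linarith [Nat.cast_nonneg (α := ℝ) t] : (1:ℝ) ≤ (t : ℝ) + 1) hp0.le
    rwa [Real.one_rpow] at h
  have hβ0 : ∀ t : ℕ, 0 < αseq t := by
    intro t; rw [hαseq]
    have := htp1 t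
    positivity
  have hβlam : ∀ t : ℕ, αseq t * lam < 1 := by
    intro t; rw [hαseq]
    have hle : α / ((t : ℝ) + 1) ^ p ≤ α := div_le_self hα0.le (htp1 t)
    calc α / ((t : ℝ) + 1) ^ p * lam ≤ α * lam :=
        mul_le_mul_of_nonneg_right hle hlam.le
      _ < 1 := hα_lt
  -- measurability of the iterates
  have hx_meas : ∀ t, ∀ k, Measurable[F t] fun ω => x t ω k := by
    intro t
    induction t with
    | zero => exact hx0_meas
    | succ t ih =>
      intro k
      have h1 : Measurable[F (t + 1)] fun ω => x t ω k :=
        (ih k).mono (hF_mono (Nat.le_succ t)) le_rfl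
      have h2 : Measurable[F (t + 1)] fun ω => d t ω k := hd_meas t k
      have h3 : Measurable[F (t + 1)] (μ[fun ω' => (d t ω' k) ^ 2|F t]) :=
        stronglyMeasurable_condExp.measurable.mono (hF_mono (Nat.le_succ t)) le_rfl
      have heq : (fun ω => x (t + 1) ω k) = fun ω =>
          (1 - αseq t * lam) * x t ω k
            - αseq t * (d t ω k / Real.sqrt ((μ[fun ω' => (d t ω' k) ^ 2|F t]) ω)) :=
        funext fun ω => hiter t ω k
      rw [heq]
      exact (measurable_const.mul h1).sub (measurable_const.mul (h2.div h3.sqrt))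
  -- per-step conclusion of bcosw_step
  have hstep : ∀ t, (∀ k, Integrable (fun ω => (x t ω k) ^ 2) μ) →
      (∀ k, Integrable (fun ω => (x (t + 1) ω k) ^ 2) μ) ∧
        ∫ ω, ∑ k, (x (t + 1) ω k - xstar k) ^ 2 ∂μ
          ≤ (1 - αseq t * lam) ^ 2 * ∫ ω, ∑ k, (x t ω k - xstar k) ^ 2 ∂μ
            + (αseq t) ^ 2 * ((n : ℝ) + lam ^ 2 * (∑ k, (xstar k) ^ 2)
              + 2 * lam * ∑ k, |xstar k|) := by
    intro t hint
    have h := bcosw_step (hF_le t) lam (αseq t) hlam (hβ0 t) (hβlam t) xstar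
      (x t) (d t) (x (t + 1)) (hx_meas t) hint
      (fun k => (hd_meas t k).mono (hF_le (t + 1)) le_rfl)
      (hd_sq_int t) (hd2_pos t) (fun ω k => hiter t ω k) (haiming t)
    have hcomm : αseq t * lam = lam * αseq t := mul_comm _ _
    constructor
    · exact h.1
    · have := h.2
      calc ∫ ω, ∑ k, (x (t + 1) ω k - xstar k) ^ 2 ∂μ
          ≤ (1 - αseq t * lam) ^ 2 * ∫ ω, ∑ k, (x t ω k - xstar k) ^ 2 ∂μ
            + (αseq t) ^ 2 * ((n : ℝ) + lam ^ 2 * (∑ k, (xstar k) ^ 2)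
              + 2 * lam * ∑ k, |xstar k|) := this
        _ = _ := rfl
  have hx_int : ∀ t, ∀ k, Integrable (fun ω => (x t ω k) ^ 2) μ := by
    intro t
    induction t with
    | zero => exact hx0_sq_int
    | succ t ih => exact (hstep t ih).1
  have hrec : ∀ t : ℕ,
      ∫ ω, ∑ k, (x (t + 1) ω k - xstar k) ^ 2 ∂μ
        ≤ (1 - α / ((t : ℝ) + 1) ^ p * lam) ^ 2 * ∫ ω, ∑ k, (x t ω k - xstar k) ^ 2 ∂μ
          + (α / ((t : ℝ) + 1) ^ p) ^ 2 * Bstar := by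
    intro t
    have h := (hstep t (hx_int t)).2
    rw [← hαseq t, hBstar]
    exact h
  have ha_nonneg : ∀ t : ℕ, 0 ≤ ∫ ω, ∑ k, (x t ω k - xstar k) ^ 2 ∂μ := by
    intro t
    exact integral_nonneg fun ω => Finset.sum_nonneg fun k _ => sq_nonneg _
  have hB0 : 0 ≤ Bstar := by
    rw [hBstar]
    have h1 : (0:ℝ) ≤ ∑ k, (xstar k) ^ 2 := Finset.sum_nonneg fun k _ => sq_nonneg _
    have h2 : (0:ℝ) ≤ ∑ k, |xstar k| := Finset.sum_nonneg fun k _ => abs_nonneg _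
    positivity
  have hlimsup := bcosw_rate_aux lam α p Bstar hlam hα0 hα_lt hp0 hp1 hB0
    (fun t => ∫ ω, ∑ k, (x t ω k - xstar k) ^ 2 ∂μ) ha_nonneg hrec
  refine le_trans hlimsup ?_
  -- compare the constants
  have hKp0 : 0 ≤ Kp := by
    rw [hKp]
    exact tsum_nonneg fun t => by positivity
  have he0 : 0 ≤ ∫ ω, ∑ k, (x 0 ω k - xstar k) ^ 2 ∂μ := ha_nonneg 0
  rw [div_le_div_iff₀ (by linarith) (by linarith)]
  have hkey : Bstar ≤ lam ^ 2 * (∫ ω, ∑ k, (x 0 ω k - xstar k) ^ 2 ∂μ)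
      + (1 + Kp) * Bstar := by
    nlinarith [mul_nonneg hKp0 hB0, mul_nonneg (sq_nonneg lam) he0]
  nlinarith [mul_le_mul_of_nonneg_left hkey hα0.le, mul_pos (by norm_num : (0:ℝ) < 2) hlam]
end

section
/- Chung's fourth lemma (Lemma 5.8): Let (X_t)_{t≥1} be a sequence of nonnegative real numbers such that X_{t+1} ≤ (1 − a_t/t^p) X_t + b/t^q for all t ≥ 1, where 0 < p < 1, p < q, b > 0, and (a_t) is a real sequence with a_t ≥ a > 0 for all t. Then limsup_{t→∞} t^{q−p} X_t ≤ b/a. -/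
open Filter

private lemma chung4_bern_neg {x r : ℝ} (hx : 0 ≤ x) (hr : 0 ≤ r) :
    1 - r * x ≤ (1 + x) ^ (-r) := by
  have h1x : (0:ℝ) < 1 + x := by linarith
  have hpos : (0:ℝ) < (1 + x) ^ r := Real.rpow_pos_of_pos h1x r
  have h1 : (1 + x) ^ r ≤ Real.exp (r * x) := by
    rw [Real.rpow_def_of_pos h1x]
    refine Real.exp_le_exp.2 ?_
    have hlog := Real.log_le_sub_one_of_pos h1x
    have : Real.log (1 + x) ≤ x := by linarith
    calc Real.log (1 + x) * r ≤ x * r :=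
          mul_le_mul_of_nonneg_right this hr
      _ = r * x := mul_comm _ _
  have h2 : 1 - r * x ≤ Real.exp (-(r * x)) := by
    have := Real.add_one_le_exp (-(r * x)); linarith
  calc 1 - r * x ≤ Real.exp (-(r * x)) := h2
    _ = (Real.exp (r * x))⁻¹ := Real.exp_neg _
    _ ≤ ((1 + x) ^ r)⁻¹ := inv_anti₀ hpos h1
    _ = (1 + x) ^ (-r) := (Real.rpow_neg h1x.le r).symm

private lemma chung4_pow_bound {x : ℝ} (hx0 : 0 ≤ x) (hx1 : x ≤ 1) :
    ∀ n : ℕ, (1 + x) ^ n ≤ 1 + ((2:ℝ) ^ n - 1) * x := by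
  intro n
  induction n with
  | zero => simp
  | succ n ih =>
    have h2 : (1:ℝ) ≤ 2 ^ n := one_le_pow₀ (by norm_num)
    have hxx : 0 ≤ ((2:ℝ)^n - 1) * (x * (1 - x)) :=
      mul_nonneg (by linarith) (mul_nonneg hx0 (by linarith))
    have hpn : (0:ℝ) ≤ (1 + x) ^ n := pow_nonneg (by linarith) n
    calc (1 + x) ^ (n + 1) = (1 + x) ^ n * (1 + x) := pow_succ _ _
      _ ≤ (1 + ((2:ℝ)^n - 1) * x) * (1 + x) :=
          mul_le_mul_of_nonneg_right ih (by linarith)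
      _ ≤ 1 + ((2:ℝ) ^ (n+1) - 1) * x := by ring_nf; nlinarith

set_option maxHeartbeats 1200000 in
/-- Chung's fourth lemma (Lemma 5.8). -/
theorem chung_lemma_four
    (X : ℕ → ℝ) (hX_nonneg : ∀ t, 0 ≤ X t)
    (aseq : ℕ → ℝ) (a b p q : ℝ)
    (hp0 : 0 < p) (hp1 : p < 1) (hpq : p < q) (hb : 0 < b) (ha : 0 < a)
    (haseq : ∀ t, a ≤ aseq t)
    (hrec : ∀ t : ℕ, 1 ≤ t →
      X (t + 1) ≤ (1 - aseq t / (t : ℝ) ^ p) * X t + b / (t : ℝ) ^ q) :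
    Filter.limsup (fun t : ℕ => (t : ℝ) ^ (q - p) * X t) atTop ≤ b / a := by
  set r := q - p with hrdef
  have hr0 : 0 < r := by rw [hrdef]; linarith
  have hba : 0 < b / a := div_pos hb ha
  -- recursion with the constant a
  have hrec' : ∀ t : ℕ, 1 ≤ t →
      X (t + 1) ≤ (1 - a / (t:ℝ)^p) * X t + b / (t:ℝ)^q := by
    intro t ht
    have htpos : (0:ℝ) < t := by exact_mod_cast ht
    have htp : (0:ℝ) < (t:ℝ)^p := Real.rpow_pos_of_pos htpos p
    refine (hrec t ht).trans (add_le_add_left ?_ _)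
    have h1 : a / (t:ℝ)^p ≤ aseq t / (t:ℝ)^p :=
      (div_le_div_iff_of_pos_right htp).2 (haseq t)
    exact mul_le_mul_of_nonneg_right (by linarith) (hX_nonneg t)
  refine le_of_forall_gt_imp_ge_of_dense fun c hc => ?_
  have hc0 : 0 < c := hba.trans hc
  have hbc : b / c < a := (div_lt_iff₀ hc0).2 (by
    have := (div_lt_iff₀ ha).1 hc; nlinarith)
  set δ := a - b / c with hδdef
  have hδ : 0 < δ := by rw [hδdef]; linarith
  set n := ⌈r⌉₊ with hn
  set C := (2:ℝ) ^ n - 1 with hC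
  have hC0 : (0:ℝ) ≤ C := by
    have : (1:ℝ) ≤ 2 ^ n := one_le_pow₀ (by norm_num)
    rw [hC]; linarith
  have hrC : (0:ℝ) < 2 * (r + C) := by positivity
  -- eventual bounds
  have htend : Tendsto (fun t : ℕ => (t:ℝ) ^ (p - 1)) atTop (nhds 0) := by
    have := (tendsto_rpow_neg_atTop (y := 1 - p) (by linarith)).comp
      tendsto_natCast_atTop_atTop (α := ℕ)
    simpa [Function.comp_def, neg_sub] using this
  have htend2 : Tendsto (fun t : ℕ => (t:ℝ) ^ p) atTop atTop :=
    (tendsto_rpow_atTop hp0).comp tendsto_natCast_atTop_atTop (α := ℕ)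
  have hev1 : ∀ᶠ t : ℕ in atTop, (t:ℝ) ^ (p - 1) ≤ δ / (2 * (r + C)) :=
    htend.eventually (eventually_le_nhds (by positivity))
  have hev2 : ∀ᶠ t : ℕ in atTop, a ≤ (t:ℝ) ^ p := htend2.eventually_ge_atTop a
  obtain ⟨T, hT⟩ := (hev1.and (hev2.and (eventually_ge_atTop 1))).exists_forall_of_atTop
  have hT : ∀ t : ℕ, T ≤ t → (t:ℝ)^(p-1) ≤ δ/(2*(r+C)) ∧ a ≤ (t:ℝ)^p ∧ 1 ≤ t :=
    fun t h => ⟨(hT t h).1, (hT t h).2.1, (hT t h).2.2⟩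
  -- per-step facts for t ≥ T
  have hfact : ∀ t : ℕ, T ≤ t →
      (1:ℝ) ≤ (t:ℝ) ∧ (0:ℝ) < (t:ℝ) ∧ (0:ℝ) < (t:ℝ)^p ∧ (0:ℝ) < (t:ℝ)^r ∧
      ((t:ℝ))⁻¹ = (t:ℝ)^(p-1) * (((t:ℝ))^p)⁻¹ ∧
      (t:ℝ)^q = (t:ℝ)^p * (t:ℝ)^r ∧ (t:ℝ)^(-r) = ((t:ℝ)^r)⁻¹ ∧
      a * (((t:ℝ))^p)⁻¹ ≤ 1 := by
    intro t htT
    obtain ⟨hb1, hb2, ht1⟩ := hT t htT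
    have htR : (1:ℝ) ≤ (t:ℝ) := by exact_mod_cast ht1
    have htpos : (0:ℝ) < (t:ℝ) := by linarith
    have htp : (0:ℝ) < (t:ℝ)^p := Real.rpow_pos_of_pos htpos p
    refine ⟨htR, htpos, htp, Real.rpow_pos_of_pos htpos r, ?_, ?_, Real.rpow_neg htpos.le r, ?_⟩
    · rw [← Real.rpow_neg htpos.le p, ← Real.rpow_add htpos,
        show p - 1 + -p = -1 by ring, Real.rpow_neg_one]
    · rw [show q = p + r by rw [hrdef]; ring, Real.rpow_add htpos]
    · rw [← div_eq_mul_inv]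
      exact (div_le_one htp).2 hb2
  -- the small-exponent bounds
  have hmain : ∀ t : ℕ, T ≤ t → r * ((t:ℝ))⁻¹ ≤ δ * (((t:ℝ))^p)⁻¹ := by
    intro t htT
    obtain ⟨htR, htpos, htp, htr, hinv1, hqpr, hvr, hcoef⟩ := hfact t htT
    obtain ⟨hb1, hb2, ht1⟩ := hT t htT
    have h2 : r * (t:ℝ)^(p-1) ≤ δ := by
      calc r * (t:ℝ)^(p-1) ≤ r * (δ / (2*(r+C))) :=
            mul_le_mul_of_nonneg_left hb1 hr0.le
        _ ≤ δ := by
            rw [mul_div_assoc', div_le_iff₀ hrC]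
            nlinarith [mul_nonneg hδ.le hC0, mul_nonneg hδ.le hr0.le]
    calc r * ((t:ℝ))⁻¹ = (r * (t:ℝ)^(p-1)) * (((t:ℝ))^p)⁻¹ := by rw [hinv1]; ring
      _ ≤ δ * (((t:ℝ))^p)⁻¹ :=
          mul_le_mul_of_nonneg_right h2 (by positivity)
  have hmainC : ∀ t : ℕ, T ≤ t → C * ((t:ℝ))⁻¹ ≤ δ/2 * (((t:ℝ))^p)⁻¹ := by
    intro t htT
    obtain ⟨htR, htpos, htp, htr, hinv1, hqpr, hvr, hcoef⟩ := hfact t htT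
    obtain ⟨hb1, hb2, ht1⟩ := hT t htT
    have h2 : C * (t:ℝ)^(p-1) ≤ δ/2 := by
      calc C * (t:ℝ)^(p-1) ≤ C * (δ / (2*(r+C))) :=
            mul_le_mul_of_nonneg_left hb1 hC0
        _ ≤ δ/2 := by
            rw [mul_div_assoc', div_le_iff₀ hrC]
            nlinarith [mul_nonneg hδ.le hC0, mul_nonneg hδ.le hr0.le]
    calc C * ((t:ℝ))⁻¹ = (C * (t:ℝ)^(p-1)) * (((t:ℝ))^p)⁻¹ := by rw [hinv1]; ring
      _ ≤ δ/2 * (((t:ℝ))^p)⁻¹ :=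
          mul_le_mul_of_nonneg_right h2 (by positivity)
  -- absorbing step
  have habs : ∀ t : ℕ, T ≤ t → X t ≤ c * (t:ℝ)^(-r) → X (t+1) ≤ c * ((t:ℝ)+1)^(-r) := by
    intro t htT hXt
    obtain ⟨htR, htpos, htp, htr, hinv1, hqpr, hvr, hcoef⟩ := hfact t htT
    obtain ⟨hb1, hb2, ht1⟩ := hT t htT
    have hcrv : (0:ℝ) ≤ c * (t:ℝ)^(-r) := mul_nonneg hc0.le (Real.rpow_nonneg htpos.le _)
    calc X (t+1) ≤ (1 - a/(t:ℝ)^p) * X t + b/(t:ℝ)^q := hrec' t ht1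
      _ ≤ (1 - a/(t:ℝ)^p) * (c * (t:ℝ)^(-r)) + b/(t:ℝ)^q := by
          refine add_le_add_left (mul_le_mul_of_nonneg_left hXt ?_) _
          rw [sub_nonneg, div_le_one htp]; exact hb2
      _ = c * (t:ℝ)^(-r) * (1 - δ * (((t:ℝ))^p)⁻¹) := by
          rw [hvr, hqpr, hδdef]
          field_simp
          ring
      _ ≤ c * (t:ℝ)^(-r) * (1 - r * ((t:ℝ))⁻¹) := by
          refine mul_le_mul_of_nonneg_left ?_ hcrv
          linarith [hmain t htT]
      _ ≤ c * (t:ℝ)^(-r) * ((1 + ((t:ℝ))⁻¹) ^ (-r)) := by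
          refine mul_le_mul_of_nonneg_left ?_ hcrv
          simpa using chung4_bern_neg (x := ((t:ℝ))⁻¹) (by positivity) hr0.le
      _ = c * ((t:ℝ)+1)^(-r) := by
          rw [mul_assoc, ← Real.mul_rpow htpos.le (by positivity)]
          congr 2
          field_simp
  -- attracting: some point falls below the barrier
  have hatt : ∃ t0 : ℕ, T ≤ t0 ∧ X t0 ≤ c * (t0:ℝ)^(-r) := by
    by_contra hcon
    push_neg at hcon
    -- strict decrease of Y t = t^r * X t
    have hdec : ∀ t : ℕ, T ≤ t →
        ((t:ℝ)+1)^r * X (t+1) ≤ (t:ℝ)^r * X t - (δ/2) * c * ((t:ℝ))⁻¹ := by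
      intro t htT
      obtain ⟨htR, htpos, htp, htr, hinv1, hqpr, hvr, hcoef⟩ := hfact t htT
      obtain ⟨hb1, hb2, ht1⟩ := hT t htT
      have hu0 : (0:ℝ) < (((t:ℝ))^p)⁻¹ := by positivity
      have hcv : c * (t:ℝ)^(-r) < X t := hcon t htT
      have hX1 : X (t+1) ≤ (1 - δ * (((t:ℝ))^p)⁻¹) * X t := by
        have hid : b/(t:ℝ)^q = (b/c) * (((t:ℝ))^p)⁻¹ * (c * (t:ℝ)^(-r)) := by
          rw [hvr, hqpr]; field_simp
        calc X (t+1) ≤ (1 - a/(t:ℝ)^p) * X t + b/(t:ℝ)^q := hrec' t ht1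
          _ ≤ (1 - a/(t:ℝ)^p) * X t + (b/c) * (((t:ℝ))^p)⁻¹ * X t := by
              refine add_le_add_right ?_ _
              rw [hid]
              exact mul_le_mul_of_nonneg_left hcv.le (by positivity)
          _ = (1 - δ * (((t:ℝ))^p)⁻¹) * X t := by
              rw [hδdef, div_eq_mul_inv a]; ring
      have h1δ : (0:ℝ) ≤ 1 - δ * (((t:ℝ))^p)⁻¹ := by
        have hδa : δ * (((t:ℝ))^p)⁻¹ ≤ a * (((t:ℝ))^p)⁻¹ :=
          mul_le_mul_of_nonneg_right (by rw [hδdef]; nlinarith [div_pos hb hc0]) hu0.le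
        linarith
      have ht1R : (0:ℝ) ≤ (t:ℝ)+1 := by linarith
      have hsplit : ((t:ℝ)+1)^r = (t:ℝ)^r * (1 + ((t:ℝ))⁻¹)^r := by
        rw [← Real.mul_rpow htpos.le (by positivity)]
        congr 1
        field_simp
      have h3 : (1 + ((t:ℝ))⁻¹)^r ≤ 1 + C * ((t:ℝ))⁻¹ := by
        have hiv0 : (0:ℝ) ≤ ((t:ℝ))⁻¹ := by positivity
        have hiv1 : ((t:ℝ))⁻¹ ≤ 1 := by
          rw [inv_le_one_iff₀]; right; exact htR
        calc (1 + ((t:ℝ))⁻¹)^r ≤ (1 + ((t:ℝ))⁻¹)^(n:ℝ) :=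
              Real.rpow_le_rpow_of_exponent_le (by linarith) (Nat.le_ceil r)
          _ = (1 + ((t:ℝ))⁻¹)^n := Real.rpow_natCast _ n
          _ ≤ 1 + C * ((t:ℝ))⁻¹ := by
              rw [hC]; exact chung4_pow_bound hiv0 hiv1 n
      have h5 : (1 + C * ((t:ℝ))⁻¹) * (1 - δ * (((t:ℝ))^p)⁻¹) ≤ 1 - δ/2 * (((t:ℝ))^p)⁻¹ := by
        have h4 := hmainC t htT
        nlinarith [mul_nonneg (mul_nonneg hδ.le hu0.le) (mul_nonneg hC0 (by positivity : (0:ℝ) ≤ ((t:ℝ))⁻¹))]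
      have hYc : c ≤ (t:ℝ)^r * X t := by
        have := mul_le_mul_of_nonneg_left hcv.le htr.le
        calc c = (t:ℝ)^r * (c * (t:ℝ)^(-r)) := by rw [hvr]; field_simp
          _ ≤ (t:ℝ)^r * X t := this
      have hup : ((t:ℝ))⁻¹ ≤ (((t:ℝ))^p)⁻¹ := by
        have : (t:ℝ)^p ≤ (t:ℝ) := by
          have := Real.rpow_le_rpow_of_exponent_le htR hp1.le
          rwa [Real.rpow_one] at this
        exact inv_anti₀ htp this
      have hXnn := hX_nonneg t
      calc ((t:ℝ)+1)^r * X (t+1) ≤ ((t:ℝ)+1)^r * ((1 - δ * (((t:ℝ))^p)⁻¹) * X t) :=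
            mul_le_mul_of_nonneg_left hX1 (Real.rpow_nonneg ht1R r)
        _ = ((t:ℝ)^r * X t) * ((1 + ((t:ℝ))⁻¹)^r * (1 - δ * (((t:ℝ))^p)⁻¹)) := by
            rw [hsplit]; ring
        _ ≤ ((t:ℝ)^r * X t) * ((1 + C * ((t:ℝ))⁻¹) * (1 - δ * (((t:ℝ))^p)⁻¹)) := by
            refine mul_le_mul_of_nonneg_left (mul_le_mul_of_nonneg_right h3 h1δ) ?_
            exact mul_nonneg htr.le hXnn
        _ ≤ ((t:ℝ)^r * X t) * (1 - δ/2 * (((t:ℝ))^p)⁻¹) :=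
            mul_le_mul_of_nonneg_left h5 (mul_nonneg htr.le hXnn)
        _ = (t:ℝ)^r * X t - (δ/2 * (((t:ℝ))^p)⁻¹) * ((t:ℝ)^r * X t) := by ring
        _ ≤ (t:ℝ)^r * X t - (δ/2 * (((t:ℝ))^p)⁻¹) * c := by
            have := mul_le_mul_of_nonneg_left hYc (by positivity : (0:ℝ) ≤ δ/2 * (((t:ℝ))^p)⁻¹)
            linarith
        _ ≤ (t:ℝ)^r * X t - (δ/2) * c * ((t:ℝ))⁻¹ := by
            have := mul_le_mul_of_nonneg_right hup (by positivity : (0:ℝ) ≤ δ/2 * c)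
            nlinarith [hδ, hc0]
    -- telescoping
    have hsum : ∀ m : ℕ, ((T+m : ℕ):ℝ)^r * X (T+m) ≤
        (T:ℝ)^r * X T - (δ/2) * c * ∑ i ∈ Finset.range m, (((T+i:ℕ):ℝ))⁻¹ := by
      intro m
      induction m with
      | zero => simp
      | succ m ih =>
        have hstep := hdec (T+m) (Nat.le_add_right T m)
        have hcast : (((T+m:ℕ)):ℝ) + 1 = (((T+(m+1):ℕ)):ℝ) := by push_cast; ring
        rw [Finset.sum_range_succ]
        have : ((T+(m+1) : ℕ):ℝ)^r * X (T+(m+1)) ≤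
            ((T+m : ℕ):ℝ)^r * X (T+m) - (δ/2) * c * (((T+m:ℕ):ℝ))⁻¹ := by
          rw [← hcast]
          exact hstep
        linarith
    -- the harmonic sum diverges
    have hTpos : (0:ℝ) < (T:ℝ) + 1 := by positivity
    have hharm : ∀ m : ℕ, (1/((T:ℝ)+1)) * ∑ i ∈ Finset.range m, (1/((i:ℝ)+1)) ≤
        ∑ i ∈ Finset.range m, (((T+i:ℕ):ℝ))⁻¹ := by
      intro m
      rw [Finset.mul_sum]
      refine Finset.sum_le_sum fun i _ => ?_
      have hi0 : (0:ℝ) ≤ (i:ℝ) := Nat.cast_nonneg i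
      have hT0 : (0:ℝ) ≤ (T:ℝ) := Nat.cast_nonneg T
      have hle : ((T+i:ℕ):ℝ) ≤ ((T:ℝ)+1) * ((i:ℝ)+1) := by push_cast; nlinarith
      have hpos : (0:ℝ) < ((T+i:ℕ):ℝ) ∨ True := Or.inr trivial
      rw [div_eq_mul_inv, div_eq_mul_inv, one_mul, one_mul, ← mul_inv]
      by_cases hTi : (0:ℝ) < ((T+i:ℕ):ℝ)
      · exact inv_anti₀ hTi hle
      · exfalso
        obtain ⟨htR, -⟩ := hfact (T+i) (Nat.le_add_right T i)
        exact hTi (by linarith)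
    obtain ⟨m, hm⟩ := (Real.tendsto_sum_range_one_div_nat_succ_atTop.eventually_gt_atTop
      (((T:ℝ)^r * X T) * ((T:ℝ)+1) * (2/(δ*c)) + ((T:ℝ)+1) * (2/(δ*c)))).exists
    have hK : (0:ℝ) < (δ/2) * c * (1/((T:ℝ)+1)) := by positivity
    have hfin : ((T+m : ℕ):ℝ)^r * X (T+m) < 0 := by
      have h1 := hsum m
      have h2 := hharm m
      have h3 : (δ/2) * c * ((1/((T:ℝ)+1)) * ∑ i ∈ Finset.range m, (1/((i:ℝ)+1))) ≤
          (δ/2) * c * ∑ i ∈ Finset.range m, (((T+i:ℕ):ℝ))⁻¹ :=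
        mul_le_mul_of_nonneg_left h2 (by positivity)
      have h4 : (T:ℝ)^r * X T <
          (δ/2) * c * ((1/((T:ℝ)+1)) * ∑ i ∈ Finset.range m, (1/((i:ℝ)+1))) := by
        have hY0 : (T:ℝ)^r * X T ≤ ((T:ℝ)^r * X T) * ((T:ℝ)+1) * (2/(δ*c)) *
            ((δ/2) * c * (1/((T:ℝ)+1))) := by
          have : ((T:ℝ)+1) * (2/(δ*c)) * ((δ/2) * c * (1/((T:ℝ)+1))) = 1 := by
            field_simp
          refine le_of_eq ?_
          calc (T:ℝ)^r * X T = ((T:ℝ)^r * X T) *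
                (((T:ℝ)+1) * (2/(δ*c)) * ((δ/2) * c * (1/((T:ℝ)+1)))) := by rw [this]; ring
            _ = ((T:ℝ)^r * X T) * ((T:ℝ)+1) * (2/(δ*c)) *
                ((δ/2) * c * (1/((T:ℝ)+1))) := by ring
        have hstep2 : (((T:ℝ)^r * X T) * ((T:ℝ)+1) * (2/(δ*c))) * ((δ/2) * c * (1/((T:ℝ)+1))) <
            (∑ i ∈ Finset.range m, (1/((i:ℝ)+1))) * ((δ/2) * c * (1/((T:ℝ)+1))) := by
          refine mul_lt_mul_of_pos_right ?_ hK
          have hpos2 : (0:ℝ) < ((T:ℝ)+1) * (2/(δ*c)) := by positivity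
          nlinarith [hm]
        calc (T:ℝ)^r * X T ≤ _ := hY0
          _ < _ := hstep2
          _ = (δ/2) * c * ((1/((T:ℝ)+1)) * ∑ i ∈ Finset.range m, (1/((i:ℝ)+1))) := by ring
      linarith
    have : (0:ℝ) ≤ ((T+m : ℕ):ℝ)^r * X (T+m) :=
      mul_nonneg (Real.rpow_nonneg (Nat.cast_nonneg _) r) (hX_nonneg _)
    linarith
  -- conclude: eventually below the barrier, hence limsup ≤ c
  obtain ⟨t0, ht0T, hX0⟩ := hatt
  have hind : ∀ t : ℕ, t0 ≤ t → X t ≤ c * (t:ℝ)^(-r) := by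
    intro t ht
    induction t, ht using Nat.le_induction with
    | base => exact hX0
    | succ t ht ih =>
      have := habs t (ht0T.trans ht) ih
      have hcast : ((t:ℝ)+1) = (((t+1:ℕ)):ℝ) := by push_cast; ring
      rwa [hcast] at this
  refine Filter.limsup_le_of_le (Filter.IsCoboundedUnder.of_frequently_ge (a := 0)
    (Filter.Eventually.frequently (Filter.Eventually.of_forall fun t =>
      mul_nonneg (Real.rpow_nonneg (Nat.cast_nonneg t) r) (hX_nonneg t)))) ?_
  filter_upwards [eventually_ge_atTop (max t0 T)] with t ht
  obtain ⟨htR, htpos, htp, htr, hinv1, hqpr, hvr, hcoef⟩ := hfact t (le_trans (le_max_right _ _) ht)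
  have hXt := hind t (le_trans (le_max_left _ _) ht)
  calc (t:ℝ)^r * X t ≤ (t:ℝ)^r * (c * (t:ℝ)^(-r)) :=
        mul_le_mul_of_nonneg_left hXt htr.le
    _ = c := by rw [hvr]; field_simp
end
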